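/- arXiv:0801.3989 — 10 statements merged into one kernel-verified Lean document; each statement's English description precedes it below -/
import Mathlib

section
/- For all real numbers x > 0 and a < 1 with x + a > 0, one has Γ(1−a)·Γ(x+a)/Γ(x) = ∏_{k=1}^{∞} [k(k+x−1)] / [(k−a)(k+x+a−1)], where Γ is the real Gamma function and the infinite product converges. -/
open Filter Finset Real Topology

/-- Lemma II.1: for `x > 0` and `a < 1` (with `x + a > 0`),
`Γ(1-a) Γ(x+a) / Γ(x) = ∏_{k=1}^∞ k(k+x-1) / ((k-a)(k+x+a-1))`,
and the infinite product converges. -/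
theorem stmt0 (x a : ℝ) (hx : 0 < x) (ha : a < 1) (hxa : 0 < x + a) :
    Multipliable (fun k : ℕ =>
      (((k : ℝ) + 1) * (((k : ℝ) + 1) + x - 1)) /
        ((((k : ℝ) + 1) - a) * (((k : ℝ) + 1) + x + a - 1))) ∧
    Real.Gamma (1 - a) * Real.Gamma (x + a) / Real.Gamma x =
      ∏' k : ℕ,
        (((k : ℝ) + 1) * (((k : ℝ) + 1) + x - 1)) /
          ((((k : ℝ) + 1) - a) * (((k : ℝ) + 1) + x + a - 1)) := by
  set f : ℕ → ℝ := fun k : ℕ =>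
      (((k : ℝ) + 1) * (((k : ℝ) + 1) + x - 1)) /
        ((((k : ℝ) + 1) - a) * (((k : ℝ) + 1) + x + a - 1)) with hf
  have h1a : (0:ℝ) < 1 - a := by linarith
  have hk0 : ∀ k : ℕ, (0:ℝ) ≤ (k:ℝ) := fun k => k.cast_nonneg
  have hk1 : ∀ k : ℕ, (0:ℝ) < (k:ℝ) + 1 - a := fun k => by have := hk0 k; linarith
  have hk2 : ∀ k : ℕ, (0:ℝ) < (k:ℝ) + x + a := fun k => by have := hk0 k; linarith
  have hk3 : ∀ k : ℕ, (0:ℝ) < (k:ℝ) + 1 := fun k => by have := hk0 k; linarith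
  have hk4 : ∀ k : ℕ, (0:ℝ) < (k:ℝ) + x := fun k => by have := hk0 k; linarith
  have hfeq : ∀ k : ℕ, f k = (((k:ℝ)+1) * ((k:ℝ)+x)) / (((k:ℝ)+1-a) * ((k:ℝ)+x+a)) := by
    intro k; simp only [hf]; congr 1 <;> ring
  have hD : ∀ k : ℕ, (0:ℝ) < ((k:ℝ)+1-a) * ((k:ℝ)+x+a) := fun k => mul_pos (hk1 k) (hk2 k)
  have hfpos : ∀ k : ℕ, 0 < f k := fun k => by
    rw [hfeq k]; exact div_pos (mul_pos (hk3 k) (hk4 k)) (hD k)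
  set c : ℝ := a * (x + a - 1) with hc
  have hfsub : ∀ k : ℕ, f k - 1 = c / (((k:ℝ)+1-a) * ((k:ℝ)+x+a)) := by
    intro k
    rw [hfeq k, div_sub_one (hD k).ne', hc]
    congr 1; ring
  -- lower bound for the denominators
  set δ : ℝ := min 1 (1 - a) * min 1 (x + a) with hδ
  have hδpos : 0 < δ := mul_pos (lt_min one_pos h1a) (lt_min one_pos hxa)
  have hDlb : ∀ k : ℕ, δ * ((k:ℝ)+1)^2 ≤ ((k:ℝ)+1-a) * ((k:ℝ)+x+a) := by
    intro k
    have h1 : min 1 (1-a) * ((k:ℝ)+1) ≤ (k:ℝ)+1-a := by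
      rcases le_total (1:ℝ) (1-a) with h | h
      · rw [min_eq_left h]; have := hk0 k; nlinarith
      · rw [min_eq_right h]; have := hk0 k; nlinarith
    have h2 : min 1 (x+a) * ((k:ℝ)+1) ≤ (k:ℝ)+x+a := by
      rcases le_total (1:ℝ) (x+a) with h | h
      · rw [min_eq_left h]; have := hk0 k; nlinarith
      · rw [min_eq_right h]; have := hk0 k; nlinarith
    calc δ * ((k:ℝ)+1)^2
        = (min 1 (1-a) * ((k:ℝ)+1)) * (min 1 (x+a) * ((k:ℝ)+1)) := by rw [hδ]; ring
      _ ≤ ((k:ℝ)+1-a) * ((k:ℝ)+x+a) :=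
          mul_le_mul h1 h2 (mul_nonneg (le_min zero_le_one hxa.le) (hk3 k).le) (hk1 k).le
  -- uniform lower bound for f
  set m : ℝ := min (f 0) 1 with hm
  have hmpos : 0 < m := lt_min (hfpos 0) one_pos
  have hm1 : m ≤ 1 := min_le_right _ _
  have hflb : ∀ k : ℕ, m ≤ f k := by
    intro k
    rcases le_or_gt 0 c with hcs | hcs
    · have h1 : (0:ℝ) ≤ c / (((k:ℝ)+1-a) * ((k:ℝ)+x+a)) := div_nonneg hcs (hD k).le
      have h2 := hfsub k
      linarith
    · have hmono : ((0:ℕ):ℝ)+1-a ≤ (k:ℝ)+1-a := by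
        push_cast; have := hk0 k; linarith
      have hmono2 : ((0:ℕ):ℝ)+x+a ≤ (k:ℝ)+x+a := by
        push_cast; have := hk0 k; linarith
      have hDD : (((0:ℕ):ℝ)+1-a) * (((0:ℕ):ℝ)+x+a) ≤ ((k:ℝ)+1-a) * ((k:ℝ)+x+a) :=
        mul_le_mul hmono hmono2 (hk2 0).le (hk1 k).le
      have hinv : 1 / (((k:ℝ)+1-a) * ((k:ℝ)+x+a))
          ≤ 1 / ((((0:ℕ):ℝ)+1-a) * (((0:ℕ):ℝ)+x+a)) :=
        one_div_le_one_div_of_le (hD 0) hDD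
      have hmul := mul_le_mul_of_nonpos_left hinv hcs.le
      rw [mul_one_div, mul_one_div] at hmul
      have h0 := hfsub 0
      have hk := hfsub k
      have hfk : f 0 ≤ f k := by linarith
      linarith [min_le_left (f 0) (1:ℝ)]
  -- bound on the logs
  have hlogb : ∀ k : ℕ, |Real.log (f k)| ≤ (|c| / (m * δ)) * (1 / ((k:ℝ)+1)^2) := by
    intro k
    have hb1 : |Real.log (f k)| ≤ |f k - 1| / m := by
      rcases le_or_gt 1 (f k) with h | h
      · rw [abs_of_nonneg (Real.log_nonneg h), abs_of_nonneg (by linarith : (0:ℝ) ≤ f k - 1)]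
        have hl := Real.log_le_sub_one_of_pos (hfpos k)
        rw [le_div_iff₀ hmpos]
        nlinarith
      · rw [abs_of_nonpos (Real.log_nonpos (hfpos k).le h.le),
          abs_of_nonpos (by linarith : f k - 1 ≤ 0)]
        have h1 := Real.log_le_sub_one_of_pos (inv_pos.mpr (hfpos k))
        rw [Real.log_inv] at h1
        have hfk := hfpos k
        have hmk := hflb k
        have hik : (f k)⁻¹ * f k = 1 := inv_mul_cancel₀ hfk.ne'
        have hinge : (0:ℝ) ≤ (f k)⁻¹ - 1 := by nlinarith
        rw [le_div_iff₀ hmpos]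
        have step1 : (-Real.log (f k)) * m ≤ ((f k)⁻¹ - 1) * m :=
          mul_le_mul_of_nonneg_right h1 hmpos.le
        have step2 : ((f k)⁻¹ - 1) * m ≤ ((f k)⁻¹ - 1) * f k :=
          mul_le_mul_of_nonneg_left hmk hinge
        have step3 : ((f k)⁻¹ - 1) * f k = 1 - f k := by
          rw [sub_mul, hik, one_mul]
        linarith
    have hb2 : |f k - 1| = |c| / (((k:ℝ)+1-a) * ((k:ℝ)+x+a)) := by
      rw [hfsub k, abs_div, abs_of_pos (hD k)]
    have hb3 : |c| / (((k:ℝ)+1-a) * ((k:ℝ)+x+a)) ≤ |c| / (δ * ((k:ℝ)+1)^2) :=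
      div_le_div_of_nonneg_left (abs_nonneg c) (by positivity) (hDlb k)
    calc |Real.log (f k)| ≤ |f k - 1| / m := hb1
      _ = (|c| / (((k:ℝ)+1-a) * ((k:ℝ)+x+a))) / m := by rw [hb2]
      _ ≤ (|c| / (δ * ((k:ℝ)+1)^2)) / m := (div_le_div_iff_of_pos_right hmpos).mpr hb3
      _ = (|c| / (m * δ)) * (1 / ((k:ℝ)+1)^2) := by
          rw [div_div, div_mul_div_comm, mul_one]
          congr 1
          ring
  have hsum2 : Summable (fun k : ℕ => 1 / ((k:ℝ)+1)^2) := by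
    have h := (summable_nat_add_iff 1).mpr (Real.summable_one_div_nat_pow.mpr one_lt_two)
    exact h.congr fun k => by push_cast; ring
  have hlogsum : Summable fun k : ℕ => Real.log (f k) := by
    have habs : Summable (fun k : ℕ => |Real.log (f k)|) :=
      Summable.of_nonneg_of_le (fun k => abs_nonneg _) hlogb (hsum2.mul_left _)
    exact summable_abs_iff.mp habs
  have hmult : Multipliable f := by
    refine ⟨Real.exp (∑' k, Real.log (f k)), ?_⟩
    have h := hlogsum.hasSum.rexp
    have heq : Real.exp ∘ (fun k : ℕ => Real.log (f k)) = f :=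
      funext fun k => Real.exp_log (hfpos k)
    rwa [heq] at h
  -- the limit of partial products
  have hGpos : 0 < Real.Gamma x := Real.Gamma_pos_of_pos hx
  have hQ : Tendsto (fun n : ℕ =>
      Real.GammaSeq (1-a) n * Real.GammaSeq (x+a) n / Real.GammaSeq x n) atTop
      (𝓝 (Real.Gamma (1-a) * Real.Gamma (x+a) / Real.Gamma x)) :=
    ((Real.GammaSeq_tendsto_Gamma (1-a)).mul (Real.GammaSeq_tendsto_Gamma (x+a))).div
      (Real.GammaSeq_tendsto_Gamma x) hGpos.ne'
  have hR : Tendsto (fun n : ℕ => ((1-a+(n:ℝ)) * (x+a+(n:ℝ))) / ((n:ℝ) * (x+(n:ℝ))))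
      atTop (𝓝 1) := by
    have h0 : ∀ b : ℝ, Tendsto (fun n : ℕ => b/(n:ℝ)) atTop (𝓝 0) :=
      tendsto_const_div_atTop_nhds_zero_nat
    have h1 : Tendsto (fun n : ℕ => (1-a)/(n:ℝ) + 1) atTop (𝓝 (0+1)) :=
      (h0 (1-a)).add tendsto_const_nhds
    have h2 : Tendsto (fun n : ℕ => (x+a)/(n:ℝ) + 1) atTop (𝓝 (0+1)) :=
      (h0 (x+a)).add tendsto_const_nhds
    have h3 : Tendsto (fun n : ℕ => x/(n:ℝ) + 1) atTop (𝓝 (0+1)) :=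
      (h0 x).add tendsto_const_nhds
    have h := (h1.mul h2).div h3 (by norm_num)
    norm_num at h
    refine Tendsto.congr' ?_ h
    filter_upwards [eventually_ge_atTop 1] with n hn
    have hn0 : (0:ℝ) < (n:ℝ) := by exact_mod_cast Nat.lt_of_lt_of_le Nat.zero_lt_one hn
    simp only [Pi.div_apply]
    field_simp
  have key : ∀ n : ℕ, 1 ≤ n → (∏ k ∈ Finset.range n, f k)
      = (Real.GammaSeq (1-a) n * Real.GammaSeq (x+a) n / Real.GammaSeq x n)
        * (((1-a+(n:ℝ)) * (x+a+(n:ℝ))) / ((n:ℝ) * (x+(n:ℝ)))) := by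
    intro n hn
    have hn0 : (0:ℝ) < (n:ℝ) := by exact_mod_cast Nat.lt_of_lt_of_le Nat.zero_lt_one hn
    have hApos : (0:ℝ) < ∏ j ∈ Finset.range n, ((1-a) + (j:ℝ)) :=
      Finset.prod_pos fun j _ => by have := hk0 j; linarith
    have hBpos : (0:ℝ) < ∏ j ∈ Finset.range n, ((x+a) + (j:ℝ)) :=
      Finset.prod_pos fun j _ => by have := hk0 j; linarith
    have hCpos : (0:ℝ) < ∏ j ∈ Finset.range n, (x + (j:ℝ)) :=
      Finset.prod_pos fun j _ => by have := hk0 j; linarith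
    have hfact : (0:ℝ) < (n.factorial : ℝ) := by exact_mod_cast n.factorial_pos
    have hfacteq : ∏ k ∈ Finset.range n, ((k:ℝ)+1) = (n.factorial : ℝ) := by
      rw [← Finset.prod_range_add_one_eq_factorial n, Nat.cast_prod]
      exact Finset.prod_congr rfl fun k _ => by push_cast; ring
    have hP : (∏ k ∈ Finset.range n, f k)
        = ((n.factorial : ℝ) * ∏ j ∈ Finset.range n, (x + (j:ℝ)))
          / ((∏ j ∈ Finset.range n, ((1-a) + (j:ℝ)))
              * ∏ j ∈ Finset.range n, ((x+a) + (j:ℝ))) := by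
      calc ∏ k ∈ Finset.range n, f k
          = ∏ k ∈ Finset.range n,
              ((((k:ℝ)+1) * ((k:ℝ)+x)) / (((k:ℝ)+1-a) * ((k:ℝ)+x+a))) :=
            Finset.prod_congr rfl fun k _ => hfeq k
        _ = (∏ k ∈ Finset.range n, (((k:ℝ)+1) * ((k:ℝ)+x)))
            / ∏ k ∈ Finset.range n, (((k:ℝ)+1-a) * ((k:ℝ)+x+a)) :=
            Finset.prod_div_distrib _ _
        _ = ((∏ k ∈ Finset.range n, ((k:ℝ)+1)) * ∏ k ∈ Finset.range n, ((k:ℝ)+x))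
            / ((∏ k ∈ Finset.range n, ((k:ℝ)+1-a)) * ∏ k ∈ Finset.range n, ((k:ℝ)+x+a)) := by
            rw [Finset.prod_mul_distrib, Finset.prod_mul_distrib]
        _ = ((n.factorial : ℝ) * ∏ j ∈ Finset.range n, (x + (j:ℝ)))
            / ((∏ j ∈ Finset.range n, ((1-a) + (j:ℝ)))
                * ∏ j ∈ Finset.range n, ((x+a) + (j:ℝ))) := by
            rw [hfacteq]
            congr 1
            · congr 1
              exact Finset.prod_congr rfl fun k _ => by ring
            · congr 1
              · exact Finset.prod_congr rfl fun k _ => by ring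
              · exact Finset.prod_congr rfl fun k _ => by ring
    have hGS : ∀ s : ℝ, Real.GammaSeq s n
        = (n:ℝ)^s * (n.factorial : ℝ) / ((∏ j ∈ Finset.range n, (s + (j:ℝ))) * (s + (n:ℝ))) := by
      intro s
      rw [Real.GammaSeq, Finset.prod_range_succ]
    rw [hP, hGS, hGS, hGS]
    have hrw : (n:ℝ) ^ x = (n:ℝ)^(1-a) * (n:ℝ)^(x+a) / (n:ℝ) := by
      rw [← Real.rpow_add hn0, show (1-a)+(x+a) = x + 1 by ring, Real.rpow_add hn0,
        Real.rpow_one]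
      field_simp
    rw [hrw]
    have hu : (0:ℝ) < (n:ℝ)^(1-a) := Real.rpow_pos_of_pos hn0 _
    have hv : (0:ℝ) < (n:ℝ)^(x+a) := Real.rpow_pos_of_pos hn0 _
    have h1an : (0:ℝ) < 1 - a + (n:ℝ) := by linarith
    have hxan : (0:ℝ) < x + a + (n:ℝ) := by linarith
    have hxn : (0:ℝ) < x + (n:ℝ) := by linarith
    field_simp
  have hPtend : Tendsto (fun n : ℕ => ∏ k ∈ Finset.range n, f k) atTop
      (𝓝 (Real.Gamma (1-a) * Real.Gamma (x+a) / Real.Gamma x)) := by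
    have h := hQ.mul hR
    rw [mul_one] at h
    refine Tendsto.congr' ?_ h
    filter_upwards [eventually_ge_atTop 1] with n hn using (key n hn).symm
  have htp := hmult.hasProd.tendsto_prod_nat
  exact ⟨hmult, tendsto_nhds_unique hPtend htp⟩
end

section
/- For all real x > 0 and all a with 0 ≤ a < 1, the infinite product P(x,a) = ∏_{k=1}^{∞} [k(k+x−1)] / [(k−a)(k+x+a−1)] converges (the family of factors is multipliable), P(x,a) ≥ 0, and log P(x,a) ≤ a(x+a−1)·∑_{k=1}^{∞} 1/[(k−a)(k+x+a−1)], where the series on the right converges. -/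
/-- Remark II.1(i): for `x > 0` and `0 ≤ a < 1`, the product
`P(x,a) = ∏_{k=1}^∞ k(k+x-1)/((k-a)(k+x+a-1))` converges, is nonnegative, and
`log P(x,a) ≤ a(x+a-1) ∑_{k=1}^∞ 1/((k-a)(k+x+a-1))`, the series being convergent. -/
theorem stmt1 (x a : ℝ) (hx : 0 < x) (ha0 : 0 ≤ a) (ha1 : a < 1) :
    Multipliable (fun k : ℕ =>
      (((k : ℝ) + 1) * (((k : ℝ) + 1) + x - 1)) /
        ((((k : ℝ) + 1) - a) * (((k : ℝ) + 1) + x + a - 1))) ∧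
    0 ≤ ∏' k : ℕ,
        (((k : ℝ) + 1) * (((k : ℝ) + 1) + x - 1)) /
          ((((k : ℝ) + 1) - a) * (((k : ℝ) + 1) + x + a - 1)) ∧
    Summable (fun k : ℕ =>
      1 / ((((k : ℝ) + 1) - a) * (((k : ℝ) + 1) + x + a - 1))) ∧
    Real.log (∏' k : ℕ,
        (((k : ℝ) + 1) * (((k : ℝ) + 1) + x - 1)) /
          ((((k : ℝ) + 1) - a) * (((k : ℝ) + 1) + x + a - 1))) ≤
      a * (x + a - 1) *
        ∑' k : ℕ, 1 / ((((k : ℝ) + 1) - a) * (((k : ℝ) + 1) + x + a - 1)) := by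
  set N : ℕ → ℝ := fun k => (((k : ℝ) + 1) * (((k : ℝ) + 1) + x - 1)) with hNdef
  set D : ℕ → ℝ := fun k => ((((k : ℝ) + 1) - a) * (((k : ℝ) + 1) + x + a - 1)) with hDdef
  set f : ℕ → ℝ := fun k => N k / D k with hfdef
  set c : ℝ := a * (x + a - 1) with hcdef
  set m : ℝ := min 1 x with hmdef
  have hm0 : 0 < m := lt_min one_pos hx
  have hm1 : m ≤ 1 := min_le_left _ _
  have hmx : m ≤ x := min_le_right _ _
  have hn1 : ∀ k : ℕ, (1 : ℝ) ≤ (k : ℝ) + 1 := fun k => by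
    have := Nat.cast_nonneg (α := ℝ) k; linarith
  have hD : ∀ k, 0 < D k := fun k => by
    have := hn1 k
    exact mul_pos (by linarith) (by linarith)
  have hN : ∀ k, 0 < N k := fun k => by
    have := hn1 k
    exact mul_pos (by linarith) (by linarith)
  have hfpos : ∀ k, 0 < f k := fun k => div_pos (hN k) (hD k)
  -- lower bounds on N and D by quadratics
  have hDlb : ∀ k : ℕ, (1 - a) * m * ((k : ℝ) + 1) ^ 2 ≤ D k := fun k => by
    have hn := hn1 k
    have h1 : (1 - a) * ((k : ℝ) + 1) ≤ ((k : ℝ) + 1) - a := by nlinarith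
    have h2 : m * ((k : ℝ) + 1) ≤ ((k : ℝ) + 1) + x + a - 1 := by nlinarith
    have h3 := mul_le_mul h1 h2 (by nlinarith) (by linarith)
    show (1 - a) * m * ((k : ℝ) + 1) ^ 2 ≤ ((k : ℝ) + 1 - a) * ((k : ℝ) + 1 + x + a - 1)
    nlinarith
  have hNlb : ∀ k : ℕ, m * ((k : ℝ) + 1) ^ 2 ≤ N k := fun k => by
    have hn := hn1 k
    have h2 : m * ((k : ℝ) + 1) ≤ ((k : ℝ) + 1) + x - 1 := by nlinarith
    show m * ((k : ℝ) + 1) ^ 2 ≤ ((k : ℝ) + 1) * ((k : ℝ) + 1 + x - 1)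
    nlinarith
  -- summability of 1/(k+1)^2
  have hsq : Summable fun k : ℕ => 1 / ((k : ℝ) + 1) ^ 2 := by
    have h := Real.summable_one_div_nat_pow.mpr (by norm_num : 1 < 2)
    have h2 := (summable_nat_add_iff 1).mpr h
    refine h2.congr fun k => ?_
    push_cast
    ring
  have hSD : Summable fun k : ℕ => 1 / D k := by
    refine Summable.of_nonneg_of_le (fun k => one_div_nonneg.mpr (hD k).le)
      (fun k => ?_) (hsq.mul_left (1 / ((1 - a) * m)))
    have hpos : (0:ℝ) < (1 - a) * m * ((k : ℝ) + 1) ^ 2 :=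
      mul_pos (mul_pos (by linarith) hm0) (by positivity)
    calc 1 / D k ≤ 1 / ((1 - a) * m * ((k : ℝ) + 1) ^ 2) :=
          one_div_le_one_div_of_le hpos (hDlb k)
      _ = 1 / ((1 - a) * m) * (1 / ((k : ℝ) + 1) ^ 2) := by
          rw [one_div_mul_one_div]
  have hSN : Summable fun k : ℕ => 1 / N k := by
    refine Summable.of_nonneg_of_le (fun k => one_div_nonneg.mpr (hN k).le)
      (fun k => ?_) (hsq.mul_left (1 / m))
    have hpos : (0:ℝ) < m * ((k : ℝ) + 1) ^ 2 := by positivity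
    calc 1 / N k ≤ 1 / (m * ((k : ℝ) + 1) ^ 2) :=
          one_div_le_one_div_of_le hpos (hNlb k)
      _ = 1 / m * (1 / ((k : ℝ) + 1) ^ 2) := by rw [one_div_mul_one_div]
  -- algebraic identities
  have hdiff : ∀ k, f k - 1 = c * (1 / D k) := fun k => by
    have := (hD k).ne'
    field_simp [hfdef, hNdef, hDdef, hcdef]
    rw [sub_mul, one_mul]
    show N k / D k * D k - D k = c
    rw [div_mul_cancel₀ _ this]
    simp only [hNdef, hDdef, hcdef]
    ring
  have hinvdiff : ∀ k, 1 / f k - 1 = -c * (1 / N k) := fun k => by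
    have h1 := (hD k).ne'
    have h2 := (hN k).ne'
    rw [hfdef]
    rw [one_div_div]
    field_simp [hNdef, hDdef, hcdef]
    ring
  -- bounds on log f k
  have hlog_ub : ∀ k, Real.log (f k) ≤ c * (1 / D k) := fun k => by
    have := Real.log_le_sub_one_of_pos (hfpos k)
    rw [hdiff k] at this
    exact this
  have hlog_lb : ∀ k, c * (1 / N k) ≤ Real.log (f k) := fun k => by
    have h := Real.log_le_sub_one_of_pos (one_div_pos.mpr (hfpos k))
    rw [hinvdiff k, one_div, Real.log_inv] at h
    linarith
  -- summability of log f
  have hlogsum : Summable fun k => Real.log (f k) := by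
    apply Summable.of_abs
    refine Summable.of_nonneg_of_le (fun k => abs_nonneg _) (fun k => ?_)
      ((hSD.mul_left |c|).add (hSN.mul_left |c|))
    have hD0 : 0 ≤ 1 / D k := one_div_nonneg.mpr (hD k).le
    have hN0 : 0 ≤ 1 / N k := one_div_nonneg.mpr (hN k).le
    rw [abs_le]
    constructor
    · have h1 : (-|c|) * (1 / N k) ≤ c * (1 / N k) :=
        mul_le_mul_of_nonneg_right (neg_abs_le c) hN0
      have h2 : 0 ≤ |c| * (1 / D k) := mul_nonneg (abs_nonneg c) hD0
      have := hlog_lb k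
      linarith
    · have h1 : c * (1 / D k) ≤ |c| * (1 / D k) :=
        mul_le_mul_of_nonneg_right (le_abs_self c) hD0
      have h2 : 0 ≤ |c| * (1 / N k) := mul_nonneg (abs_nonneg c) hN0
      have := hlog_ub k
      linarith
  -- multipliability via exp/log
  have hMult : Multipliable f :=
    Real.multipliable_of_summable_log hfpos hlogsum
  have hexp : Real.exp (∑' k, Real.log (f k)) = ∏' k, f k := by
    exact Real.rexp_tsum_eq_tprod hfpos hlogsum
  refine ⟨hMult, ?_, hSD, ?_⟩
  · rw [← hexp]; exact (Real.exp_pos _).le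
  · rw [← hexp, Real.log_exp]
    calc ∑' k, Real.log (f k) ≤ ∑' k, c * (1 / D k) :=
          Summable.tsum_le_tsum hlog_ub hlogsum (hSD.mul_left c)
      _ = c * ∑' k, 1 / D k := tsum_mul_left
end

section
/- Let n ≥ 1 be an integer and let 1 < p < ∞ with conjugate exponent q satisfying 1/p + 1/q = 1. Then Γ(n/p) = [Γ(1/p) / Γ(1/q)^{n−1}] · ∏_{m=1}^{n−1} P((n−m)/p, 1/p), where P(x,a) = ∏_{k=1}^{∞} [k(k+x−1)] / [(k−a)(k+x+a−1)] and Γ is the real Gamma function. -/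
/-- `P(x,a) = ∏_{k=1}^∞ k(k+x-1)/((k-a)(k+x+a-1))`. -/
noncomputable def P (x a : ℝ) : ℝ :=
  ∏' k : ℕ,
    (((k : ℝ) + 1) * (((k : ℝ) + 1) + x - 1)) /
      ((((k : ℝ) + 1) - a) * (((k : ℝ) + 1) + x + a - 1))

open Filter Finset Topology

private lemma summable_log_aux (x a : ℝ) (hx : 0 < x) (ha0 : 0 < a) (ha1 : a < 1) :
    Summable (fun k : ℕ =>
      Real.log (((1 : ℝ) + k) * (x + k) / (((1 - a) + k) * ((x + a) + k)))) := by
  set f : ℕ → ℝ := fun k => ((1 : ℝ) + k) * (x + k) / (((1 - a) + k) * ((x + a) + k)) with hf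
  set c : ℝ := |x - (1 - a) * (x + a)| with hc
  have hc0 : 0 ≤ c := abs_nonneg _
  rw [← summable_nat_add_iff 1]
  have hbound : ∀ k : ℕ, |Real.log (f (k + 1))| ≤ 2 * c / ((k:ℝ) + 1) ^ 2 := by
    intro k
    have hk0 : (0:ℝ) ≤ k := k.cast_nonneg
    have hk1 : (0:ℝ) < (k:ℝ) + 1 := by positivity
    have hDpos : (0:ℝ) < ((1 - a) + ((k:ℝ)+1)) * ((x + a) + ((k:ℝ)+1)) := by nlinarith
    have hNpos : (0:ℝ) < ((1:ℝ) + ((k:ℝ)+1)) * (x + ((k:ℝ)+1)) := by nlinarith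
    have hfk : f (k+1) = ((1:ℝ) + ((k:ℝ)+1)) * (x + ((k:ℝ)+1)) /
        (((1 - a) + ((k:ℝ)+1)) * ((x + a) + ((k:ℝ)+1))) := by
      simp only [hf]; push_cast; ring_nf
    have hfpos : 0 < f (k+1) := by rw [hfk]; exact div_pos hNpos hDpos
    have hsq : (0:ℝ) < ((k:ℝ)+1)^2 := by positivity
    have hD2 : ((k:ℝ)+1)^2 ≤ ((1 - a) + ((k:ℝ)+1)) * ((x + a) + ((k:ℝ)+1)) := by nlinarith
    have hN2 : ((k:ℝ)+1)^2 ≤ ((1:ℝ) + ((k:ℝ)+1)) * (x + ((k:ℝ)+1)) := by nlinarith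
    have hb1 : f (k+1) - 1 ≤ c / ((k:ℝ)+1)^2 := by
      have e1 : f (k+1) - 1 = (x - (1 - a) * (x + a)) /
          (((1 - a) + ((k:ℝ)+1)) * ((x + a) + ((k:ℝ)+1))) := by
        rw [hfk, div_sub_one hDpos.ne']; ring_nf
      rw [e1]
      calc (x - (1 - a) * (x + a)) / (((1 - a) + ((k:ℝ)+1)) * ((x + a) + ((k:ℝ)+1)))
          ≤ c / (((1 - a) + ((k:ℝ)+1)) * ((x + a) + ((k:ℝ)+1))) := by
            apply div_le_div_of_nonneg_right ?_ hDpos.le |>.trans_eq rfl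
            exact le_abs_self _
        _ ≤ c / ((k:ℝ)+1)^2 := div_le_div_of_nonneg_left hc0 hsq hD2
    have hb2 : 1 / f (k+1) - 1 ≤ c / ((k:ℝ)+1)^2 := by
      have e2 : 1 / f (k+1) - 1 = (-(x - (1 - a) * (x + a))) /
          (((1:ℝ) + ((k:ℝ)+1)) * (x + ((k:ℝ)+1))) := by
        rw [hfk, one_div_div, div_sub_one hNpos.ne']; ring_nf
      rw [e2]
      calc (-(x - (1 - a) * (x + a))) / (((1:ℝ) + ((k:ℝ)+1)) * (x + ((k:ℝ)+1)))
          ≤ c / (((1:ℝ) + ((k:ℝ)+1)) * (x + ((k:ℝ)+1))) := by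
            apply div_le_div_of_nonneg_right ?_ hNpos.le |>.trans_eq rfl
            rw [hc]; exact (neg_le_abs _)
        _ ≤ c / ((k:ℝ)+1)^2 := div_le_div_of_nonneg_left hc0 hsq hN2
    rcases le_or_gt 1 (f (k+1)) with h | h
    · rw [abs_of_nonneg (Real.log_nonneg h)]
      calc Real.log (f (k+1)) ≤ f (k+1) - 1 := Real.log_le_sub_one_of_pos hfpos
        _ ≤ c / ((k:ℝ)+1)^2 := hb1
        _ ≤ 2 * c / ((k:ℝ)+1)^2 := by
            apply div_le_div_of_nonneg_right ?_ hsq.le |>.trans_eq rfl; linarith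
    · rw [abs_of_neg (Real.log_neg hfpos h)]
      have : -Real.log (f (k+1)) = Real.log (1 / f (k+1)) := by
        rw [one_div, Real.log_inv]
      rw [this]
      calc Real.log (1 / f (k+1)) ≤ 1 / f (k+1) - 1 :=
            Real.log_le_sub_one_of_pos (by positivity)
        _ ≤ c / ((k:ℝ)+1)^2 := hb2
        _ ≤ 2 * c / ((k:ℝ)+1)^2 := by
            apply div_le_div_of_nonneg_right ?_ hsq.le |>.trans_eq rfl; linarith
  have hsum : Summable (fun k : ℕ => 2 * c / ((k:ℝ) + 1) ^ 2) := by
    have h0 : Summable (fun k : ℕ => 1 / ((k:ℝ)) ^ 2) :=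
      Real.summable_one_div_nat_pow.mpr one_lt_two
    have h1 : Summable (fun k : ℕ => 1 / ((k:ℝ) + 1) ^ 2) := by
      have := (summable_nat_add_iff (f := fun k : ℕ => 1 / ((k:ℝ)) ^ 2) 1).mpr h0
      simpa using this
    exact (h1.mul_left (2 * c)).congr fun k => by rw [mul_one_div]
  exact Summable.of_abs (hsum.of_nonneg_of_le (fun k => abs_nonneg _) hbound)

private lemma P_eq (x a : ℝ) (hx : 0 < x) (ha0 : 0 < a) (ha1 : a < 1) :
    P x a = Real.Gamma (1 - a) * Real.Gamma (x + a) / Real.Gamma x := by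
  set f : ℕ → ℝ := fun k => ((1 : ℝ) + k) * (x + k) / (((1 - a) + k) * ((x + a) + k)) with hf
  have hfe : ∀ k : ℕ, (((k : ℝ) + 1) * (((k : ℝ) + 1) + x - 1)) /
      ((((k : ℝ) + 1) - a) * (((k : ℝ) + 1) + x + a - 1)) = f k := by
    intro k; simp only [hf]; ring_nf
  have hP : P x a = ∏' k, f k := by
    unfold P; exact tprod_congr hfe
  have hfpos : ∀ (u : Unit) (k : ℕ), 0 < (fun k (_ : Unit) => f k) k u := by
    intro _ k
    have hk0 : (0:ℝ) ≤ k := k.cast_nonneg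
    exact div_pos (by nlinarith) (by nlinarith)
  have hmult : Multipliable f :=
    Real.multipliable_of_summable_log (fun k => hfpos () k)
      (summable_log_aux x a hx ha0 ha1)
  have key : ∀ N : ℕ, 1 ≤ N → (∏ j ∈ Finset.range (N + 1), f j) =
      Real.GammaSeq (1 - a) N * Real.GammaSeq (x + a) N /
        (Real.GammaSeq 1 N * Real.GammaSeq x N) := by
    intro N hN
    have hNpos : (0 : ℝ) < N := by exact_mod_cast hN
    have hPA : (0:ℝ) < ∏ j ∈ Finset.range (N + 1), ((1 : ℝ) + j) :=
      Finset.prod_pos fun j _ => by positivity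
    have hPB : (0:ℝ) < ∏ j ∈ Finset.range (N + 1), (x + j) :=
      Finset.prod_pos fun j _ => by positivity
    have hPC : (0:ℝ) < ∏ j ∈ Finset.range (N + 1), ((1 - a) + j) :=
      Finset.prod_pos fun j _ => by
        have : (0:ℝ) ≤ j := j.cast_nonneg; nlinarith
    have hPD : (0:ℝ) < ∏ j ∈ Finset.range (N + 1), ((x + a) + j) :=
      Finset.prod_pos fun j _ => by have : (0:ℝ) ≤ j := j.cast_nonneg; nlinarith
    have hr : (N:ℝ) ^ (1 - a) * (N:ℝ) ^ (x + a) = (N:ℝ) ^ (1:ℝ) * (N:ℝ) ^ x := by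
      rw [← Real.rpow_add hNpos, ← Real.rpow_add hNpos]; ring_nf
    have lhs : (∏ j ∈ Finset.range (N + 1), f j) =
        ((∏ j ∈ Finset.range (N + 1), ((1 : ℝ) + j)) * ∏ j ∈ Finset.range (N + 1), (x + j)) /
        ((∏ j ∈ Finset.range (N + 1), ((1 - a) + j)) *
          ∏ j ∈ Finset.range (N + 1), ((x + a) + j)) := by
      simp only [hf]
      rw [Finset.prod_div_distrib, Finset.prod_mul_distrib, Finset.prod_mul_distrib]
    rw [lhs]
    simp only [Real.GammaSeq]
    rw [div_mul_div_comm, div_mul_div_comm, div_div_div_eq]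
    rw [div_eq_div_iff (by positivity) (by positivity)]
    have h1 : (N:ℝ) ^ (1:ℝ) ≠ 0 := by positivity
    have h2 : (N:ℝ) ^ x ≠ 0 := by positivity
    have h3 : (N:ℝ) ^ (1-a) ≠ 0 := by positivity
    have h4 : (N:ℝ) ^ (x+a) ≠ 0 := by positivity
    linear_combination (-((∏ j ∈ Finset.range (N + 1), ((1 : ℝ) + j)) *
      (∏ j ∈ Finset.range (N + 1), (x + j)) * (∏ j ∈ Finset.range (N + 1), ((1 - a) + j)) *
      (∏ j ∈ Finset.range (N + 1), ((x + a) + j)) * ((N.factorial : ℝ))^2)) * hr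
  have hΓx : Real.Gamma x ≠ 0 := (Real.Gamma_pos_of_pos hx).ne'
  have hlim : Tendsto (fun N : ℕ => ∏ j ∈ Finset.range (N + 1), f j) atTop
      (𝓝 (Real.Gamma (1 - a) * Real.Gamma (x + a) / Real.Gamma x)) := by
    have h := ((Real.GammaSeq_tendsto_Gamma (1 - a)).mul
        (Real.GammaSeq_tendsto_Gamma (x + a))).div
      ((Real.GammaSeq_tendsto_Gamma 1).mul (Real.GammaSeq_tendsto_Gamma x))
      (by rw [Real.Gamma_one, one_mul]; exact hΓx)
    rw [Real.Gamma_one, one_mul] at h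
    apply h.congr'
    filter_upwards [eventually_ge_atTop 1] with N hN
    exact (key N hN).symm
  have hlim2 : Tendsto (fun N : ℕ => ∏ j ∈ Finset.range N, f j) atTop
      (𝓝 (∏' k, f k)) :=
    hmult.hasProd_iff_tendsto_nat.mp hmult.hasProd
  have hlim3 : Tendsto (fun N : ℕ => ∏ j ∈ Finset.range (N + 1), f j) atTop
      (𝓝 (∏' k, f k)) := hlim2.comp (tendsto_add_atTop_nat 1)
  rw [hP]
  exact tendsto_nhds_unique hlim3 hlim

private lemma tele (g : ℕ → ℝ) (hg : ∀ j, 1 ≤ j → g j ≠ 0) (N : ℕ) :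
    ∏ j ∈ Finset.Icc 1 N, (g (j + 1) / g j) = g (N + 1) / g 1 := by
  induction N with
  | zero => simp [div_self (hg 1 le_rfl)]
  | succ N ih =>
    rw [Finset.prod_Icc_succ_top (Nat.le_add_left 1 N), ih]
    have h1 := hg 1 le_rfl
    have h2 := hg (N + 1) (Nat.le_add_left 1 N)
    field_simp

/-- Equation (3): for an integer `n ≥ 1` and conjugate exponents `p, q`,
`Γ(n/p) = Γ(1/p)/Γ(1/q)^(n-1) · ∏_{m=1}^{n-1} P((n-m)/p, 1/p)`. -/
theorem stmt2 (n : ℕ) (hn : 1 ≤ n) (p q : ℝ) (hp : 1 < p) (hpq : 1 / p + 1 / q = 1) :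
    Real.Gamma ((n : ℝ) / p) =
      Real.Gamma (1 / p) / (Real.Gamma (1 / q)) ^ (n - 1) *
        ∏ m ∈ Finset.Icc 1 (n - 1), P (((n : ℝ) - (m : ℝ)) / p) (1 / p) := by
  have hp0 : (0:ℝ) < p := by linarith
  have ha0 : (0:ℝ) < 1 / p := by positivity
  have ha1 : 1 / p < 1 := by rw [div_lt_one hp0]; linarith
  have h1q : 1 - 1 / p = 1 / q := by linarith
  have hq0 : (0:ℝ) < 1 / q := by linarith
  set g : ℕ → ℝ := fun j => Real.Gamma ((j : ℝ) / p) with hg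
  have hgne : ∀ j, 1 ≤ j → g j ≠ 0 := by
    intro j hj
    have : (0:ℝ) < (j:ℝ) / p := by
      have : (1:ℝ) ≤ j := by exact_mod_cast hj
      positivity
    exact (Real.Gamma_pos_of_pos this).ne'
  have hstep : ∀ m ∈ Finset.Icc 1 (n - 1),
      P (((n : ℝ) - (m : ℝ)) / p) (1 / p) =
        Real.Gamma (1 / q) * (g (n - m + 1) / g (n - m)) := by
    intro m hm
    rw [Finset.mem_Icc] at hm
    have hmn : m < n := by omega
    have hcast : (n : ℝ) - (m : ℝ) = ((n - m : ℕ) : ℝ) := by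
      rw [Nat.cast_sub hmn.le]
    have hx : 0 < ((n - m : ℕ) : ℝ) / p := by
      have : 1 ≤ n - m := by omega
      have : (1:ℝ) ≤ ((n - m : ℕ) : ℝ) := by exact_mod_cast this
      positivity
    rw [hcast, P_eq _ _ hx ha0 ha1, h1q]
    have hxa : ((n - m : ℕ) : ℝ) / p + 1 / p = ((n - m + 1 : ℕ) : ℝ) / p := by
      push_cast; ring
    rw [hxa]
    simp only [hg]
    rw [mul_div_assoc]
  rw [Finset.prod_congr rfl hstep, Finset.prod_mul_distrib, Finset.prod_const,
    Nat.card_Icc]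
  have hre : ∏ m ∈ Finset.Icc 1 (n - 1), (g (n - m + 1) / g (n - m)) =
      ∏ j ∈ Finset.Icc 1 (n - 1), (g (j + 1) / g j) := by
    apply Finset.prod_nbij' (fun m => n - m) (fun j => n - j)
    · intro m hm; rw [Finset.mem_Icc] at *; omega
    · intro j hj; rw [Finset.mem_Icc] at *; omega
    · intro m hm; rw [Finset.mem_Icc] at hm; omega
    · intro j hj; rw [Finset.mem_Icc] at hj; omega
    · intro m hm; rfl
  rw [hre, tele g hgne (n - 1)]
  have hn1 : n - 1 + 1 = n := by omega
  rw [hn1]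
  have hΓp : Real.Gamma (1 / p) ≠ 0 := (Real.Gamma_pos_of_pos ha0).ne'
  have hΓq : Real.Gamma (1 / q) ≠ 0 := (Real.Gamma_pos_of_pos hq0).ne'
  have hg1 : g 1 = Real.Gamma (1 / p) := by simp [hg]
  rw [hg1]
  field_simp [hg]
  ring
end

section
/- Let n ≥ 1 be an integer and let 1 < p < ∞ with conjugate exponent q satisfying 1/p + 1/q = 1. Then M(n,p) = 4^n · h(p)^{2n−2} · ∏_{k=1}^{∞} [(k² + k + 1/(pq))^{n−2} · (k² + nk + n²/(pq))] / (k+1)^{2n−2}, where h(p) = π / (pq·sin(π/p)), and the infinite product converges. -/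
open Real

open Real Filter Topology Finset

namespace Stmt4Aux

/-- Euler product factor for `Γ(1+x)`. -/
noncomputable def g (x : ℝ) (k : ℕ) : ℝ :=
  (1 + 1 / ((k : ℝ) + 1)) ^ x * (((k : ℝ) + 1) / ((k : ℝ) + 1 + x))

lemma g_pos {x : ℝ} (hx : 0 < x) (k : ℕ) : 0 < g x k := by
  have h1 : (0:ℝ) < (k:ℝ) + 1 := by positivity
  have : (0:ℝ) < 1 + 1 / ((k : ℝ) + 1) := by positivity
  unfold g
  positivity

lemma telescope (N : ℕ) : ∏ k ∈ Finset.range N, (1 + 1 / ((k : ℝ) + 1)) = N + 1 := by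
  induction N with
  | zero => simp
  | succ N ih =>
    rw [Finset.prod_range_succ, ih]
    have : ((N:ℝ) + 1) ≠ 0 := by positivity
    field_simp
    push_cast; ring

lemma prod_fact (N : ℕ) : ∏ k ∈ Finset.range N, ((k : ℝ) + 1) = (Nat.factorial N : ℝ) := by
  induction N with
  | zero => simp
  | succ N ih => rw [Finset.prod_range_succ, ih, Nat.factorial_succ]; push_cast; ring

lemma g_prod_closed (x : ℝ) (hx : 0 < x) (N : ℕ) (hN : 1 ≤ N) :
    ∏ k ∈ Finset.range N, g x k
      = Real.GammaSeq (x + 1) N * (((N:ℝ) + 1) / N) ^ x * ((x + 1 + N) / N) := by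
  have hN0 : (0:ℝ) < N := by exact_mod_cast hN
  have hD : (0:ℝ) < ∏ j ∈ Finset.range N, (x + 1 + (j:ℝ)) :=
    Finset.prod_pos fun j _ => by positivity
  have h1 : ∏ k ∈ Finset.range N, g x k
      = ((N:ℝ) + 1) ^ x * (Nat.factorial N : ℝ) / ∏ j ∈ Finset.range N, (x + 1 + (j:ℝ)) := by
    unfold g
    rw [Finset.prod_mul_distrib,
      Real.finset_prod_rpow _ _ (fun k _ => by positivity) x, telescope,
      Finset.prod_div_distrib, prod_fact]
    have he : ∏ k ∈ Finset.range N, ((k:ℝ) + 1 + x) = ∏ j ∈ Finset.range N, (x + 1 + (j:ℝ)) :=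
      Finset.prod_congr rfl fun k _ => by ring
    rw [he, mul_div_assoc]
  rw [h1, Real.GammaSeq, Finset.prod_range_succ]
  have hxN : x + 1 + (N:ℝ) ≠ 0 := by positivity
  have hu : (0:ℝ) < (N:ℝ) ^ x := Real.rpow_pos_of_pos hN0 x
  have hNx1 : (N:ℝ) ^ (x + 1) = (N:ℝ) ^ x * N := by
    rw [Real.rpow_add hN0, Real.rpow_one]
  rw [hNx1, Real.div_rpow (by positivity) (le_of_lt hN0)]
  field_simp

lemma g_tendsto (x : ℝ) (hx : 0 < x) :
    Tendsto (fun N => ∏ k ∈ Finset.range N, g x k) atTop (𝓝 (Real.Gamma (1 + x))) := by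
  have h2 : Tendsto (fun N : ℕ => (((N:ℝ) + 1) / N) ^ x) atTop (𝓝 1) := by
    have hb : Tendsto (fun N : ℕ => ((N:ℝ) + 1) / N) atTop (𝓝 1) := by
      have h0 : Tendsto (fun N : ℕ => 1 + 1 / (N:ℝ)) atTop (𝓝 1) := by
        simpa using (tendsto_one_div_atTop_nhds_zero_nat).const_add (1:ℝ)
      refine Tendsto.congr' ?_ h0
      filter_upwards [eventually_ge_atTop 1] with N hN
      have : ((N:ℝ)) ≠ 0 := by positivity
      field_simp
    have := hb.rpow_const (p := x) (Or.inl one_ne_zero)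
    simpa using this
  have h3 : Tendsto (fun N : ℕ => (x + 1 + (N:ℝ)) / N) atTop (𝓝 1) := by
    have h0 : Tendsto (fun N : ℕ => (x + 1) * (1 / (N:ℝ)) + 1) atTop (𝓝 1) := by
      simpa using ((tendsto_one_div_atTop_nhds_zero_nat).const_mul (x+1)).add_const 1
    refine Tendsto.congr' ?_ h0
    filter_upwards [eventually_ge_atTop 1] with N hN
    have : ((N:ℝ)) ≠ 0 := by positivity
    field_simp
  have := ((Real.GammaSeq_tendsto_Gamma (x + 1)).mul h2).mul h3
  rw [mul_one, mul_one] at this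
  rw [show (1:ℝ) + x = x + 1 by ring]
  refine Tendsto.congr' ?_ this
  filter_upwards [eventually_ge_atTop 1] with N hN
  exact (g_prod_closed x hx N hN).symm


/-- The factor in the infinite product. -/
noncomputable def F (n : ℕ) (a b : ℝ) (k : ℕ) : ℝ :=
  (((k : ℝ) + 1) ^ 2 + ((k : ℝ) + 1) + a * b) ^ ((n : ℤ) - 2) *
    (((k : ℝ) + 1) ^ 2 + (n : ℝ) * ((k : ℝ) + 1) + (n : ℝ) ^ 2 * (a * b)) /
      (((k : ℝ) + 1) + 1) ^ (2 * (n : ℤ) - 2)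

lemma key_alg (n : ℕ) (hn : 1 ≤ n) (a b m : ℝ) (ha : 0 < a) (hb : 0 < b)
    (hm : 0 < m) (hab : a + b = 1) :
    (m ^ 2 + m + a * b) ^ ((n : ℤ) - 2) *
        (m ^ 2 + (n : ℝ) * m + (n : ℝ) ^ 2 * (a * b)) / (m + 1) ^ (2 * (n : ℤ) - 2)
      = (((1 + 1 / m) ^ a * (m / (m + a)) * ((1 + 1 / m) ^ b * (m / (m + b)))) ^ ((n : ℤ) - 2) *
          ((1 + 1 / m) ^ ((n : ℝ) * a) * (m / (m + (n : ℝ) * a)) *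
            ((1 + 1 / m) ^ ((n : ℝ) * b) * (m / (m + (n : ℝ) * b)))))⁻¹ := by
  obtain rfl : b = 1 - a := by linarith
  have hm1 : (0 : ℝ) < m + 1 := by positivity
  have h1m : (0 : ℝ) < 1 + 1 / m := by positivity
  have hn0 : (0 : ℝ) < (n : ℝ) := by exact_mod_cast hn
  have hma : (0 : ℝ) < m + a := by positivity
  have hmb : (0 : ℝ) < m + (1 - a) := by linarith
  have hmna : (0 : ℝ) < m + (n : ℝ) * a := by positivity
  have hmnb : (0 : ℝ) < m + (n : ℝ) * (1 - a) := by nlinarith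
  have e1 : (1 + 1 / m) ^ a * (m / (m + a)) * ((1 + 1 / m) ^ (1 - a) * (m / (m + (1 - a))))
      = m * (m + 1) / ((m + a) * (m + (1 - a))) := by
    rw [show (1 + 1 / m) ^ a * (m / (m + a)) * ((1 + 1 / m) ^ (1 - a) * (m / (m + (1 - a))))
        = (1 + 1 / m) ^ a * (1 + 1 / m) ^ (1 - a) * (m / (m + a) * (m / (m + (1 - a)))) by ring,
      ← Real.rpow_add h1m, show a + (1 - a) = (1 : ℝ) by ring, Real.rpow_one]
    field_simp
  have e2 : (1 + 1 / m) ^ ((n : ℝ) * a) * (m / (m + (n : ℝ) * a)) *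
        ((1 + 1 / m) ^ ((n : ℝ) * (1 - a)) * (m / (m + (n : ℝ) * (1 - a))))
      = (m + 1) ^ n * m ^ 2 / (m ^ n * ((m + (n : ℝ) * a) * (m + (n : ℝ) * (1 - a)))) := by
    rw [show (1 + 1 / m) ^ ((n : ℝ) * a) * (m / (m + (n : ℝ) * a)) *
          ((1 + 1 / m) ^ ((n : ℝ) * (1 - a)) * (m / (m + (n : ℝ) * (1 - a))))
        = (1 + 1 / m) ^ ((n : ℝ) * a) * (1 + 1 / m) ^ ((n : ℝ) * (1 - a)) *
            (m / (m + (n : ℝ) * a) * (m / (m + (n : ℝ) * (1 - a)))) by ring,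
      ← Real.rpow_add h1m, show (n : ℝ) * a + (n : ℝ) * (1 - a) = ((n : ℕ) : ℝ) by ring,
      Real.rpow_natCast,
      show (1 + 1 / m) = (m + 1) / m by field_simp, div_pow]
    field_simp
  have hA : m ^ 2 + m + a * (1 - a) = (m + a) * (m + (1 - a)) := by ring
  have hB : m ^ 2 + (n : ℝ) * m + (n : ℝ) ^ 2 * (a * (1 - a))
      = (m + (n : ℝ) * a) * (m + (n : ℝ) * (1 - a)) := by ring
  rw [e1, e2, hA, hB]
  rcases eq_or_lt_of_le hn with h1 | h2
  · -- n = 1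
    have : n = 1 := h1.symm
    subst this
    norm_num
    field_simp
  · -- n ≥ 2
    obtain ⟨j, rfl⟩ : ∃ j, n = j + 2 := ⟨n - 2, by omega⟩
    have hz1 : ((j + 2 : ℕ) : ℤ) - 2 = (j : ℤ) := by push_cast; ring
    have hz2 : 2 * ((j + 2 : ℕ) : ℤ) - 2 = ((2 * j + 2 : ℕ) : ℤ) := by push_cast; ring
    rw [hz1, hz2, zpow_natCast, zpow_natCast, zpow_natCast]
    simp only [div_pow, mul_pow]
    have h1 : (m + a) ≠ 0 := ne_of_gt hma
    have h2' : (m + (1 - a)) ≠ 0 := ne_of_gt hmb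
    have h3 : (m + ((j:ℝ) + 2) * a) ≠ 0 := by push_cast at hmna ⊢; exact ne_of_gt hmna
    have h4 : (m + ((j:ℝ) + 2) * (1 - a)) ≠ 0 := by push_cast at hmnb ⊢; exact ne_of_gt hmnb
    have h5 : m ≠ 0 := ne_of_gt hm
    have h6 : (m + 1) ≠ 0 := ne_of_gt hm1
    field_simp
    ring

lemma term_eq (n : ℕ) (hn : 1 ≤ n) {a b : ℝ} (ha : 0 < a) (hb : 0 < b) (hab : a + b = 1)
    (k : ℕ) :
    F n a b k = ((g a k * g b k) ^ ((n : ℤ) - 2) * (g ((n : ℝ) * a) k * g ((n : ℝ) * b) k))⁻¹ := by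
  have hm : (0 : ℝ) < (k : ℝ) + 1 := by positivity
  unfold F g
  exact key_alg n hn a b ((k : ℝ) + 1) ha hb hm hab

lemma F_pos (n : ℕ) {a b : ℝ} (ha : 0 < a) (hb : 0 < b) (k : ℕ) : 0 < F n a b k := by
  have h1 : (0:ℝ) < (k:ℝ) + 1 := by positivity
  unfold F
  positivity

lemma F_prod (n : ℕ) (hn : 1 ≤ n) {a b : ℝ} (ha : 0 < a) (hb : 0 < b) (hab : a + b = 1)
    (N : ℕ) :
    ∏ k ∈ Finset.range N, F n a b k
      = (((∏ k ∈ Finset.range N, g a k) * ∏ k ∈ Finset.range N, g b k) ^ ((n : ℤ) - 2) *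
          ((∏ k ∈ Finset.range N, g ((n : ℝ) * a) k) *
            ∏ k ∈ Finset.range N, g ((n : ℝ) * b) k))⁻¹ := by
  rw [← Finset.prod_mul_distrib, ← Finset.prod_mul_distrib, ← Finset.prod_zpow,
    ← Finset.prod_mul_distrib, ← Finset.prod_inv_distrib]
  exact Finset.prod_congr rfl fun k _ => term_eq n hn ha hb hab k

lemma F_tendsto (n : ℕ) (hn : 1 ≤ n) {a b : ℝ} (ha : 0 < a) (hb : 0 < b) (hab : a + b = 1) :
    Filter.Tendsto (fun N => ∏ k ∈ Finset.range N, F n a b k) atTop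
      (𝓝 (((Real.Gamma (1 + a) * Real.Gamma (1 + b)) ^ ((n : ℤ) - 2) *
          (Real.Gamma (1 + (n : ℝ) * a) * Real.Gamma (1 + (n : ℝ) * b)))⁻¹)) := by
  have hn0 : (0:ℝ) < (n : ℝ) := by exact_mod_cast hn
  have hna : 0 < (n : ℝ) * a := by positivity
  have hnb : 0 < (n : ℝ) * b := by positivity
  have G1 : (0:ℝ) < Real.Gamma (1 + a) := Real.Gamma_pos_of_pos (by linarith)
  have G2 : (0:ℝ) < Real.Gamma (1 + b) := Real.Gamma_pos_of_pos (by linarith)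
  have G3 : (0:ℝ) < Real.Gamma (1 + (n : ℝ) * a) := Real.Gamma_pos_of_pos (by linarith)
  have G4 : (0:ℝ) < Real.Gamma (1 + (n : ℝ) * b) := Real.Gamma_pos_of_pos (by linarith)
  have h := ((((g_tendsto a ha).mul (g_tendsto b hb)).zpow₀ ((n : ℤ) - 2)
      (Or.inl (by positivity))).mul
      ((g_tendsto _ hna).mul (g_tendsto _ hnb))).inv₀ (by positivity)
  exact h.congr fun N => (F_prod n hn ha hb hab N).symm

lemma abs_log_one_add_sub_le {t : ℝ} (ht : 0 ≤ t) : |Real.log (1 + t) - t| ≤ t ^ 2 := by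
  have h4 : (0:ℝ) < 1 + t := by linarith
  have h1 : Real.log (1 + t) ≤ t := by
    have := Real.log_le_sub_one_of_pos h4
    linarith
  have h2 : 1 - (1 + t)⁻¹ ≤ Real.log (1 + t) := Real.one_sub_inv_le_log_of_pos h4
  have h3 : t - t ^ 2 ≤ 1 - (1 + t)⁻¹ := by
    have e : 1 - (1 + t)⁻¹ = t / (1 + t) := by field_simp; ring
    rw [e, le_div_iff₀ h4]
    nlinarith
  rw [abs_le]
  constructor <;> nlinarith

lemma log_F_eq (n : ℕ) (hn : 1 ≤ n) {a b : ℝ} (ha : 0 < a) (hb : 0 < b) (hab : a + b = 1)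
    (k : ℕ) :
    Real.log (F n a b k) =
      ((n : ℝ) - 2) * ((Real.log (1 + a / ((k:ℝ)+1)) - a / ((k:ℝ)+1))
          + (Real.log (1 + b / ((k:ℝ)+1)) - b / ((k:ℝ)+1)))
        + (Real.log (1 + (n : ℝ) * a / ((k:ℝ)+1)) - (n : ℝ) * a / ((k:ℝ)+1))
        + (Real.log (1 + (n : ℝ) * b / ((k:ℝ)+1)) - (n : ℝ) * b / ((k:ℝ)+1))
        - (2 * (n : ℝ) - 2) * (Real.log (1 + 1 / ((k:ℝ)+1)) - 1 / ((k:ℝ)+1)) := by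
  obtain rfl : b = 1 - a := by linarith
  have hm : (0:ℝ) < (k:ℝ) + 1 := by positivity
  have hn0 : (0:ℝ) < (n:ℝ) := by exact_mod_cast hn
  have lg : ∀ x : ℝ, 0 < x →
      Real.log (((k:ℝ)+1) + x) = Real.log ((k:ℝ)+1) + Real.log (1 + x / ((k:ℝ)+1)) := by
    intro x hx
    rw [← Real.log_mul (ne_of_gt hm) (by positivity)]
    congr 1
    field_simp
  unfold F
  rw [show (((k:ℝ)+1)^2 + (((k:ℝ))+1) + a*(1-a)) = (((k:ℝ)+1)+a) * (((k:ℝ)+1)+(1-a)) by ring,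
    show (((k:ℝ)+1)^2 + (n:ℝ)*(((k:ℝ))+1) + (n:ℝ)^2*(a*(1-a)))
      = (((k:ℝ)+1)+(n:ℝ)*a) * (((k:ℝ)+1)+(n:ℝ)*(1-a)) by ring]
  have p1 : (0:ℝ) < ((k:ℝ)+1) + a := by positivity
  have p2 : (0:ℝ) < ((k:ℝ)+1) + (1-a) := by linarith
  have p3 : (0:ℝ) < ((k:ℝ)+1) + (n:ℝ)*a := by positivity
  have p4 : (0:ℝ) < ((k:ℝ)+1) + (n:ℝ)*(1-a) := by nlinarith
  have p5 : (0:ℝ) < ((k:ℝ)+1) + 1 := by positivity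
  rw [Real.log_div (by positivity) (zpow_ne_zero _ (ne_of_gt p5)),
    Real.log_mul (zpow_ne_zero _ (by positivity)) (by positivity),
    Real.log_zpow, Real.log_zpow,
    Real.log_mul (ne_of_gt p1) (ne_of_gt p2),
    Real.log_mul (ne_of_gt p3) (ne_of_gt p4),
    lg a ha, lg (1-a) hb, lg ((n:ℝ)*a) (by positivity), lg ((n:ℝ)*(1-a)) (by positivity),
    lg 1 one_pos]
  push_cast
  ring

lemma summable_log_F (n : ℕ) (hn : 1 ≤ n) {a b : ℝ} (ha : 0 < a) (hb : 0 < b)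
    (hab : a + b = 1) : Summable fun k => Real.log (F n a b k) := by
  have ha1 : a ≤ 1 := by linarith
  have hb1 : b ≤ 1 := by linarith
  have hn0 : (0:ℝ) < (n:ℝ) := by exact_mod_cast hn
  rw [← summable_abs_iff]
  have hs : Summable (fun k : ℕ =>
      (2*|(n:ℝ)-2| + 2*(n:ℝ)^2 + 2*(n:ℝ)+2) * (1/((k:ℝ)+1)^2)) := by
    apply Summable.mul_left
    have h0 : Summable (fun j : ℕ => 1/((j:ℝ))^2) :=
      summable_one_div_nat_pow.mpr (by norm_num)
    have h1 := (summable_nat_add_iff 1).mpr h0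
    refine h1.congr fun k => ?_
    push_cast
    ring
  refine Summable.of_nonneg_of_le (fun k => abs_nonneg _) (fun k => ?_) hs
  have hm : (0:ℝ) < (k:ℝ) + 1 := by positivity
  have B : ∀ x : ℝ, 0 ≤ x →
      |Real.log (1 + x/((k:ℝ)+1)) - x/((k:ℝ)+1)| ≤ x^2/((k:ℝ)+1)^2 := by
    intro x hx
    have := abs_log_one_add_sub_le (t := x/((k:ℝ)+1)) (by positivity)
    calc |Real.log (1 + x/((k:ℝ)+1)) - x/((k:ℝ)+1)| ≤ (x/((k:ℝ)+1))^2 := this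
      _ = x^2/((k:ℝ)+1)^2 := div_pow x _ 2
  have bnd : ∀ x c : ℝ, 0 ≤ x → x^2 ≤ c →
      |Real.log (1 + x/((k:ℝ)+1)) - x/((k:ℝ)+1)| ≤ c/((k:ℝ)+1)^2 := by
    intro x c hx hxc
    refine (B x hx).trans ?_
    gcongr
  have b1 := bnd a 1 ha.le (by nlinarith)
  have b2 := bnd b 1 hb.le (by nlinarith)
  have b3 := bnd ((n:ℝ)*a) ((n:ℝ)^2) (by positivity)
    (by nlinarith [mul_nonneg (mul_nonneg hn0.le hn0.le)
          (mul_nonneg (by linarith : (0:ℝ) ≤ 1-a) (by linarith : (0:ℝ) ≤ 1+a))])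
  have b4 := bnd ((n:ℝ)*b) ((n:ℝ)^2) (by positivity)
    (by nlinarith [mul_nonneg (mul_nonneg hn0.le hn0.le)
          (mul_nonneg (by linarith : (0:ℝ) ≤ 1-b) (by linarith : (0:ℝ) ≤ 1+b))])
  have b5 := bnd 1 1 zero_le_one (by nlinarith)
  rw [log_F_eq n hn ha hb hab k]
  set u := Real.log (1 + a/((k:ℝ)+1)) - a/((k:ℝ)+1)
  set v := Real.log (1 + b/((k:ℝ)+1)) - b/((k:ℝ)+1)
  set w := Real.log (1 + (n:ℝ)*a/((k:ℝ)+1)) - (n:ℝ)*a/((k:ℝ)+1)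
  set z := Real.log (1 + (n:ℝ)*b/((k:ℝ)+1)) - (n:ℝ)*b/((k:ℝ)+1)
  set t := Real.log (1 + 1/((k:ℝ)+1)) - 1/((k:ℝ)+1)
  have h1 : |((n:ℝ)-2)*(u+v)| ≤ |(n:ℝ)-2| * (2/((k:ℝ)+1)^2) := by
    rw [abs_mul]
    refine mul_le_mul_of_nonneg_left ?_ (abs_nonneg _)
    refine (abs_add_le u v).trans ?_
    have he : (2:ℝ)/((k:ℝ)+1)^2 = 1/((k:ℝ)+1)^2 + 1/((k:ℝ)+1)^2 := by ring
    rw [he]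
    exact add_le_add b1 b2
  have h2 : |(2*(n:ℝ)-2)*t| ≤ (2*(n:ℝ)+2) * (1/((k:ℝ)+1)^2) := by
    rw [abs_mul]
    refine mul_le_mul ?_ b5 (abs_nonneg _) (by positivity)
    rw [abs_le]
    constructor <;> linarith
  have h3 := abs_sub (((n:ℝ)-2)*(u+v) + w + z) ((2*(n:ℝ)-2)*t)
  have h4 := abs_add_le (((n:ℝ)-2)*(u+v) + w) z
  have h5 := abs_add_le (((n:ℝ)-2)*(u+v)) w
  have expand : (2*|(n:ℝ)-2| + 2*(n:ℝ)^2 + 2*(n:ℝ)+2) * (1/((k:ℝ)+1)^2)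
      = |(n:ℝ)-2| * (2/((k:ℝ)+1)^2) + (n:ℝ)^2/((k:ℝ)+1)^2 + (n:ℝ)^2/((k:ℝ)+1)^2
        + (2*(n:ℝ)+2) * (1/((k:ℝ)+1)^2) := by ring
  rw [expand]
  linarith

lemma hasProd_F (n : ℕ) (hn : 1 ≤ n) {a b : ℝ} (ha : 0 < a) (hb : 0 < b) (hab : a + b = 1) :
    HasProd (F n a b)
      (((Real.Gamma (1 + a) * Real.Gamma (1 + b)) ^ ((n : ℤ) - 2) *
        (Real.Gamma (1 + (n : ℝ) * a) * Real.Gamma (1 + (n : ℝ) * b)))⁻¹) := by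
  have hs := (summable_log_F n hn ha hb hab).hasSum
  have h := hs.rexp
  have hfun : (rexp ∘ fun k => Real.log (F n a b k)) = F n a b :=
    funext fun k => Real.exp_log (F_pos n ha hb k)
  rw [hfun] at h
  have h2 := h.tendsto_prod_nat
  have he := tendsto_nhds_unique h2 (F_tendsto n hn ha hb hab)
  rwa [he] at h

end Stmt4Aux

open Stmt4Aux

/-- Proposition II.1: for an integer `n ≥ 1` and conjugate exponents `p, q`,
`M(n,p) = 4ⁿ h(p)^(2n-2) ∏_{k=1}^∞ (k²+k+1/(pq))^(n-2) (k²+nk+n²/(pq)) / (k+1)^(2n-2)`,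
where `M(n,p) = 4ⁿ (Γ(1+1/p)Γ(1+1/q))ⁿ / (Γ(1+n/p)Γ(1+n/q))` and
`h(p) = π/(pq sin(π/p))`; the infinite product converges. -/
theorem stmt4 (n : ℕ) (hn : 1 ≤ n) (p q : ℝ) (hp : 1 < p) (hpq : 1 / p + 1 / q = 1) :
    Multipliable (fun k : ℕ =>
      (((k : ℝ) + 1) ^ 2 + ((k : ℝ) + 1) + 1 / (p * q)) ^ ((n : ℤ) - 2) *
        (((k : ℝ) + 1) ^ 2 + (n : ℝ) * ((k : ℝ) + 1) + (n : ℝ) ^ 2 / (p * q)) /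
          (((k : ℝ) + 1) + 1) ^ (2 * (n : ℤ) - 2)) ∧
    4 ^ n * (Real.Gamma (1 + 1 / p) * Real.Gamma (1 + 1 / q)) ^ n /
        (Real.Gamma (1 + (n : ℝ) / p) * Real.Gamma (1 + (n : ℝ) / q)) =
      4 ^ n * (π / (p * q * Real.sin (π / p))) ^ (2 * (n : ℤ) - 2) *
        ∏' k : ℕ,
          (((k : ℝ) + 1) ^ 2 + ((k : ℝ) + 1) + 1 / (p * q)) ^ ((n : ℤ) - 2) *
            (((k : ℝ) + 1) ^ 2 + (n : ℝ) * ((k : ℝ) + 1) + (n : ℝ) ^ 2 / (p * q)) /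
              (((k : ℝ) + 1) + 1) ^ (2 * (n : ℤ) - 2) := by

  have hp0 : (0:ℝ) < p := lt_trans one_pos hp
  have ha : (0:ℝ) < 1/p := by positivity
  have ha1 : 1/p < 1 := by rw [div_lt_one hp0]; exact hp
  have hb : (0:ℝ) < 1/q := by linarith
  have hq0 : (0:ℝ) < q := by
    rcases lt_trichotomy q 0 with h | h | h
    · exact absurd (one_div_neg.mpr h) (by linarith)
    · exfalso; rw [h] at hpq; simp at hpq; linarith
    · exact h
  have hab : 1/p + 1/q = 1 := hpq
  have hpq1 : (1:ℝ)/(p*q) = (1/p) * (1/q) := by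
    rw [one_div, mul_inv, one_div, one_div]
  have hpq2 : (n:ℝ)^2/(p*q) = (n:ℝ)^2 * ((1/p) * (1/q)) := by
    rw [← hpq1, div_eq_mul_one_div]
  have hfun : (fun k : ℕ =>
      (((k : ℝ) + 1) ^ 2 + ((k : ℝ) + 1) + 1 / (p * q)) ^ ((n : ℤ) - 2) *
        (((k : ℝ) + 1) ^ 2 + (n : ℝ) * ((k : ℝ) + 1) + (n : ℝ) ^ 2 / (p * q)) /
          (((k : ℝ) + 1) + 1) ^ (2 * (n : ℤ) - 2)) = F n (1/p) (1/q) := by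
    funext k
    unfold Stmt4Aux.F
    rw [hpq1, hpq2]
  have hprod := hasProd_F n hn ha hb hab
  constructor
  · rw [hfun]
    exact hprod.multipliable
  · rw [hfun, hprod.tprod_eq]
    have hGh : Real.Gamma (1 + 1/p) * Real.Gamma (1 + 1/q)
        = π / (p * q * Real.sin (π / p)) := by
      have e1 : Real.Gamma (1 + 1/p) = (1/p) * Real.Gamma (1/p) := by
        rw [add_comm, Real.Gamma_add_one (ne_of_gt ha)]
      have e2 : Real.Gamma (1 + 1/q) = (1/q) * Real.Gamma (1/q) := by
        rw [add_comm, Real.Gamma_add_one (ne_of_gt hb)]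
      have e3 : (1:ℝ)/q = 1 - 1/p := by linarith
      have e4 := Real.Gamma_mul_Gamma_one_sub (1/p)
      rw [e1, e2]
      calc 1/p * Real.Gamma (1/p) * (1/q * Real.Gamma (1/q))
          = 1/p * (1/q) * (Real.Gamma (1/p) * Real.Gamma (1 - 1/p)) := by rw [e3]; ring
        _ = 1/p * (1/q) * (π / Real.sin (π * (1/p))) := by rw [e4]
        _ = π / (p * q * Real.sin (π / p)) := by rw [mul_one_div]; field_simp
    rw [← hGh]
    rw [show (1:ℝ) + (n:ℝ)/p = 1 + (n:ℝ)*(1/p) by rw [mul_one_div],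
      show (1:ℝ) + (n:ℝ)/q = 1 + (n:ℝ)*(1/q) by rw [mul_one_div]]
    have hn0 : (0:ℝ) < (n:ℝ) := by exact_mod_cast hn
    have hh : (0:ℝ) < Real.Gamma (1 + 1/p) * Real.Gamma (1 + 1/q) :=
      mul_pos (Real.Gamma_pos_of_pos (by linarith)) (Real.Gamma_pos_of_pos (by linarith))
    set h : ℝ := Real.Gamma (1 + 1/p) * Real.Gamma (1 + 1/q) with hh_def
    have key : h ^ (2*(n:ℤ)-2) *
        (h ^ ((n:ℤ)-2) * (Real.Gamma (1 + (n:ℝ)*(1/p)) * Real.Gamma (1 + (n:ℝ)*(1/q))))⁻¹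
        = h ^ n / (Real.Gamma (1 + (n:ℝ)*(1/p)) * Real.Gamma (1 + (n:ℝ)*(1/q))) := by
      rw [mul_inv, ← mul_assoc, ← zpow_neg, ← zpow_add₀ (ne_of_gt hh),
        show 2*(n:ℤ)-2 + -((n:ℤ)-2) = (n:ℤ) by ring, zpow_natCast]
      ring
    rw [mul_assoc, key, mul_div_assoc]
end

section
/- Let n ≥ 2 be an integer. The function p ↦ M(n,p) is strictly monotone increasing on the interval (1, 2]: for all real t, p with 1 < t < p ≤ 2 one has M(n,t) < M(n,p). -/
open Real Filter Finset Topology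

/-- `M(n,p) = 4ⁿ (Γ(1+1/p)Γ(1+1/q))ⁿ / (Γ(1+n/p)Γ(1+n/q))` where `q = p/(p-1)`
is the Hölder conjugate exponent of `p`. -/
noncomputable def M (n : ℕ) (p : ℝ) : ℝ :=
  4 ^ n * (Real.Gamma (1 + 1 / p) * Real.Gamma (1 + 1 / (p / (p - 1)))) ^ n /
    (Real.Gamma (1 + (n : ℝ) / p) * Real.Gamma (1 + (n : ℝ) / (p / (p - 1))))

private lemma log_gammaSeq {x : ℝ} (hx : 0 < x) {m : ℕ} (hm : 1 ≤ m) :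
    Real.log (Real.GammaSeq x m)
      = x * Real.log m + Real.log (Nat.factorial m)
        - ∑ j ∈ Finset.range (m + 1), Real.log (x + j) := by
  have hm0 : (0:ℝ) < (m:ℝ) := by exact_mod_cast Nat.lt_of_lt_of_le Nat.zero_lt_one hm
  have hfac : (0:ℝ) < (Nat.factorial m : ℝ) := by exact_mod_cast Nat.factorial_pos m
  have hterm : ∀ j ∈ Finset.range (m+1), x + (j:ℝ) ≠ 0 := by
    intro j _; positivity
  have hprod : (0:ℝ) < ∏ j ∈ Finset.range (m+1), (x + (j:ℝ)) :=
    Finset.prod_pos (fun j _ => by positivity)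
  have hnum : (m:ℝ) ^ x * (Nat.factorial m : ℝ) ≠ 0 := by positivity
  rw [Real.GammaSeq, Real.log_div hnum hprod.ne',
    Real.log_mul (by positivity) hfac.ne', Real.log_rpow hm0,
    Real.log_prod hterm]

private noncomputable def gg (u' u x : ℝ) : ℝ :=
  Real.log ((x + 1/2)^2 - u'^2) - Real.log ((x + 1/2)^2 - u^2)

section ggfacts

variable {u' u : ℝ} (h0 : 0 ≤ u') (h1 : u' < u) (h2 : u < 1/2)
include h0 h1 h2

private lemma ggA {x : ℝ} (hx : 0 ≤ x) : (0:ℝ) < (x + 1/2)^2 - u^2 := by nlinarith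

private lemma ggA' {x : ℝ} (hx : 0 ≤ x) : (0:ℝ) < (x + 1/2)^2 - u'^2 := by nlinarith

private lemma gg_eq {x : ℝ} (hx : 0 ≤ x) :
    gg u' u x = Real.log (1 + (u^2 - u'^2) / ((x + 1/2)^2 - u^2)) := by
  have hA := ggA h0 h1 h2 hx
  have hA' := ggA' h0 h1 h2 hx
  rw [gg, ← Real.log_div hA'.ne' hA.ne']
  congr 1
  rw [show (x + 1/2)^2 - u'^2 = ((x + 1/2)^2 - u^2) + (u^2 - u'^2) by ring,
    add_div, div_self hA.ne']

private lemma gg_nonneg {x : ℝ} (hx : 0 ≤ x) : 0 ≤ gg u' u x := by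
  rw [gg_eq h0 h1 h2 hx]
  apply Real.log_nonneg
  have hA := ggA h0 h1 h2 hx
  have hD : 0 < u^2 - u'^2 := by nlinarith
  have : 0 ≤ (u^2 - u'^2) / ((x + 1/2)^2 - u^2) := by positivity
  linarith

private lemma gg_strict {x y : ℝ} (hx : 0 ≤ x) (hxy : x < y) : gg u' u y < gg u' u x := by
  have hy : 0 ≤ y := le_trans hx hxy.le
  have hAx := ggA h0 h1 h2 hx
  have hAy := ggA h0 h1 h2 hy
  have hD : 0 < u^2 - u'^2 := by nlinarith
  rw [gg_eq h0 h1 h2 hx, gg_eq h0 h1 h2 hy]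
  have hlt : (x + 1/2)^2 - u^2 < (y + 1/2)^2 - u^2 := by nlinarith
  have h3 : (u^2 - u'^2) / ((y + 1/2)^2 - u^2) < (u^2 - u'^2) / ((x + 1/2)^2 - u^2) :=
    div_lt_div_of_pos_left hD hAx hlt
  have h4 : 0 < 1 + (u^2 - u'^2) / ((y + 1/2)^2 - u^2) := by positivity
  exact Real.log_lt_log h4 (by linarith)

private lemma gg_anti {x y : ℝ} (hx : 0 ≤ x) (hxy : x ≤ y) : gg u' u y ≤ gg u' u x := by
  rcases eq_or_lt_of_le hxy with rfl | h
  · exact le_refl _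
  · exact (gg_strict h0 h1 h2 hx h).le

private lemma gg_ub {x : ℝ} (hx : 0 ≤ x) :
    gg u' u x ≤ (u^2 - u'^2) / ((x + 1/2)^2 - u^2) := by
  rw [gg_eq h0 h1 h2 hx]
  have hA := ggA h0 h1 h2 hx
  have hD : 0 < u^2 - u'^2 := by nlinarith
  have hpos : 0 < 1 + (u^2 - u'^2) / ((x + 1/2)^2 - u^2) := by positivity
  have := Real.log_le_sub_one_of_pos hpos
  linarith

end ggfacts

section core

variable {n : ℕ} (hn : 2 ≤ n) {u' u : ℝ} (h0 : 0 ≤ u') (h1 : u' < u) (h2 : u < 1/2)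
include hn h0 h1 h2

private lemma regroup : ∀ N : ℕ, 1 ≤ N →
    (n:ℝ) * (∑ j ∈ Finset.range N, gg u' u ((j:ℝ)+1))
        + (gg u' u (1/(n:ℝ)) - gg u' u 1)
      ≤ ∑ j ∈ Finset.range (n*N), gg u' u (((j:ℝ)+1)/(n:ℝ)) := by
  have hn0 : (0:ℝ) < (n:ℝ) := by
    have : (0:ℕ) < n := by omega
    exact_mod_cast this
  intro N hN
  induction N with
  | zero => omega
  | succ N ih =>
    rcases Nat.eq_zero_or_pos N with rfl | hNpos
    · simp only [Finset.sum_range_one, Nat.cast_zero, zero_add, mul_one]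
      rw [Finset.range_eq_Ico, Finset.sum_eq_sum_Ico_succ_bot (by omega : 0 < n)]
      have h00 : ((0:ℕ):ℝ) + 1 = 1 := by norm_num
      rw [h00]
      have hone : ∀ j ∈ Finset.Ico 1 n, gg u' u 1 ≤ gg u' u (((j:ℝ)+1)/(n:ℝ)) := by
        intro j hj
        obtain ⟨hj1, hjn⟩ := Finset.mem_Ico.1 hj
        apply gg_anti h0 h1 h2 (by positivity)
        rw [div_le_one hn0]
        exact_mod_cast hjn
      have hsum := Finset.card_nsmul_le_sum (Finset.Ico 1 n) _ _ hone
      rw [Nat.card_Ico, nsmul_eq_mul] at hsum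
      have hcast : ((n - 1 : ℕ):ℝ) = (n:ℝ) - 1 := by
        have : 1 ≤ n := by omega
        push_cast [this]
        ring
      rw [hcast] at hsum
      linarith
    · have hS := ih hNpos
      rw [Finset.sum_range_succ, Nat.mul_succ, Finset.sum_range_add]
      have hchunk : ∀ x ∈ Finset.range n,
          gg u' u ((N:ℝ)+1) ≤ gg u' u (((((n*N+x):ℕ):ℝ)+1)/(n:ℝ)) := by
        intro x hx
        have hxn := Finset.mem_range.1 hx
        apply gg_anti h0 h1 h2 (by positivity)
        rw [div_le_iff₀ hn0]
        push_cast
        have : (x:ℝ) + 1 ≤ (n:ℝ) := by exact_mod_cast hxn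
        nlinarith
      have hsum := Finset.card_nsmul_le_sum (Finset.range n) _ _ hchunk
      rw [Finset.card_range, nsmul_eq_mul] at hsum
      linarith

private lemma corebound (m : ℕ) :
    (∑ j ∈ Finset.range (m+1),
        ((n:ℝ) * gg u' u ((j:ℝ)+1) - gg u' u (((j:ℝ)+1)/(n:ℝ))))
      ≤ -(gg u' u (1/(n:ℝ)) - gg u' u 1)
          + (u^2-u'^2) * (n:ℝ)^3 * (1/((m:ℝ)+1)) := by
  have hn0 : (0:ℝ) < (n:ℝ) := by
    have : (0:ℕ) < n := by omega
    exact_mod_cast this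
  have hD : 0 < u^2 - u'^2 := by nlinarith
  have hmn : m+1 ≤ n*(m+1) := Nat.le_mul_of_pos_left (m+1) (by omega)
  have hsplit : ∑ j ∈ Finset.range (n*(m+1)), gg u' u (((j:ℝ)+1)/(n:ℝ))
      = ∑ j ∈ Finset.range (m+1), gg u' u (((j:ℝ)+1)/(n:ℝ))
        + ∑ j ∈ Finset.Ico (m+1) (n*(m+1)), gg u' u (((j:ℝ)+1)/(n:ℝ)) := by
    rw [Finset.range_eq_Ico, Finset.range_eq_Ico]
    exact (Finset.sum_Ico_consecutive (fun j : ℕ => gg u' u (((j:ℝ)+1)/(n:ℝ))) (Nat.zero_le (m+1)) hmn).symm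
  have htail : ∑ j ∈ Finset.Ico (m+1) (n*(m+1)), gg u' u (((j:ℝ)+1)/(n:ℝ))
      ≤ (u^2-u'^2) * (n:ℝ)^3 * (1/((m:ℝ)+1)) := by
    have hb0 : (0:ℝ) ≤ ((m:ℝ)+2)/(n:ℝ) := by positivity
    have hterm : ∀ j ∈ Finset.Ico (m+1) (n*(m+1)),
        gg u' u (((j:ℝ)+1)/(n:ℝ)) ≤ gg u' u (((m:ℝ)+2)/(n:ℝ)) := by
      intro j hj
      obtain ⟨hj1, _⟩ := Finset.mem_Ico.1 hj
      apply gg_anti h0 h1 h2 hb0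
      have hmj : (m:ℝ) + 1 ≤ (j:ℝ) := by exact_mod_cast hj1
      rw [div_le_div_iff₀ hn0 hn0]
      nlinarith
    have hsum := Finset.sum_le_card_nsmul (Finset.Ico (m+1) (n*(m+1))) _ _ hterm
    rw [Nat.card_Ico, nsmul_eq_mul] at hsum
    have hggpos : 0 ≤ gg u' u (((m:ℝ)+2)/(n:ℝ)) := gg_nonneg h0 h1 h2 hb0
    have hcard : ((n*(m+1) - (m+1) : ℕ):ℝ) ≤ (n:ℝ) * ((m:ℝ)+1) := by
      have h' : (n*(m+1) - (m+1) : ℕ) ≤ n*(m+1) := Nat.sub_le _ _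
      have h'' : ((n*(m+1) - (m+1) : ℕ):ℝ) ≤ ((n*(m+1) : ℕ):ℝ) := by exact_mod_cast h'
      push_cast at h''
      linarith
    have step1 : ∑ j ∈ Finset.Ico (m+1) (n*(m+1)), gg u' u (((j:ℝ)+1)/(n:ℝ))
        ≤ (n:ℝ) * ((m:ℝ)+1) * gg u' u (((m:ℝ)+2)/(n:ℝ)) := by
      calc ∑ j ∈ Finset.Ico (m+1) (n*(m+1)), gg u' u (((j:ℝ)+1)/(n:ℝ))
          ≤ ((n*(m+1) - (m+1) : ℕ):ℝ) * gg u' u (((m:ℝ)+2)/(n:ℝ)) := hsum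
        _ ≤ (n:ℝ) * ((m:ℝ)+1) * gg u' u (((m:ℝ)+2)/(n:ℝ)) := by
            apply mul_le_mul_of_nonneg_right hcard hggpos
    have e1 : (((m:ℝ)+2)/(n:ℝ))^2 ≤ (((m:ℝ)+2)/(n:ℝ) + 1/2)^2 - u^2 := by
      nlinarith [hb0, h2, h0, h1.le]
    have e1' : (0:ℝ) < (((m:ℝ)+2)/(n:ℝ))^2 := by positivity
    have e2 : gg u' u (((m:ℝ)+2)/(n:ℝ)) ≤ (u^2-u'^2) / ((((m:ℝ)+2)/(n:ℝ))^2) := by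
      refine le_trans (gg_ub h0 h1 h2 hb0) ?_
      gcongr
    have e3 : (u^2-u'^2) / ((((m:ℝ)+2)/(n:ℝ))^2)
        = (u^2-u'^2) * (n:ℝ)^2 / ((m:ℝ)+2)^2 := by
      rw [div_pow, div_div_eq_mul_div]
    have e5 : ((m:ℝ)+1)/((m:ℝ)+2)^2 ≤ 1/((m:ℝ)+1) := by
      rw [div_le_div_iff₀ (by positivity) (by positivity)]
      nlinarith [Nat.cast_nonneg (α := ℝ) m]
    calc ∑ j ∈ Finset.Ico (m+1) (n*(m+1)), gg u' u (((j:ℝ)+1)/(n:ℝ))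
        ≤ (n:ℝ) * ((m:ℝ)+1) * gg u' u (((m:ℝ)+2)/(n:ℝ)) := step1
      _ ≤ (n:ℝ) * ((m:ℝ)+1) * ((u^2-u'^2) * (n:ℝ)^2 / ((m:ℝ)+2)^2) := by
          rw [← e3]
          apply mul_le_mul_of_nonneg_left e2 (by positivity)
      _ = (u^2-u'^2) * (n:ℝ)^3 * (((m:ℝ)+1)/((m:ℝ)+2)^2) := by ring
      _ ≤ (u^2-u'^2) * (n:ℝ)^3 * (1/((m:ℝ)+1)) := by
          apply mul_le_mul_of_nonneg_left e5 (by positivity)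
  have hreg := regroup hn h0 h1 h2 (m+1) (by omega)
  rw [hsplit] at hreg
  rw [Finset.sum_sub_distrib, ← Finset.mul_sum]
  linarith

end core

private lemma merge_log {c v : ℝ} (hv : 0 ≤ v) (hvc : v < c) :
    Real.log (c + v) + Real.log (c - v) = Real.log (c^2 - v^2) := by
  have h1 : (0:ℝ) < c + v := by linarith
  have h2 : (0:ℝ) < c - v := by linarith
  rw [← Real.log_mul h1.ne' h2.ne']
  congr 1
  ring

set_option maxHeartbeats 2000000 in
private lemma keylem {n : ℕ} (hn : 2 ≤ n) {u' u : ℝ} (h0 : 0 ≤ u') (h1 : u' < u)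
    (h2 : u < 1/2) :
    (n:ℝ) * Real.log (Real.Gamma (3/2 + u)) + (n:ℝ) * Real.log (Real.Gamma (3/2 - u))
      - Real.log (Real.Gamma (1 + (n:ℝ)/2 + (n:ℝ)*u))
      - Real.log (Real.Gamma (1 + (n:ℝ)/2 - (n:ℝ)*u))
    < (n:ℝ) * Real.log (Real.Gamma (3/2 + u')) + (n:ℝ) * Real.log (Real.Gamma (3/2 - u'))
      - Real.log (Real.Gamma (1 + (n:ℝ)/2 + (n:ℝ)*u'))
      - Real.log (Real.Gamma (1 + (n:ℝ)/2 - (n:ℝ)*u')) := by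
  have hn0 : (0:ℝ) < (n:ℝ) := by
    have : (0:ℕ) < n := by omega
    exact_mod_cast this
  have hu0 : 0 < u := lt_of_le_of_lt h0 h1
  have hu'2 : u' < 1/2 := lt_trans h1 h2
  have p1 : (0:ℝ) < 3/2 + u := by linarith
  have p2 : (0:ℝ) < 3/2 - u := by linarith
  have p3 : (0:ℝ) < 1 + (n:ℝ)/2 + (n:ℝ)*u := by nlinarith
  have p4 : (0:ℝ) < 1 + (n:ℝ)/2 - (n:ℝ)*u := by nlinarith
  have p5 : (0:ℝ) < 3/2 + u' := by linarith
  have p6 : (0:ℝ) < 3/2 - u' := by linarith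
  have p7 : (0:ℝ) < 1 + (n:ℝ)/2 + (n:ℝ)*u' := by nlinarith
  have p8 : (0:ℝ) < 1 + (n:ℝ)/2 - (n:ℝ)*u' := by nlinarith
  have tlog : ∀ {x : ℝ}, 0 < x →
      Tendsto (fun m => Real.log (Real.GammaSeq x m)) atTop
        (𝓝 (Real.log (Real.Gamma x))) := fun hx =>
    (Real.GammaSeq_tendsto_Gamma _).log (Real.Gamma_pos_of_pos hx).ne'
  have hC : Tendsto (fun m =>
      ((n:ℝ) * Real.log (Real.GammaSeq (3/2 + u) m)
        + (n:ℝ) * Real.log (Real.GammaSeq (3/2 - u) m)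
        - Real.log (Real.GammaSeq (1 + (n:ℝ)/2 + (n:ℝ)*u) m)
        - Real.log (Real.GammaSeq (1 + (n:ℝ)/2 - (n:ℝ)*u) m))
      - ((n:ℝ) * Real.log (Real.GammaSeq (3/2 + u') m)
        + (n:ℝ) * Real.log (Real.GammaSeq (3/2 - u') m)
        - Real.log (Real.GammaSeq (1 + (n:ℝ)/2 + (n:ℝ)*u') m)
        - Real.log (Real.GammaSeq (1 + (n:ℝ)/2 - (n:ℝ)*u') m))) atTop
      (𝓝 (((n:ℝ) * Real.log (Real.Gamma (3/2 + u))
        + (n:ℝ) * Real.log (Real.Gamma (3/2 - u))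
        - Real.log (Real.Gamma (1 + (n:ℝ)/2 + (n:ℝ)*u))
        - Real.log (Real.Gamma (1 + (n:ℝ)/2 - (n:ℝ)*u)))
      - ((n:ℝ) * Real.log (Real.Gamma (3/2 + u'))
        + (n:ℝ) * Real.log (Real.Gamma (3/2 - u'))
        - Real.log (Real.Gamma (1 + (n:ℝ)/2 + (n:ℝ)*u'))
        - Real.log (Real.Gamma (1 + (n:ℝ)/2 - (n:ℝ)*u'))))) := by
    exact (((((tlog p1).const_mul (n:ℝ)).add ((tlog p2).const_mul (n:ℝ))).sub
        (tlog p3)).sub (tlog p4)).sub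
      (((((tlog p5).const_mul (n:ℝ)).add ((tlog p6).const_mul (n:ℝ))).sub
        (tlog p7)).sub (tlog p8))
  have hCeq : (fun m =>
      ((n:ℝ) * Real.log (Real.GammaSeq (3/2 + u) m)
        + (n:ℝ) * Real.log (Real.GammaSeq (3/2 - u) m)
        - Real.log (Real.GammaSeq (1 + (n:ℝ)/2 + (n:ℝ)*u) m)
        - Real.log (Real.GammaSeq (1 + (n:ℝ)/2 - (n:ℝ)*u) m))
      - ((n:ℝ) * Real.log (Real.GammaSeq (3/2 + u') m)
        + (n:ℝ) * Real.log (Real.GammaSeq (3/2 - u') m)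
        - Real.log (Real.GammaSeq (1 + (n:ℝ)/2 + (n:ℝ)*u') m)
        - Real.log (Real.GammaSeq (1 + (n:ℝ)/2 - (n:ℝ)*u') m)))
      =ᶠ[atTop] (fun m => ∑ j ∈ Finset.range (m+1),
        ((n:ℝ) * gg u' u ((j:ℝ)+1) - gg u' u (((j:ℝ)+1)/(n:ℝ)))) := by
    filter_upwards [eventually_ge_atTop 1] with m hm
    rw [log_gammaSeq p1 hm, log_gammaSeq p2 hm, log_gammaSeq p3 hm, log_gammaSeq p4 hm,
      log_gammaSeq p5 hm, log_gammaSeq p6 hm, log_gammaSeq p7 hm, log_gammaSeq p8 hm]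
    have perj : ∀ j ∈ Finset.range (m+1),
        (n:ℝ) * gg u' u ((j:ℝ)+1) - gg u' u (((j:ℝ)+1)/(n:ℝ))
        = (n:ℝ) * Real.log (3/2 + u' + (j:ℝ)) + (n:ℝ) * Real.log (3/2 - u' + (j:ℝ))
          + Real.log (1 + (n:ℝ)/2 + (n:ℝ)*u + (j:ℝ))
          + Real.log (1 + (n:ℝ)/2 - (n:ℝ)*u + (j:ℝ))
          - (n:ℝ) * Real.log (3/2 + u + (j:ℝ)) - (n:ℝ) * Real.log (3/2 - u + (j:ℝ))
          - Real.log (1 + (n:ℝ)/2 + (n:ℝ)*u' + (j:ℝ))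
          - Real.log (1 + (n:ℝ)/2 - (n:ℝ)*u' + (j:ℝ)) := by
      intro j _
      have hj0 : (0:ℝ) ≤ (j:ℝ) := Nat.cast_nonneg j
      have m1 : Real.log (3/2 + u + (j:ℝ)) + Real.log (3/2 - u + (j:ℝ))
          = Real.log (((j:ℝ)+1+1/2)^2 - u^2) := by
        rw [show (3/2 + u + (j:ℝ)) = ((j:ℝ)+1+1/2) + u by ring,
          show (3/2 - u + (j:ℝ)) = ((j:ℝ)+1+1/2) - u by ring]
        exact merge_log hu0.le (by linarith)
      have m2 : Real.log (3/2 + u' + (j:ℝ)) + Real.log (3/2 - u' + (j:ℝ))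
          = Real.log (((j:ℝ)+1+1/2)^2 - u'^2) := by
        rw [show (3/2 + u' + (j:ℝ)) = ((j:ℝ)+1+1/2) + u' by ring,
          show (3/2 - u' + (j:ℝ)) = ((j:ℝ)+1+1/2) - u' by ring]
        exact merge_log h0 (by linarith)
      have m3 : Real.log (1 + (n:ℝ)/2 + (n:ℝ)*u + (j:ℝ))
            + Real.log (1 + (n:ℝ)/2 - (n:ℝ)*u + (j:ℝ))
          = Real.log ((n:ℝ)^2) + Real.log ((((j:ℝ)+1)/(n:ℝ) + 1/2)^2 - u^2) := by
        rw [show (1 + (n:ℝ)/2 + (n:ℝ)*u + (j:ℝ)) = ((j:ℝ)+1+(n:ℝ)/2) + (n:ℝ)*u by ring,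
          show (1 + (n:ℝ)/2 - (n:ℝ)*u + (j:ℝ)) = ((j:ℝ)+1+(n:ℝ)/2) - (n:ℝ)*u by ring]
        rw [merge_log (mul_nonneg hn0.le hu0.le) (by nlinarith : (n:ℝ)*u < (j:ℝ)+1+(n:ℝ)/2)]
        rw [show ((j:ℝ)+1+(n:ℝ)/2)^2 - ((n:ℝ)*u)^2
            = (n:ℝ)^2 * ((((j:ℝ)+1)/(n:ℝ) + 1/2)^2 - u^2) by field_simp]
        rw [Real.log_mul (by positivity) (ggA h0 h1 h2 (by positivity : (0:ℝ) ≤ ((j:ℝ)+1)/(n:ℝ))).ne']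
      have m4 : Real.log (1 + (n:ℝ)/2 + (n:ℝ)*u' + (j:ℝ))
            + Real.log (1 + (n:ℝ)/2 - (n:ℝ)*u' + (j:ℝ))
          = Real.log ((n:ℝ)^2) + Real.log ((((j:ℝ)+1)/(n:ℝ) + 1/2)^2 - u'^2) := by
        rw [show (1 + (n:ℝ)/2 + (n:ℝ)*u' + (j:ℝ)) = ((j:ℝ)+1+(n:ℝ)/2) + (n:ℝ)*u' by ring,
          show (1 + (n:ℝ)/2 - (n:ℝ)*u' + (j:ℝ)) = ((j:ℝ)+1+(n:ℝ)/2) - (n:ℝ)*u' by ring]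
        rw [merge_log (mul_nonneg hn0.le h0) (by nlinarith : (n:ℝ)*u' < (j:ℝ)+1+(n:ℝ)/2)]
        rw [show ((j:ℝ)+1+(n:ℝ)/2)^2 - ((n:ℝ)*u')^2
            = (n:ℝ)^2 * ((((j:ℝ)+1)/(n:ℝ) + 1/2)^2 - u'^2) by field_simp]
        rw [Real.log_mul (by positivity) (ggA' h0 h1 h2 (by positivity : (0:ℝ) ≤ ((j:ℝ)+1)/(n:ℝ))).ne']
      simp only [gg]
      linear_combination (n:ℝ) * m1 - (n:ℝ) * m2 - m3 + m4
    rw [Finset.sum_congr rfl perj]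
    simp only [Finset.sum_add_distrib, Finset.sum_sub_distrib, ← Finset.mul_sum]
    ring
  have hC2 := hC.congr' hCeq
  have hlim2 : Tendsto (fun m : ℕ => -(gg u' u (1/(n:ℝ)) - gg u' u 1)
      + (u^2-u'^2) * (n:ℝ)^3 * (1/((m:ℝ)+1))) atTop
      (𝓝 (-(gg u' u (1/(n:ℝ)) - gg u' u 1))) := by
    have := tendsto_one_div_add_atTop_nhds_zero_nat.const_mul ((u^2-u'^2) * (n:ℝ)^3)
    have h' : Tendsto (fun _ : ℕ => -(gg u' u (1/(n:ℝ)) - gg u' u 1)) atTop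
        (𝓝 (-(gg u' u (1/(n:ℝ)) - gg u' u 1))) := tendsto_const_nhds
    simpa only [mul_zero, add_zero] using h'.add this
  have hle := le_of_tendsto_of_tendsto' hC2 hlim2 (corebound hn h0 h1 h2)
  have hgap : 0 < gg u' u (1/(n:ℝ)) - gg u' u 1 := by
    have h1n : 1/(n:ℝ) < 1 := by
      rw [div_lt_one hn0]
      exact_mod_cast by omega
    have := gg_strict h0 h1 h2 (by positivity : (0:ℝ) ≤ 1/(n:ℝ)) h1n
    linarith
  linarith


private lemma M_eq (n : ℕ) {t : ℝ} (ht : 1 < t) :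
    M n t = 4 ^ n * Real.exp ((n:ℝ) * Real.log (Real.Gamma (3/2 + (1/t - 1/2)))
      + (n:ℝ) * Real.log (Real.Gamma (3/2 - (1/t - 1/2)))
      - Real.log (Real.Gamma (1 + (n:ℝ)/2 + (n:ℝ)*(1/t - 1/2)))
      - Real.log (Real.Gamma (1 + (n:ℝ)/2 - (n:ℝ)*(1/t - 1/2)))) := by
  have ht0 : (0:ℝ) < t := by linarith
  have ht1 : t - 1 ≠ 0 := by intro h; linarith [sub_eq_zero.1 h]
  have e1 : 1 + 1/t = 3/2 + (1/t - 1/2) := by ring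
  have e2 : 1 + 1/(t/(t-1)) = 3/2 - (1/t - 1/2) := by
    rw [one_div_div]
    field_simp
    ring
  have e3 : 1 + (n:ℝ)/t = 1 + (n:ℝ)/2 + (n:ℝ)*(1/t - 1/2) := by ring
  have e4 : 1 + (n:ℝ)/(t/(t-1)) = 1 + (n:ℝ)/2 - (n:ℝ)*(1/t - 1/2) := by
    rw [div_div_eq_mul_div]
    field_simp
    ring
  have hu0 : -(1:ℝ)/2 < 1/t - 1/2 := by
    have : 0 < 1/t := by positivity
    linarith
  have hu1 : 1/t - 1/2 < 1/2 := by
    have : 1/t < 1 := by rw [div_lt_one ht0]; exact ht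
    linarith
  set u : ℝ := 1/t - 1/2 with hu
  have q1 : (0:ℝ) < 3/2 + u := by linarith
  have q2 : (0:ℝ) < 3/2 - u := by linarith
  have hn0 : (0:ℝ) ≤ (n:ℝ) := Nat.cast_nonneg n
  have q3 : (0:ℝ) < 1 + (n:ℝ)/2 + (n:ℝ)*u := by nlinarith
  have q4 : (0:ℝ) < 1 + (n:ℝ)/2 - (n:ℝ)*u := by nlinarith
  rw [M, e1, e2, e3, e4]
  rw [show (n:ℝ) * Real.log (Real.Gamma (3/2 + u)) + (n:ℝ) * Real.log (Real.Gamma (3/2 - u))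
      - Real.log (Real.Gamma (1 + (n:ℝ)/2 + (n:ℝ)*u)) - Real.log (Real.Gamma (1 + (n:ℝ)/2 - (n:ℝ)*u))
      = (n:ℝ) * (Real.log (Real.Gamma (3/2 + u)) + Real.log (Real.Gamma (3/2 - u)))
        - (Real.log (Real.Gamma (1 + (n:ℝ)/2 + (n:ℝ)*u)) + Real.log (Real.Gamma (1 + (n:ℝ)/2 - (n:ℝ)*u))) by ring]
  rw [Real.exp_sub, Real.exp_nat_mul, Real.exp_add, Real.exp_add,
    Real.exp_log (Real.Gamma_pos_of_pos q1), Real.exp_log (Real.Gamma_pos_of_pos q2),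
    Real.exp_log (Real.Gamma_pos_of_pos q3), Real.exp_log (Real.Gamma_pos_of_pos q4),
    mul_div_assoc]

/-- For `n ≥ 2`, `p ↦ M(n,p)` is strictly increasing on `(1, 2]`. -/
theorem stmt5 (n : ℕ) (hn : 2 ≤ n) :
    ∀ t p : ℝ, 1 < t → t < p → p ≤ 2 → M n t < M n p := by
  intro t p ht htp hp2
  have ht0 : (0:ℝ) < t := by linarith
  have hp0 : (0:ℝ) < p := by linarith
  have hp1 : 1 < p := by linarith
  have h0 : 0 ≤ 1/p - 1/2 := by
    have : 1/2 ≤ 1/p := by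
      rw [div_le_div_iff₀ (by norm_num) hp0]
      linarith
    linarith
  have h1 : 1/p - 1/2 < 1/t - 1/2 := by
    have : 1/p < 1/t := one_div_lt_one_div_of_lt ht0 htp
    linarith
  have h2 : 1/t - 1/2 < 1/2 := by
    have : 1/t < 1 := by rw [div_lt_one ht0]; exact ht
    linarith
  rw [M_eq n ht, M_eq n hp1]
  have hkey := keylem hn h0 h1 h2
  exact mul_lt_mul_of_pos_left (Real.exp_lt_exp.2 hkey) (by positivity)
end

section
/- For every integer n ≥ 1 and every real p with 1 < p < ∞, one has M(n,p) ≤ M(n,2) = π^n / Γ(1 + n/2)², and if n ≥ 2 then equality holds if and only if p = 2. -/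
open Real

open Filter Finset Topology

namespace BSaux

/-- The basic building block `log (1 - s²/c²)`. -/
noncomputable def f (s c : ℝ) : ℝ := Real.log (1 - s^2/c^2)

lemma arg_pos {s c : ℝ} (hs : s^2 < 1/4) (hc : 1/2 ≤ c) : 0 < 1 - s^2/c^2 := by
  have hc0 : (0:ℝ) < c := by linarith
  have h : s^2/c^2 < 1 := by
    rw [div_lt_one (by positivity)]
    nlinarith
  linarith

lemma f_nonpos {s c : ℝ} (hs : s^2 < 1/4) (hc : 1/2 ≤ c) : f s c ≤ 0 := by
  apply Real.log_nonpos (le_of_lt (arg_pos hs hc))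
  have : 0 ≤ s^2/c^2 := by positivity
  linarith

lemma f_mono {s c c' : ℝ} (hs : s^2 < 1/4) (hc : 1/2 ≤ c) (hcc : c ≤ c') : f s c ≤ f s c' := by
  have hc0 : (0:ℝ) < c := by linarith
  have hc0' : (0:ℝ) < c' := by linarith
  apply Real.log_le_log (arg_pos hs hc)
  have : s^2/c'^2 ≤ s^2/c^2 := by
    apply div_le_div_of_nonneg_left (by positivity) (by positivity)
    nlinarith
  linarith

lemma f_strict_mono {s c c' : ℝ} (hs0 : s ≠ 0) (hs : s^2 < 1/4) (hc : 1/2 ≤ c)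
    (hcc : c < c') : f s c < f s c' := by
  have hc0 : (0:ℝ) < c := by linarith
  have hc0' : (0:ℝ) < c' := by linarith
  apply Real.log_lt_log (arg_pos hs hc)
  have hs2 : 0 < s^2 := by positivity
  have : s^2/c'^2 < s^2/c^2 := by
    apply div_lt_div_of_pos_left hs2 (by positivity)
    nlinarith
  linarith

lemma f_lower {s c : ℝ} (hs : s^2 < 1/4) (hc : 1 ≤ c) : -(1/(2*c^2)) ≤ f s c := by
  have hc0 : (0:ℝ) < c := by linarith
  have hc2 : (1:ℝ) ≤ c^2 := by nlinarith
  have hx : s^2/c^2 < 1/4 := by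
    have h1 : s^2/c^2 ≤ s^2 := by
      rw [div_le_iff₀ (by positivity)]
      nlinarith [sq_nonneg s]
    linarith
  have hx0 : 0 ≤ s^2/c^2 := by positivity
  set x := s^2/c^2 with hxdef
  have hy : (0:ℝ) < 1 - x := by linarith
  have hlog : 1 - 1/(1-x) ≤ Real.log (1-x) := by
    have h := Real.log_le_sub_one_of_pos (x := (1-x)⁻¹) (by positivity)
    rw [Real.log_inv] at h
    have : 1 - (1-x)⁻¹ ≤ Real.log (1-x) := by linarith
    simpa [one_div] using this
  have hxc : x * c^2 = s^2 := by
    rw [hxdef, div_mul_cancel₀ _ (by positivity)]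
  have hfinal : -(1/(2*c^2)) ≤ 1 - 1/(1-x) := by
    rw [neg_le, ← sub_nonneg]
    have h1 : 1 - 1/(1-x) = -(x/(1-x)) := by field_simp; ring
    rw [h1]
    have h2 : x/(1-x) ≤ 1/(2*c^2) := by
      rw [div_le_div_iff₀ hy (by positivity)]
      nlinarith
    linarith
  calc -(1/(2*c^2)) ≤ 1 - 1/(1-x) := hfinal
    _ ≤ Real.log (1-x) := hlog

lemma f_eq_logs {s A : ℝ} (hA : 0 < A) (hsA : s^2 < A^2) :
    Real.log (A+s) + Real.log (A-s) - 2*Real.log A = f s A := by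
  have h2 : 0 < A - s := by nlinarith
  have h1 : 0 < A + s := by nlinarith
  have key : 1 - s^2/A^2 = ((A+s)*(A-s))/A^2 := by
    field_simp
    ring
  rw [f, key, Real.log_div (by positivity) (by positivity), Real.log_mul h1.ne' h2.ne',
    show A^2 = A^2 from rfl, Real.log_pow]
  push_cast
  ring

lemma f_scale {s B : ℝ} (n : ℕ) (hn : 0 < n) (hB : B ≠ 0) :
    f ((n:ℝ)*s) B = f s (B/(n:ℝ)) := by
  have hn' : ((n:ℝ)) ≠ 0 := Nat.cast_ne_zero.mpr hn.ne'
  unfold f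
  congr 1
  field_simp


lemma block_sum_eq (g : ℕ → ℝ) (K n : ℕ) :
    ∑ m ∈ range (K*n), g m = ∑ i ∈ range K, ∑ r ∈ range n, g (i*n + r) := by
  induction K with
  | zero => simp
  | succ K ih =>
    rw [Nat.succ_mul, Finset.sum_range_add, ih, Finset.sum_range_succ]

lemma per_block (n : ℕ) (hn : 2 ≤ n) {s : ℝ} (hs : s^2 < 1/4) (i : ℕ) :
    ∑ r ∈ range n, f s ((1+(n:ℝ)/2+((i*n+r : ℕ):ℝ))/(n:ℝ)) ≤
      (n:ℝ) * f s ((i:ℝ)+3/2) - (if i = 0 then (f s (3/2) - f s 1) else 0) := by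
  have hn0 : (0:ℝ) < n := by positivity
  have hn2 : (2:ℝ) ≤ n := by exact_mod_cast hn
  have hhalf : ∀ r : ℕ, (1/2:ℝ) ≤ (1+(n:ℝ)/2+((i*n+r : ℕ):ℝ))/(n:ℝ) := by
    intro r
    rw [le_div_iff₀ hn0]
    have : (0:ℝ) ≤ ((i*n+r : ℕ):ℝ) := Nat.cast_nonneg _
    nlinarith
  by_cases hi : i = 0
  · subst hi
    obtain ⟨m, rfl⟩ : ∃ m, n = m + 2 := ⟨n - 2, by omega⟩
    rw [Finset.sum_range_succ']
    have h0 : f s ((1+((m+2:ℕ):ℝ)/2+((0*(m+2)+0 : ℕ):ℝ))/((m+2:ℕ):ℝ)) ≤ f s 1 := by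
      apply f_mono hs (hhalf 0)
      rw [div_le_one hn0]
      push_cast
      linarith
    have hrest : ∀ r ∈ range (m+1),
        f s ((1+((m+2:ℕ):ℝ)/2+((0*(m+2)+(r+1) : ℕ):ℝ))/((m+2:ℕ):ℝ)) ≤ f s (3/2) := by
      intro r hr
      apply f_mono hs (hhalf (r+1))
      rw [div_le_iff₀ hn0]
      have hr' : (r:ℝ) ≤ m := by exact_mod_cast Nat.lt_succ_iff.mp (Finset.mem_range.mp hr)
      push_cast
      nlinarith
    have key1 : (∑ r ∈ range (m+1), f s ((1+((m+2:ℕ):ℝ)/2+((0*(m+2)+(r+1) : ℕ):ℝ))/((m+2:ℕ):ℝ)))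
          + f s ((1+((m+2:ℕ):ℝ)/2+((0*(m+2)+0 : ℕ):ℝ))/((m+2:ℕ):ℝ))
        ≤ (∑ _r ∈ range (m+1), f s (3/2)) + f s 1 :=
      add_le_add (Finset.sum_le_sum hrest) h0
    have key2 : (∑ _r ∈ range (m+1), f s ((3:ℝ)/2)) + f s 1
        = ((m+2:ℕ):ℝ) * f s (((0:ℕ):ℝ)+3/2) - (f s (3/2) - f s 1) := by
      rw [Finset.sum_const, Finset.card_range, nsmul_eq_mul]
      push_cast
      ring
    rw [key2] at key1
    simpa using key1
  · simp only [if_neg hi, sub_zero]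
    have key1 : ∑ r ∈ range n, f s ((1+(n:ℝ)/2+((i*n+r : ℕ):ℝ))/(n:ℝ))
        ≤ ∑ _r ∈ range n, f s ((i:ℝ)+3/2) := by
      apply Finset.sum_le_sum
      intro r hr
      apply f_mono hs (hhalf r)
      rw [div_le_iff₀ hn0]
      have hr' : (r:ℝ) + 1 ≤ n := by exact_mod_cast Finset.mem_range.mp hr
      push_cast
      nlinarith
    have key2 : (∑ _r ∈ range n, f s ((i:ℝ)+3/2)) = (n:ℝ) * f s ((i:ℝ)+3/2) := by
      rw [Finset.sum_const, Finset.card_range, nsmul_eq_mul]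
    rw [key2] at key1
    exact key1

lemma tail_bound {s : ℝ} (hs : s^2 < 1/4) (K L : ℕ) :
    -(1/(2*((K:ℝ)+1))) ≤ ∑ j ∈ range L, f s (((K + j : ℕ):ℝ)+3/2) := by
  rw [neg_le, ← Finset.sum_neg_distrib]
  have tele : ∑ j ∈ range L,
      ((fun j : ℕ => 1/(2*((K:ℝ)+(j:ℝ)+1))) j - (fun j : ℕ => 1/(2*((K:ℝ)+(j:ℝ)+1))) (j+1))
      = 1/(2*((K:ℝ)+1)) - 1/(2*((K:ℝ)+(L:ℝ)+1)) := by
    rw [Finset.sum_range_sub' (f := fun j : ℕ => 1/(2*((K:ℝ)+(j:ℝ)+1))) L]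
    push_cast
    norm_num
  have hstep : ∀ j ∈ range L, -(f s (((K + j : ℕ):ℝ)+3/2)) ≤
      ((fun j : ℕ => 1/(2*((K:ℝ)+(j:ℝ)+1))) j - (fun j : ℕ => 1/(2*((K:ℝ)+(j:ℝ)+1))) (j+1)) := by
    intro j _
    have hc : (1:ℝ) ≤ ((K + j : ℕ):ℝ)+3/2 := by
      have : (0:ℝ) ≤ ((K + j : ℕ):ℝ) := Nat.cast_nonneg _
      linarith
    have h1 : -(f s (((K + j : ℕ):ℝ)+3/2)) ≤ 1/(2*(((K + j : ℕ):ℝ)+3/2)^2) := by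
      have := f_lower hs hc
      linarith
    refine h1.trans ?_
    simp only
    have hx : ((K + j : ℕ):ℝ) = (K:ℝ) + (j:ℝ) := by push_cast; ring
    rw [hx]
    set x := (K:ℝ) + (j:ℝ) with hxd
    have hx0 : (0:ℝ) ≤ x := by positivity
    have e1 : 1/(2*(x+1)) - 1/(2*(x+1+1)) = 1/(2*(x+1)*(x+2)) := by
      field_simp
      ring
    have e2 : (1:ℝ)/(2*(x+3/2)^2) ≤ 1/(2*(x+1)*(x+2)) := by
      rw [div_le_div_iff₀ (by positivity) (by positivity)]
      nlinarith
    push_cast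
    have e3 : (K:ℝ) + ((j:ℝ)+1) + 1 = x + 1 + 1 := by rw [hxd]; ring
    rw [e3, e1]
    exact e2
  calc ∑ j ∈ range L, -(f s (((K + j : ℕ):ℝ)+3/2))
      ≤ ∑ j ∈ range L,
        ((fun j : ℕ => 1/(2*((K:ℝ)+(j:ℝ)+1))) j - (fun j : ℕ => 1/(2*((K:ℝ)+(j:ℝ)+1))) (j+1)) :=
        Finset.sum_le_sum hstep
    _ = 1/(2*((K:ℝ)+1)) - 1/(2*((K:ℝ)+(L:ℝ)+1)) := tele
    _ ≤ 1/(2*((K:ℝ)+1)) := by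
        have : (0:ℝ) < 1/(2*((K:ℝ)+(L:ℝ)+1)) := by positivity
        linarith

lemma main_sum (n : ℕ) (hn : 2 ≤ n) {s : ℝ} (hs : s^2 < 1/4) (K : ℕ) (hK : 1 ≤ K) :
    (f s (3/2) - f s 1) - (n:ℝ)/(2*((K:ℝ)+1)) ≤
    ∑ m ∈ range (K*n), ((n:ℝ) * f s ((m:ℝ)+3/2) - f ((n:ℝ)*s) (1+(n:ℝ)/2+(m:ℝ))) := by
  have hn0 : 0 < n := by omega
  have hn0' : (0:ℝ) < n := by positivity
  rw [Finset.sum_sub_distrib, ← Finset.mul_sum]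
  have hB : ∑ m ∈ range (K*n), f ((n:ℝ)*s) (1+(n:ℝ)/2+(m:ℝ))
      = ∑ m ∈ range (K*n), f s ((1+(n:ℝ)/2+(m:ℝ))/(n:ℝ)) := by
    refine Finset.sum_congr rfl fun m _ => ?_
    exact f_scale n hn0 (by positivity)
  rw [hB, block_sum_eq (fun m : ℕ => f s ((1+(n:ℝ)/2+(m:ℝ))/(n:ℝ))) K n]
  have hblocks : ∑ i ∈ range K, ∑ r ∈ range n, f s ((1+(n:ℝ)/2+((i*n+r : ℕ):ℝ))/(n:ℝ))
      ≤ ∑ i ∈ range K, ((n:ℝ) * f s ((i:ℝ)+3/2) - (if i = 0 then (f s (3/2) - f s 1) else 0)) :=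
    Finset.sum_le_sum fun i _ => per_block n hn hs i
  have hite : ∑ i ∈ range K, (if i = 0 then (f s (3/2) - f s 1) else 0) = f s (3/2) - f s 1 := by
    rw [Finset.sum_ite_eq' (range K) 0 (fun _ => f s (3/2) - f s 1)]
    simp [Finset.mem_range, hK]
    omega
  have hblocks2 : ∑ i ∈ range K, ((n:ℝ) * f s ((i:ℝ)+3/2) - (if i = 0 then (f s (3/2) - f s 1) else 0))
      = (n:ℝ) * (∑ i ∈ range K, f s ((i:ℝ)+3/2)) - (f s (3/2) - f s 1) := by
    rw [Finset.sum_sub_distrib, ← Finset.mul_sum, hite]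
  rw [hblocks2] at hblocks
  obtain ⟨L, hL⟩ : ∃ L, K*n = K + L := ⟨K*n - K, by
    have : K ≤ K * n := Nat.le_mul_of_pos_right K hn0
    omega⟩
  have hsplit : ∑ m ∈ range (K*n), f s ((m:ℝ)+3/2)
      = (∑ m ∈ range K, f s ((m:ℝ)+3/2)) + ∑ j ∈ range L, f s (((K + j : ℕ):ℝ)+3/2) := by
    rw [hL, Finset.sum_range_add]
  have htail := tail_bound hs K L
  have hmul : (n:ℝ) * (-(1/(2*((K:ℝ)+1)))) ≤ (n:ℝ) * ∑ j ∈ range L, f s (((K + j : ℕ):ℝ)+3/2) :=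
    mul_le_mul_of_nonneg_left htail (le_of_lt hn0')
  have : (n:ℝ) * ∑ m ∈ range (K*n), f s ((m:ℝ)+3/2)
      = (n:ℝ) * (∑ m ∈ range K, f s ((m:ℝ)+3/2)) + (n:ℝ) * ∑ j ∈ range L, f s (((K + j : ℕ):ℝ)+3/2) := by
    rw [hsplit]; ring
  rw [this]
  have hend : (n:ℝ) * (-(1/(2*((K:ℝ)+1)))) = -((n:ℝ)/(2*((K:ℝ)+1))) := by ring
  rw [hend] at hmul
  linarith


/-- abstract combination lemma -/
lemma comb {nr s A B : ℝ} (hA : 0 < A) (hsA : s^2 < A^2) (hB : 0 < B)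
    (hsB : (nr*s)^2 < B^2) :
    (nr * Real.log (A+s) + nr * Real.log (A-s) - Real.log (B+nr*s) - Real.log (B-nr*s))
    - (nr * Real.log A + nr * Real.log A - Real.log B - Real.log B)
    = nr * f s A - f (nr*s) B := by
  have h1 := f_eq_logs hA hsA
  have h2 := f_eq_logs hB hsB
  linear_combination nr * h1 - h2

/-- the pointwise summand difference -/
lemma dm_eq (n : ℕ) (hn : 1 ≤ n) {t : ℝ} (ht0 : 0 < t) (ht1 : t < 1) (m : ℕ) :
    ((n:ℝ) * Real.log (1+t+(m:ℝ)) + (n:ℝ) * Real.log (2-t+(m:ℝ))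
      - Real.log (1+(n:ℝ)*t+(m:ℝ)) - Real.log (1+(n:ℝ)*(1-t)+(m:ℝ)))
    - ((n:ℝ) * Real.log (1+(1/2:ℝ)+(m:ℝ)) + (n:ℝ) * Real.log (2-(1/2:ℝ)+(m:ℝ))
      - Real.log (1+(n:ℝ)*(1/2:ℝ)+(m:ℝ)) - Real.log (1+(n:ℝ)*(1-(1/2:ℝ))+(m:ℝ)))
    = (n:ℝ) * f (t-1/2) ((m:ℝ)+3/2) - f ((n:ℝ)*(t-1/2)) (1+(n:ℝ)/2+(m:ℝ)) := by
  have hn' : (1:ℝ) ≤ n := by exact_mod_cast hn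
  have hm : (0:ℝ) ≤ m := Nat.cast_nonneg m
  have hs2 : (t-1/2)^2 < 1/4 := by nlinarith [mul_pos ht0 (show (0:ℝ) < 1 - t by linarith)]
  have hA0 : (0:ℝ) < (m:ℝ)+3/2 := by linarith
  have hB0 : (0:ℝ) < 1+(n:ℝ)/2+(m:ℝ) := by nlinarith
  have hsA : (t-1/2)^2 < ((m:ℝ)+3/2)^2 := by nlinarith [sq_nonneg ((m:ℝ))]
  have hsB : ((n:ℝ)*(t-1/2))^2 < (1+(n:ℝ)/2+(m:ℝ))^2 := by
    have h1 : ((n:ℝ)*(t-1/2))^2 < (n:ℝ)^2/4 := by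
      nlinarith [mul_lt_mul_of_pos_left hs2 (show (0:ℝ) < (n:ℝ)^2 by positivity)]
    have h2 : (n:ℝ)^2/4 < (1+(n:ℝ)/2+(m:ℝ))^2 := by
      nlinarith [sq_nonneg ((m:ℝ)), mul_nonneg hm (le_trans zero_le_one hn')]
    linarith
  have hc := comb hA0 hsA hB0 hsB
  have e1 : 1+t+(m:ℝ) = ((m:ℝ)+3/2) + (t-1/2) := by ring
  have e2 : 2-t+(m:ℝ) = ((m:ℝ)+3/2) - (t-1/2) := by ring
  have e3 : 1+(n:ℝ)*t+(m:ℝ) = (1+(n:ℝ)/2+(m:ℝ)) + (n:ℝ)*(t-1/2) := by ring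
  have e4 : 1+(n:ℝ)*(1-t)+(m:ℝ) = (1+(n:ℝ)/2+(m:ℝ)) - (n:ℝ)*(t-1/2) := by ring
  have e5 : 1+(1/2:ℝ)+(m:ℝ) = (m:ℝ)+3/2 := by ring
  have e6 : 2-(1/2:ℝ)+(m:ℝ) = (m:ℝ)+3/2 := by ring
  have e7 : 1+(n:ℝ)*(1/2:ℝ)+(m:ℝ) = 1+(n:ℝ)/2+(m:ℝ) := by ring
  have e8 : 1+(n:ℝ)*(1-(1/2:ℝ))+(m:ℝ) = 1+(n:ℝ)/2+(m:ℝ) := by ring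
  rw [e1, e2, e3, e4, e5, e6, e7, e8]
  linarith [hc]

/-- the difference of logGammaSeq combinations equals the explicit sum -/
lemma seq_diff_eq (n : ℕ) (hn : 1 ≤ n) {t : ℝ} (ht0 : 0 < t) (ht1 : t < 1) (N : ℕ) :
    (Real.BohrMollerup.logGammaSeq (1+(n:ℝ)*t) N
      + Real.BohrMollerup.logGammaSeq (1+(n:ℝ)*(1-t)) N
      - (n:ℝ) * Real.BohrMollerup.logGammaSeq (1+t) N
      - (n:ℝ) * Real.BohrMollerup.logGammaSeq (2-t) N)
    - (Real.BohrMollerup.logGammaSeq (1+(n:ℝ)*(1/2:ℝ)) N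
      + Real.BohrMollerup.logGammaSeq (1+(n:ℝ)*(1-(1/2:ℝ))) N
      - (n:ℝ) * Real.BohrMollerup.logGammaSeq (1+(1/2:ℝ)) N
      - (n:ℝ) * Real.BohrMollerup.logGammaSeq (2-(1/2:ℝ)) N)
    = ∑ m ∈ range (N+1),
        ((n:ℝ) * f (t-1/2) ((m:ℝ)+3/2) - f ((n:ℝ)*(t-1/2)) (1+(n:ℝ)/2+(m:ℝ))) := by
  have hsum : ∑ m ∈ range (N+1),
      ((n:ℝ) * f (t-1/2) ((m:ℝ)+3/2) - f ((n:ℝ)*(t-1/2)) (1+(n:ℝ)/2+(m:ℝ)))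
      = ∑ m ∈ range (N+1),
        (((n:ℝ) * Real.log (1+t+(m:ℝ)) + (n:ℝ) * Real.log (2-t+(m:ℝ))
          - Real.log (1+(n:ℝ)*t+(m:ℝ)) - Real.log (1+(n:ℝ)*(1-t)+(m:ℝ)))
        - ((n:ℝ) * Real.log (1+(1/2:ℝ)+(m:ℝ)) + (n:ℝ) * Real.log (2-(1/2:ℝ)+(m:ℝ))
          - Real.log (1+(n:ℝ)*(1/2:ℝ)+(m:ℝ)) - Real.log (1+(n:ℝ)*(1-(1/2:ℝ))+(m:ℝ)))) :=
    Finset.sum_congr rfl fun m _ => (dm_eq n hn ht0 ht1 m).symm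
  rw [hsum]
  simp only [Real.BohrMollerup.logGammaSeq, Finset.sum_sub_distrib, Finset.sum_add_distrib,
    ← Finset.mul_sum]
  ring_nf

lemma Phi_diff (n : ℕ) (hn : 2 ≤ n) {t : ℝ} (ht0 : 0 < t) (ht1 : t < 1) :
    (f (t-1/2) (3/2) - f (t-1/2) 1) ≤
    (Real.log (Real.Gamma (1+(n:ℝ)*t)) + Real.log (Real.Gamma (1+(n:ℝ)*(1-t)))
      - (n:ℝ) * Real.log (Real.Gamma (1+t)) - (n:ℝ) * Real.log (Real.Gamma (2-t)))
    - (Real.log (Real.Gamma (1+(n:ℝ)*(1/2:ℝ))) + Real.log (Real.Gamma (1+(n:ℝ)*(1-(1/2:ℝ))))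
      - (n:ℝ) * Real.log (Real.Gamma (1+(1/2:ℝ))) - (n:ℝ) * Real.log (Real.Gamma (2-(1/2:ℝ)))) := by
  have hn1 : 1 ≤ n := by omega
  have hnR : (0:ℝ) < n := by exact_mod_cast Nat.pos_of_ne_zero (by omega)
  have hs2 : (t-1/2)^2 < 1/4 := by nlinarith [mul_pos ht0 (show (0:ℝ) < 1 - t by linarith)]
  have p1 : (0:ℝ) < 1+(n:ℝ)*t := by nlinarith
  have p2 : (0:ℝ) < 1+(n:ℝ)*(1-t) := by nlinarith
  have p3 : (0:ℝ) < 1+t := by linarith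
  have p4 : (0:ℝ) < 2-t := by linarith
  have p5 : (0:ℝ) < 1+(n:ℝ)*(1/2:ℝ) := by nlinarith
  have p6 : (0:ℝ) < 1+(n:ℝ)*(1-(1/2:ℝ)) := by nlinarith
  have p7 : (0:ℝ) < 1+(1/2:ℝ) := by norm_num
  have p8 : (0:ℝ) < 2-(1/2:ℝ) := by norm_num
  set F : ℕ → ℝ := fun N =>
    (Real.BohrMollerup.logGammaSeq (1+(n:ℝ)*t) N
      + Real.BohrMollerup.logGammaSeq (1+(n:ℝ)*(1-t)) N
      - (n:ℝ) * Real.BohrMollerup.logGammaSeq (1+t) N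
      - (n:ℝ) * Real.BohrMollerup.logGammaSeq (2-t) N)
    - (Real.BohrMollerup.logGammaSeq (1+(n:ℝ)*(1/2:ℝ)) N
      + Real.BohrMollerup.logGammaSeq (1+(n:ℝ)*(1-(1/2:ℝ))) N
      - (n:ℝ) * Real.BohrMollerup.logGammaSeq (1+(1/2:ℝ)) N
      - (n:ℝ) * Real.BohrMollerup.logGammaSeq (2-(1/2:ℝ)) N) with hFdef
  have hF : Tendsto F atTop (𝓝
      ((Real.log (Real.Gamma (1+(n:ℝ)*t)) + Real.log (Real.Gamma (1+(n:ℝ)*(1-t)))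
      - (n:ℝ) * Real.log (Real.Gamma (1+t)) - (n:ℝ) * Real.log (Real.Gamma (2-t)))
    - (Real.log (Real.Gamma (1+(n:ℝ)*(1/2:ℝ))) + Real.log (Real.Gamma (1+(n:ℝ)*(1-(1/2:ℝ))))
      - (n:ℝ) * Real.log (Real.Gamma (1+(1/2:ℝ))) - (n:ℝ) * Real.log (Real.Gamma (2-(1/2:ℝ))))))
      := by
    exact ((((Real.BohrMollerup.tendsto_log_gamma p1).add (Real.BohrMollerup.tendsto_log_gamma p2)).sub
      ((Real.BohrMollerup.tendsto_log_gamma p3).const_mul (n:ℝ))).sub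
      ((Real.BohrMollerup.tendsto_log_gamma p4).const_mul (n:ℝ))).sub
      ((((Real.BohrMollerup.tendsto_log_gamma p5).add (Real.BohrMollerup.tendsto_log_gamma p6)).sub
      ((Real.BohrMollerup.tendsto_log_gamma p7).const_mul (n:ℝ))).sub
      ((Real.BohrMollerup.tendsto_log_gamma p8).const_mul (n:ℝ)))
  have hsub : Tendsto (fun K : ℕ => K*n - 1) atTop atTop := by
    apply tendsto_atTop_atTop.mpr
    intro b
    refine ⟨b+1, fun K hK => ?_⟩
    have h1 : K ≤ K*n := Nat.le_mul_of_pos_right K (by omega)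
    omega
  have hG := hF.comp hsub
  have hbound : ∀ K : ℕ, 1 ≤ K →
      (f (t-1/2) (3/2) - f (t-1/2) 1) - (n:ℝ)/(2*((K:ℝ)+1)) ≤ F (K*n - 1) := by
    intro K hK
    have hKn1 : 1 ≤ K*n := Nat.one_le_iff_ne_zero.mpr (by positivity)
    have hKn : K*n - 1 + 1 = K*n := by omega
    rw [hFdef]
    simp only
    rw [seq_diff_eq n hn1 ht0 ht1 (K*n-1), hKn]
    exact main_sum n hn hs2 K hK
  have hc : Tendsto (fun K : ℕ => (f (t-1/2) (3/2) - f (t-1/2) 1) - (n:ℝ)/(2*((K:ℝ)+1)))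
      atTop (𝓝 ((f (t-1/2) (3/2) - f (t-1/2) 1) - 0)) := by
    apply Tendsto.const_sub
    have h0 : Tendsto (fun K : ℕ => ((n:ℝ)/2) * (1/((K:ℝ)+1))) atTop (𝓝 (((n:ℝ)/2) * 0)) :=
      Tendsto.const_mul _ tendsto_one_div_add_atTop_nhds_zero_nat
    have heq : (fun K : ℕ => (n:ℝ)/(2*((K:ℝ)+1))) = fun K : ℕ => ((n:ℝ)/2) * (1/((K:ℝ)+1)) := by
      funext K
      field_simp
    rw [heq]
    simpa using h0
  have hle := le_of_tendsto_of_tendsto hc hG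
    (Filter.eventually_atTop.mpr ⟨1, fun K hK => hbound K hK⟩)
  simpa using hle


end BSaux

namespace BSaux

lemma M_eq (n : ℕ) {p : ℝ} (hp : 1 < p) :
    M n p = 4^n * (Real.Gamma (1+1/p) * Real.Gamma (2-1/p))^n
      / (Real.Gamma (1+(n:ℝ)*(1/p)) * Real.Gamma (1+(n:ℝ)*(1-1/p))) := by
  have hp0 : p ≠ 0 := by positivity
  have hp1 : p - 1 ≠ 0 := by intro h; rw [sub_eq_zero] at h; exact absurd h.symm hp.ne
  have h1 : 1 + 1/(p/(p-1)) = 2 - 1/p := by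
    rw [one_div_div]
    field_simp
    ring
  have h2 : 1 + (n:ℝ)/(p/(p-1)) = 1 + (n:ℝ)*(1-1/p) := by
    rw [div_div_eq_mul_div]
    field_simp
  have h3 : 1 + (n:ℝ)/p = 1 + (n:ℝ)*(1/p) := by ring
  rw [M, h1, h2, h3]

lemma log_M (n : ℕ) {p : ℝ} (hp : 1 < p) :
    Real.log (M n p) = (n:ℝ)*Real.log 4
      + ((n:ℝ)*Real.log (Real.Gamma (1+1/p)) + (n:ℝ)*Real.log (Real.Gamma (2-1/p)))
      - (Real.log (Real.Gamma (1+(n:ℝ)*(1/p))) + Real.log (Real.Gamma (1+(n:ℝ)*(1-1/p)))) := by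
  have ht0 : 0 < 1/p := by positivity
  have ht1 : 1/p < 1 := by rw [div_lt_one (by linarith)]; linarith
  have g1 : 0 < Real.Gamma (1+1/p) := Real.Gamma_pos_of_pos (by linarith)
  have g2 : 0 < Real.Gamma (2-1/p) := Real.Gamma_pos_of_pos (by linarith)
  have g3 : 0 < Real.Gamma (1+(n:ℝ)*(1/p)) := Real.Gamma_pos_of_pos
    (by positivity)
  have g4 : 0 < Real.Gamma (1+(n:ℝ)*(1-1/p)) := Real.Gamma_pos_of_pos
    (by nlinarith [Nat.cast_nonneg (α := ℝ) n])
  rw [M_eq n hp, Real.log_div (by positivity) (by positivity),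
    Real.log_mul (by positivity) (by positivity),
    Real.log_pow, Real.log_pow, Real.log_mul g1.ne' g2.ne', Real.log_mul g3.ne' g4.ne']
  push_cast
  ring

lemma M_pos (n : ℕ) {p : ℝ} (hp : 1 < p) : 0 < M n p := by
  have ht0 : 0 < 1/p := by positivity
  have ht1 : 1/p < 1 := by rw [div_lt_one (by linarith)]; linarith
  have g1 : 0 < Real.Gamma (1+1/p) := Real.Gamma_pos_of_pos (by linarith)
  have g2 : 0 < Real.Gamma (2-1/p) := Real.Gamma_pos_of_pos (by linarith)
  have g3 : 0 < Real.Gamma (1+(n:ℝ)*(1/p)) := Real.Gamma_pos_of_pos (by positivity)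
  have g4 : 0 < Real.Gamma (1+(n:ℝ)*(1-1/p)) := Real.Gamma_pos_of_pos
    (by nlinarith [Nat.cast_nonneg (α := ℝ) n])
  rw [M_eq n hp]
  positivity

lemma M_lt (n : ℕ) (hn : 2 ≤ n) {p : ℝ} (hp : 1 < p) (hne : p ≠ 2) : M n p < M n 2 := by
  have ht0 : 0 < 1/p := by positivity
  have ht1 : 1/p < 1 := by rw [div_lt_one (by linarith)]; linarith
  have hs0 : 1/p - 1/2 ≠ 0 := by
    intro h
    apply hne
    have : 1/p = 1/2 := by linarith
    field_simp at this
    linarith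
  have hs2 : (1/p-1/2)^2 < 1/4 := by nlinarith
  have hgain : 0 < f (1/p-1/2) (3/2) - f (1/p-1/2) 1 :=
    sub_pos.mpr (f_strict_mono hs0 hs2 (by norm_num : (1:ℝ)/2 ≤ 1) (by norm_num : (1:ℝ) < 3/2))
  have hΦ := Phi_diff n hn ht0 ht1
  have hlogp := log_M n hp
  have hlog2 := log_M n (show (1:ℝ) < 2 by norm_num)
  have hlt : Real.log (M n p) < Real.log (M n 2) := by
    rw [hlogp, hlog2]
    linarith
  exact (Real.log_lt_log_iff (M_pos n hp) (M_pos n (by norm_num))).mp hlt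

lemma M_two (n : ℕ) : M n 2 = π^n / (Real.Gamma (1+(n:ℝ)/2))^2 := by
  rw [M_eq n (show (1:ℝ) < 2 by norm_num)]
  have e1 : (2:ℝ) - 1/2 = 1 + 1/2 := by norm_num
  have hga : Real.Gamma (1+(1/2:ℝ)) = Real.sqrt π / 2 := by
    rw [show (1:ℝ)+1/2 = 1/2+1 by norm_num, Real.Gamma_add_one (by norm_num),
      Real.Gamma_one_half_eq]
    ring
  have e2 : 1+(n:ℝ)*(1/2) = 1+(n:ℝ)/2 := by ring
  have e3 : 1+(n:ℝ)*(1-1/2) = 1+(n:ℝ)/2 := by ring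
  rw [e1, e2, e3, hga]
  have h4 : Real.sqrt π / 2 * (Real.sqrt π / 2) = π/4 := by
    rw [div_mul_div_comm, Real.mul_self_sqrt Real.pi_pos.le]
    norm_num
  rw [h4]
  have h5 : (4:ℝ)^n * (π/4)^n = π^n := by
    rw [← mul_pow]
    norm_num
    ring_nf
  rw [h5, ← pow_two]

lemma M_one {p : ℝ} (hp : 1 < p) : M 1 p = 4 := by
  rw [M_eq 1 hp]
  have ht0 : 0 < 1/p := by positivity
  have ht1 : 1/p < 1 := by rw [div_lt_one (by linarith)]; linarith
  have e1 : 1+((1:ℕ):ℝ)*(1/p) = 1+1/p := by push_cast; ring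
  have e2 : 1+((1:ℕ):ℝ)*(1-1/p) = 2-1/p := by push_cast; ring
  rw [e1, e2]
  have g1 : 0 < Real.Gamma (1+1/p) := Real.Gamma_pos_of_pos (by linarith)
  have g2 : 0 < Real.Gamma (2-1/p) := Real.Gamma_pos_of_pos (by linarith)
  rw [pow_one, pow_one, mul_div_assoc, div_self (by positivity)]
  norm_num


end BSaux

/-- Blaschke–Santaló for `p`-balls: `M(n,p) ≤ M(n,2) = πⁿ/Γ(1+n/2)²`, with
equality iff `p = 2` when `n ≥ 2`. -/
theorem stmt7 (n : ℕ) (hn : 1 ≤ n) (p : ℝ) (hp : 1 < p) :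
    M n p ≤ M n 2 ∧ M n 2 = π ^ n / (Real.Gamma (1 + (n : ℝ) / 2)) ^ 2 ∧
      (2 ≤ n → (M n p = M n 2 ↔ p = 2)) := by
  refine ⟨?_, BSaux.M_two n, ?_⟩
  · rcases eq_or_lt_of_le hn with h1 | h2
    · rw [← h1, BSaux.M_one hp, BSaux.M_one (show (1:ℝ) < 2 by norm_num)]
    · by_cases hp2 : p = 2
      · rw [hp2]
      · exact (BSaux.M_lt n (by omega) hp hp2).le
  · intro hn2
    constructor
    · intro heq
      by_contra hne
      exact absurd heq (BSaux.M_lt n hn2 hp hne).ne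
    · intro h
      rw [h]
end

section
/- Let n ≥ 1 be an integer, let 1 < p < ∞ with conjugate exponent q satisfying 1/p + 1/q = 1, and let B_p^n = {x ∈ ℝ^n : ∑_{i=1}^n |x_i|^p ≤ 1} and B_q^n = {y ∈ ℝ^n : ∑_{i=1}^n |y_i|^q ≤ 1}. Then the product of Lebesgue volumes satisfies 4^n/n! ≤ vol(B_p^n) · vol(B_q^n). -/
open MeasureTheory
open scoped ENNReal
open Filter Real
open scoped Topology


noncomputable def mahlerT (a b x : ℝ) : ℝ := x * (x + a + b) / ((x + a) * (x + b))

lemma mahlerT_pos {a b x : ℝ} (ha : 0 ≤ a) (hb : 0 ≤ b) (hx : 0 < x) :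
    0 < mahlerT a b x := by
  unfold mahlerT; positivity

lemma mahlerT_mono {a b x y : ℝ} (ha : 0 ≤ a) (hb : 0 ≤ b) (hx : 0 < x) (hxy : x ≤ y) :
    mahlerT a b x ≤ mahlerT a b y := by
  have hy : 0 < y := lt_of_lt_of_le hx hxy
  unfold mahlerT
  rw [div_le_div_iff₀ (by positivity) (by positivity)]
  nlinarith [mul_nonneg ha hb, mul_le_mul_of_nonneg_left hxy (mul_nonneg ha hb),
    mul_pos hx hy]

lemma mahlerT_scale (n : ℕ) (hn : 0 < n) {s k : ℝ} (hs0 : 0 < s) (hs1 : s < 1) (hk : 0 < k) :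
    mahlerT (n * s) (n * (1 - s)) (n * k) = mahlerT s (1 - s) k := by
  have hn' : (0:ℝ) < n := by exact_mod_cast hn
  unfold mahlerT
  rw [show (n:ℝ) * k + n * s + n * (1-s) = n * (k + s + (1-s)) by ring,
    show (n:ℝ) * k + n * s = n * (k + s) by ring,
    show (n:ℝ) * k + n * (1-s) = n * (k + (1-s)) by ring]
  have h1 : (0:ℝ) < k + s := by linarith
  have h2 : (0:ℝ) < k + (1-s) := by linarith
  field_simp

lemma aux_prod_factorial (m : ℕ) :
    ∏ j ∈ Finset.range m, ((1:ℝ) + j) = (m.factorial : ℝ) := by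
  induction m with
  | zero => simp
  | succ k ih =>
    rw [Finset.prod_range_succ, ih, Nat.factorial_succ]
    push_cast; ring

lemma mahler_prodFormula (a b : ℝ) (ha : 0 < a) (hb : 0 < b) :
    Tendsto (fun N : ℕ => ∏ j ∈ Finset.range N, mahlerT a b (1 + j)) atTop
      (𝓝 (Real.Gamma (1 + a) * Real.Gamma (1 + b) / Real.Gamma (1 + a + b))) := by
  have hQ : Tendsto (fun N => Real.GammaSeq (1+a) N * Real.GammaSeq (1+b) N /
      Real.GammaSeq (1+a+b) N) atTop
      (𝓝 (Real.Gamma (1+a) * Real.Gamma (1+b) / Real.Gamma (1+a+b))) :=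
    ((Real.GammaSeq_tendsto_Gamma (1+a)).mul (Real.GammaSeq_tendsto_Gamma (1+b))).div
      (Real.GammaSeq_tendsto_Gamma (1+a+b)) (Real.Gamma_pos_of_pos (by linarith)).ne'
  have hfrac : Tendsto (fun N : ℕ => ((N:ℝ) + 1) / N) atTop (𝓝 1) := by
    have h1 : Tendsto (fun N : ℕ => 1 + 1 / (N:ℝ)) atTop (𝓝 (1 + 0)) :=
      tendsto_const_nhds.add tendsto_one_div_atTop_nhds_zero_nat
    rw [add_zero] at h1
    refine h1.congr' ?_
    filter_upwards [eventually_gt_atTop 0] with N hN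
    have : (N:ℝ) ≠ 0 := by positivity
    field_simp
  have key : ∀ N : ℕ, 0 < N → (∏ j ∈ Finset.range (N+1), mahlerT a b (1 + j)) =
      ((N:ℝ) + 1) / N * (Real.GammaSeq (1+a) N * Real.GammaSeq (1+b) N /
        Real.GammaSeq (1+a+b) N) := by
    intro N hN
    have hN' : (0:ℝ) < N := by exact_mod_cast hN
    unfold mahlerT Real.GammaSeq
    rw [Finset.prod_div_distrib, Finset.prod_mul_distrib, Finset.prod_mul_distrib]
    have hA : 0 < ∏ j ∈ Finset.range (N+1), ((1:ℝ) + j + a) :=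
      Finset.prod_pos fun j _ => by positivity
    have hB : 0 < ∏ j ∈ Finset.range (N+1), ((1:ℝ) + j + b) :=
      Finset.prod_pos fun j _ => by positivity
    have hC : 0 < ∏ j ∈ Finset.range (N+1), ((1:ℝ) + j + a + b) :=
      Finset.prod_pos fun j _ => by positivity
    have hA' : (∏ j ∈ Finset.range (N+1), ((1:ℝ)+a + j)) =
        ∏ j ∈ Finset.range (N+1), ((1:ℝ) + j + a) :=
      Finset.prod_congr rfl fun j _ => by ring
    have hB' : (∏ j ∈ Finset.range (N+1), ((1:ℝ)+b + j)) =
        ∏ j ∈ Finset.range (N+1), ((1:ℝ) + j + b) :=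
      Finset.prod_congr rfl fun j _ => by ring
    have hC' : (∏ j ∈ Finset.range (N+1), ((1:ℝ)+a+b + j)) =
        ∏ j ∈ Finset.range (N+1), ((1:ℝ) + j + a + b) :=
      Finset.prod_congr rfl fun j _ => by ring
    rw [hA', hB', hC', aux_prod_factorial]
    set A := ∏ j ∈ Finset.range (N+1), ((1:ℝ) + j + a) with hAdef
    set B := ∏ j ∈ Finset.range (N+1), ((1:ℝ) + j + b) with hBdef
    set C := ∏ j ∈ Finset.range (N+1), ((1:ℝ) + j + a + b) with hCdef
    have hpow : (N:ℝ) ^ (1+a) * (N:ℝ) ^ (1+b) = N * (N:ℝ) ^ (1+a+b) := by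
      rw [← Real.rpow_add hN', show (1+a)+(1+b) = 1 + (1+a+b) by ring,
        Real.rpow_add hN', Real.rpow_one]
    have hfac : ((N+1).factorial : ℝ) = ((N:ℝ)+1) * (N.factorial : ℝ) := by
      rw [Nat.factorial_succ]; push_cast; ring
    have hP : (0:ℝ) < (N:ℝ) ^ (1+a+b) := Real.rpow_pos_of_pos hN' _
    have hNf : (0:ℝ) < (N.factorial : ℝ) := by exact_mod_cast N.factorial_pos
    rw [hfac]
    field_simp
    linear_combination -hpow
  have h2 : Tendsto (fun N : ℕ => ((N:ℝ)+1)/N * (Real.GammaSeq (1+a) N *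
      Real.GammaSeq (1+b) N / Real.GammaSeq (1+a+b) N)) atTop
      (𝓝 (1 * (Real.Gamma (1+a) * Real.Gamma (1+b) / Real.Gamma (1+a+b)))) := hfrac.mul hQ
  rw [one_mul] at h2
  have h3 : Tendsto (fun N : ℕ => ∏ j ∈ Finset.range (N+1), mahlerT a b (1 + j)) atTop
      (𝓝 (Real.Gamma (1+a) * Real.Gamma (1+b) / Real.Gamma (1+a+b))) := by
    refine Tendsto.congr' ?_ h2
    filter_upwards [eventually_gt_atTop 0] with N hN
    exact (key N hN).symm
  exact (tendsto_add_atTop_iff_nat 1).mp h3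
lemma mahler_blockIneq (n : ℕ) (hn : 1 ≤ n) {s : ℝ} (hs0 : 0 < s) (hs1 : s < 1) (N : ℕ) :
    (∏ j ∈ Finset.range (n*N), mahlerT ((n:ℝ)*s) ((n:ℝ)*(1-s)) (1 + j)) ≤
      (∏ j ∈ Finset.range N, mahlerT s (1-s) (1 + j))^n := by
  have hn' : (0:ℝ) < n := by exact_mod_cast hn
  have ha : (0:ℝ) ≤ (n:ℝ)*s := by positivity
  have hb : (0:ℝ) ≤ (n:ℝ)*(1-s) := by nlinarith
  induction N with
  | zero => simp
  | succ N ih =>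
    rw [Nat.mul_succ, Finset.prod_range_add, Finset.prod_range_succ, mul_pow]
    have hsc : mahlerT ((n:ℝ)*s) ((n:ℝ)*(1-s)) ((n:ℝ)*((N:ℝ)+1)) = mahlerT s (1-s) (1 + N) := by
      rw [mahlerT_scale n hn hs0 hs1 (by positivity), add_comm]
    have hTpos : 0 < mahlerT s (1-s) (1 + (N:ℝ)) :=
      mahlerT_pos (le_of_lt hs0) (by linarith) (by positivity)
    have hblock : (∏ i ∈ Finset.range n, mahlerT ((n:ℝ)*s) ((n:ℝ)*(1-s)) (1 + ((n*N + i : ℕ):ℝ)))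
        ≤ (mahlerT s (1-s) (1 + N))^n := by
      rw [← hsc]
      calc (∏ i ∈ Finset.range n, mahlerT ((n:ℝ)*s) ((n:ℝ)*(1-s)) (1 + ((n*N + i : ℕ):ℝ)))
          ≤ ∏ _i ∈ Finset.range n, mahlerT ((n:ℝ)*s) ((n:ℝ)*(1-s)) ((n:ℝ)*((N:ℝ)+1)) := by
            refine Finset.prod_le_prod (fun i _ => le_of_lt (mahlerT_pos ha hb (by positivity)))
              (fun i hi => mahlerT_mono ha hb (by positivity) ?_)
            have : (i:ℝ) ≤ (n:ℝ) - 1 := by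
              have := Finset.mem_range.mp hi
              have : (i:ℝ) + 1 ≤ n := by exact_mod_cast this
              linarith
            push_cast
            nlinarith
        _ = (mahlerT ((n:ℝ)*s) ((n:ℝ)*(1-s)) ((n:ℝ)*((N:ℝ)+1)))^n := by
            rw [Finset.prod_const, Finset.card_range]
    have h1 : 0 ≤ ∏ j ∈ Finset.range (n*N), mahlerT ((n:ℝ)*s) ((n:ℝ)*(1-s)) (1 + (j:ℝ)) :=
      Finset.prod_nonneg fun j _ => le_of_lt (mahlerT_pos ha hb (by positivity))
    have h2 : 0 ≤ (∏ j ∈ Finset.range N, mahlerT s (1-s) (1 + (j:ℝ)))^n := by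
      refine pow_nonneg (Finset.prod_nonneg fun j _ => le_of_lt ?_) n
      exact mahlerT_pos (le_of_lt hs0) (by linarith) (by positivity)
    calc (∏ j ∈ Finset.range (n*N), mahlerT ((n:ℝ)*s) ((n:ℝ)*(1-s)) (1 + (j:ℝ))) *
          ∏ i ∈ Finset.range n, mahlerT ((n:ℝ)*s) ((n:ℝ)*(1-s)) (1 + ((n*N + i : ℕ):ℝ))
        ≤ (∏ j ∈ Finset.range N, mahlerT s (1-s) (1 + (j:ℝ)))^n *
            (mahlerT s (1-s) (1 + N))^n := by
          refine mul_le_mul ih hblock (Finset.prod_nonneg fun i _ =>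
            le_of_lt (mahlerT_pos ha hb (by positivity))) h2
      _ = _ := rfl

lemma mahler_gammaIneq (n : ℕ) (hn : 1 ≤ n) {s : ℝ} (hs0 : 0 < s) (hs1 : s < 1) :
    Real.Gamma (1 + (n:ℝ)*s) * Real.Gamma (1 + (n:ℝ)*(1-s)) ≤
      (n.factorial : ℝ) * (Real.Gamma (1+s) * Real.Gamma (1+(1-s)))^n := by
  have hn' : (0:ℝ) < n := by exact_mod_cast hn
  have ha : (0:ℝ) < (n:ℝ)*s := by positivity
  have hb : (0:ℝ) < (n:ℝ)*(1-s) := by nlinarith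
  have hbig := mahler_prodFormula ((n:ℝ)*s) ((n:ℝ)*(1-s)) ha hb
  have hsmall := mahler_prodFormula s (1-s) hs0 (by linarith)
  rw [show (1:ℝ) + (n:ℝ)*s + (n:ℝ)*(1-s) = (n:ℝ) + 1 by ring,
    Real.Gamma_nat_eq_factorial] at hbig
  rw [show (1:ℝ) + s + (1-s) = 2 by ring, Real.Gamma_two, div_one] at hsmall
  have hmul : Tendsto (fun N : ℕ => n * N) atTop atTop :=
    Filter.tendsto_atTop_atTop.2 fun m => ⟨m, fun N hN =>
      le_trans hN (Nat.le_mul_of_pos_left N hn)⟩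
  have hbig' : Tendsto (fun N : ℕ => ∏ j ∈ Finset.range (n*N),
      mahlerT ((n:ℝ)*s) ((n:ℝ)*(1-s)) (1 + j)) atTop
      (𝓝 (Real.Gamma (1 + (n:ℝ)*s) * Real.Gamma (1 + (n:ℝ)*(1-s)) / (n.factorial : ℝ))) :=
    hbig.comp hmul
  have hpow := hsmall.pow n
  have hfin := le_of_tendsto_of_tendsto' hbig' hpow (fun N => mahler_blockIneq n hn hs0 hs1 N)
  have hNf : (0:ℝ) < (n.factorial : ℝ) := by exact_mod_cast n.factorial_pos
  rw [div_le_iff₀ hNf] at hfin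
  linarith
lemma mahler_volume (n : ℕ) (hn : 1 ≤ n) {p : ℝ} (hp : 1 ≤ p) :
    volume {x : EuclideanSpace ℝ (Fin n) | ∑ i, |x i| ^ p ≤ 1} =
      ENNReal.ofReal ((2 * Real.Gamma (1/p + 1))^n / Real.Gamma (n/p + 1)) := by
  haveI : Nonempty (Fin n) := ⟨⟨0, hn⟩⟩
  have hp0 : (0:ℝ) < p := by linarith
  have h0 : volume {x : EuclideanSpace ℝ (Fin n) | ∑ i, |x i| ^ p ≤ 1} =
      volume {x : Fin n → ℝ | ∑ i, |x i| ^ p ≤ 1} := by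
    rw [← (EuclideanSpace.volume_preserving_symm_measurableEquiv_toLp (Fin n)).measure_preimage_emb
      (MeasurableEquiv.toLp 2 (Fin n → ℝ)).symm.measurableEmbedding]
    rfl
  have h1 : {x : Fin n → ℝ | ∑ i, |x i| ^ p ≤ 1} =
      {x : Fin n → ℝ | (∑ i, |x i| ^ p) ^ (1/p) ≤ (1:ℝ)} := by
    ext x
    have hsum : (0:ℝ) ≤ ∑ i, |x i| ^ p :=
      Finset.sum_nonneg fun i _ => Real.rpow_nonneg (abs_nonneg _) _
    simp only [Set.mem_setOf_eq]
    constructor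
    · intro h
      exact Real.rpow_le_one hsum h (by positivity)
    · intro h
      have : ((∑ i, |x i| ^ p) ^ (1/p)) ^ p ≤ 1 :=
        Real.rpow_le_one (Real.rpow_nonneg hsum _) h (le_of_lt hp0)
      rwa [← Real.rpow_mul hsum, one_div_mul_cancel hp0.ne', Real.rpow_one] at this
  rw [h0, h1, MeasureTheory.volume_sum_rpow_le (Fin n) hp 1]
  simp [Fintype.card_fin]


/-- Mahler's conjecture for `p`-balls: `4ⁿ/n! ≤ vol(B_pⁿ) · vol(B_qⁿ)` for
conjugate exponents `p, q`. -/
theorem stmt8 (n : ℕ) (hn : 1 ≤ n) (p q : ℝ) (hp : 1 < p) (hpq : 1 / p + 1 / q = 1) :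
    (4 : ℝ≥0∞) ^ n / (n.factorial : ℝ≥0∞) ≤
      volume {x : EuclideanSpace ℝ (Fin n) | ∑ i, |x i| ^ p ≤ 1} *
        volume {y : EuclideanSpace ℝ (Fin n) | ∑ i, |y i| ^ q ≤ 1} := by
  have hp0 : (0:ℝ) < p := by linarith
  have hs0 : (0:ℝ) < 1/p := by positivity
  have hs1 : 1/p < 1 := by rw [div_lt_one hp0]; exact hp
  have hq1 : 1/q = 1 - 1/p := by linarith
  have hq0 : (0:ℝ) < q := one_div_pos.mp (by rw [hq1]; linarith)
  have hq : 1 < q := (div_lt_one hq0).mp (by rw [hq1]; linarith)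
  rw [mahler_volume n hn (le_of_lt hp), mahler_volume n hn (le_of_lt hq),
    ← ENNReal.ofReal_mul (by positivity)]
  have hfac : (0:ℝ) < (n.factorial : ℝ) := by exact_mod_cast n.factorial_pos
  have hlhs : (4 : ℝ≥0∞) ^ n / (n.factorial : ℝ≥0∞) =
      ENNReal.ofReal ((4:ℝ)^n / (n.factorial : ℝ)) := by
    rw [ENNReal.ofReal_div_of_pos hfac, ENNReal.ofReal_pow (by norm_num),
      ENNReal.ofReal_ofNat, ENNReal.ofReal_natCast]
  rw [hlhs]
  apply ENNReal.ofReal_le_ofReal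
  -- the real inequality
  set s := 1/p with hs
  have hgamma := mahler_gammaIneq n hn hs0 hs1
  have hA : 0 < Real.Gamma (1 + s) := Real.Gamma_pos_of_pos (by linarith)
  have hB : 0 < Real.Gamma (1 + (1-s)) := Real.Gamma_pos_of_pos (by linarith)
  have hX : 0 < Real.Gamma (1 + (n:ℝ)*s) := Real.Gamma_pos_of_pos (by positivity)
  have hY : 0 < Real.Gamma (1 + (n:ℝ)*(1-s)) := by
    refine Real.Gamma_pos_of_pos ?_
    have : (0:ℝ) < (n:ℝ) := by exact_mod_cast hn
    nlinarith
  have e1 : s + 1 = 1 + s := by ring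
  have e2 : (n:ℝ)/p + 1 = 1 + (n:ℝ)*s := by rw [hs]; ring
  have e3 : 1/q + 1 = 1 + (1 - s) := by rw [hq1]; ring
  have e4 : (n:ℝ)/q + 1 = 1 + (n:ℝ)*(1-s) := by
    have : (n:ℝ)/q = (n:ℝ) * (1/q) := by ring
    rw [this, hq1]; ring
  rw [e1, e2, e3, e4, div_mul_div_comm, div_le_div_iff₀ hfac
    (by positivity)]
  have e5 : (2 * Real.Gamma (1+s))^n * (2 * Real.Gamma (1+(1-s)))^n =
      (4:ℝ)^n * (Real.Gamma (1+s) * Real.Gamma (1+(1-s)))^n := by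
    rw [← mul_pow, ← mul_pow]
    congr 1
    ring
  rw [e5]
  calc (4:ℝ)^n * (Real.Gamma (1 + (n:ℝ)*s) * Real.Gamma (1 + (n:ℝ)*(1-s)))
      ≤ (4:ℝ)^n * ((n.factorial : ℝ) * (Real.Gamma (1+s) * Real.Gamma (1+(1-s)))^n) :=
        mul_le_mul_of_nonneg_left hgamma (by positivity)
    _ = (4:ℝ)^n * (Real.Gamma (1+s) * Real.Gamma (1+(1-s)))^n * (n.factorial : ℝ) := by ring
end

section
/- Let n ≥ 1 be an integer, let 1 < p < ∞ with conjugate exponent q satisfying 1/p + 1/q = 1, and let B_p^n = {x ∈ ℝ^n : ∑_{i=1}^n |x_i|^p ≤ 1} and B_q^n = {y ∈ ℝ^n : ∑_{i=1}^n |y_i|^q ≤ 1}. Then the product of Lebesgue volumes satisfies vol(B_p^n) · vol(B_q^n) ≤ vol(B_2^n)², where B_2^n is the Euclidean unit ball of ℝ^n. -/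
open MeasureTheory
open scoped ENNReal
open Real Filter Finset

lemma pairwise_ineq (a nn k j : ℝ) (ha : 0 < a) (ha1 : a < 1) (hk : 1 ≤ k) (hj : 1 ≤ j)
    (hjk : j ≤ nn * k) (hn : 1 ≤ nn) :
    (j + nn * a) * (j + nn * (1 - a)) * (k + 1/2)^2 ≤
      (j + nn/2)^2 * ((k + a) * (k + (1 - a))) := by
  nlinarith [sq_nonneg (a - 1/2), mul_nonneg (mul_nonneg (sq_nonneg (a-1/2)) (sub_nonneg.2 hjk))
    (by nlinarith : (0:ℝ) ≤ nn * k + j + nn), sq_nonneg (j + nn/2), sq_nonneg (k+1/2)]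

lemma blocks (f : ℕ → ℝ) (n : ℕ) : ∀ M : ℕ,
    ∏ j ∈ range (n * M), f j = ∏ k ∈ range M, ∏ i ∈ range n, f (n * k + i) := by
  intro M
  induction M with
  | zero => simp
  | succ M ih =>
      rw [Nat.mul_succ, Finset.prod_range_add, ih, Finset.prod_range_succ]

lemma prodineq (n : ℕ) (hn : 1 ≤ n) (a : ℝ) (ha : 0 < a) (ha1 : a < 1) (M : ℕ) :
    (∏ j ∈ range M, ((1:ℝ)/2 + 1 + j)) ^ (2 * n) *
      ∏ j ∈ range (n * M), ((n * a + 1 + j) * (n * (1-a) + 1 + j)) ≤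
    (∏ j ∈ range M, ((a + 1 + j) * ((1-a) + 1 + j))) ^ n *
      ∏ j ∈ range (n * M), ((n:ℝ)/2 + 1 + j) ^ 2 := by
  have hn' : (1:ℝ) ≤ n := by exact_mod_cast hn
  have h1a : 0 < 1 - a := by linarith
  rw [blocks, blocks, ← Finset.prod_pow, ← Finset.prod_pow, ← Finset.prod_mul_distrib,
    ← Finset.prod_mul_distrib]
  refine Finset.prod_le_prod (fun k _ => ?_) (fun k _ => ?_)
  · have : (0:ℝ) < ∏ i ∈ range n, (↑n * a + 1 + ↑(n * k + i)) * (↑n * (1 - a) + 1 + ↑(n * k + i)) := by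
      refine Finset.prod_pos fun i _ => mul_pos ?_ ?_ <;> positivity
    positivity
  · have e1 : ((1:ℝ)/2 + 1 + (k:ℝ)) ^ (2 * n) *
        ∏ i ∈ range n, ((n:ℝ) * a + 1 + ↑(n * k + i)) * ((n:ℝ) * (1 - a) + 1 + ↑(n * k + i)) =
        ∏ i ∈ range n, (((1:ℝ)/2 + 1 + (k:ℝ))^2 *
          (((n:ℝ) * a + 1 + ↑(n * k + i)) * ((n:ℝ) * (1 - a) + 1 + ↑(n * k + i)))) := by
      rw [pow_mul]
      simp only [Finset.prod_mul_distrib, Finset.prod_const, Finset.card_range]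
    have e2 : ((a + 1 + (k:ℝ)) * ((1-a) + 1 + (k:ℝ))) ^ n *
        ∏ i ∈ range n, ((n:ℝ)/2 + 1 + ↑(n * k + i)) ^ 2 =
        ∏ i ∈ range n, ((a + 1 + (k:ℝ)) * ((1-a) + 1 + (k:ℝ)) *
          (((n:ℝ)/2 + 1 + ↑(n * k + i)) ^ 2)) := by
      simp only [Finset.prod_mul_distrib, Finset.prod_const, Finset.card_range, mul_pow]
    rw [e1, e2]
    refine Finset.prod_le_prod (fun i _ => ?_) (fun i hi => ?_)
    · have : (0:ℝ) < ((n:ℝ) * a + 1 + ↑(n * k + i)) * ((n:ℝ) * (1 - a) + 1 + ↑(n * k + i)) :=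
        mul_pos (by positivity) (by positivity)
      positivity
    · have hi' : (i:ℝ) + 1 ≤ n := by
        have := Finset.mem_range.1 hi; exact_mod_cast Nat.succ_le_of_lt this
      have hjk : ((n:ℝ)*k + i) + 1 ≤ n * ((k:ℝ)+1) := by nlinarith
      have key := pairwise_ineq a n ((k:ℝ)+1) ((n:ℝ)*k+i+1) ha ha1 (by linarith [Nat.cast_nonneg (α := ℝ) k]) (by nlinarith [Nat.cast_nonneg (α := ℝ) k, Nat.cast_nonneg (α := ℝ) i])
        hjk hn'
      push_cast
      linear_combination key


lemma aux_eq (n : ℕ) (a : ℝ) (x y F G : ℝ) (hx : 0 < x) (hy : 0 < y) :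
    (x ^ (a+1) * F) ^ n * (x ^ ((1-a)+1) * F) ^ n * (y ^ ((n:ℝ)/2+1) * G) ^ 2 =
    (x ^ ((1:ℝ)/2+1) * F) ^ (2*n) * (y ^ ((n:ℝ)*a+1) * G) * (y ^ ((n:ℝ)*(1-a)+1) * G) := by
  have h1 : ∀ (s : ℝ) (k : ℕ), (x ^ s) ^ k = x ^ (s * k) := fun s k => by
    rw [← Real.rpow_natCast (x ^ s) k, ← Real.rpow_mul hx.le]
  have h2 : ∀ (s : ℝ) (k : ℕ), (y ^ s) ^ k = y ^ (s * k) := fun s k => by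
    rw [← Real.rpow_natCast (y ^ s) k, ← Real.rpow_mul hy.le]
  have e1 : x ^ ((a+1) * (n:ℕ)) * x ^ (((1-a)+1) * (n:ℕ)) = x ^ (((1:ℝ)/2+1) * ((2*n : ℕ):ℝ)) := by
    rw [← Real.rpow_add hx]; congr 1; push_cast; ring
  have e2 : y ^ ((n:ℝ)*a+1) * y ^ ((n:ℝ)*(1-a)+1) = y ^ (((n:ℝ)/2+1) * ((2:ℕ):ℝ)) := by
    rw [← Real.rpow_add hy]; congr 1; push_cast; ring
  calc (x ^ (a+1) * F) ^ n * (x ^ ((1-a)+1) * F) ^ n * (y ^ ((n:ℝ)/2+1) * G) ^ 2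
      = (x ^ ((a+1) * (n:ℕ)) * x ^ (((1-a)+1) * (n:ℕ))) * (F^n * F^n) *
          (y ^ (((n:ℝ)/2+1) * ((2:ℕ):ℝ)) * G^2) := by
        simp only [mul_pow, h1, h2]; ring
    _ = x ^ (((1:ℝ)/2+1) * ((2*n : ℕ):ℝ)) * F^(2*n) * (y ^ ((n:ℝ)*a+1) * y ^ ((n:ℝ)*(1-a)+1)) *
          G^2 := by rw [e1, ← e2, ← pow_add]; ring_nf
    _ = (x ^ ((1:ℝ)/2+1) * F) ^ (2*n) * (y ^ ((n:ℝ)*a+1) * G) * (y ^ ((n:ℝ)*(1-a)+1) * G) := by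
        simp only [mul_pow, h1, h2]; ring


lemma gammaSeqIneq (n : ℕ) (hn : 1 ≤ n) (a : ℝ) (ha : 0 < a) (ha1 : a < 1) (m : ℕ) (hm : 1 ≤ m) :
    Real.GammaSeq (a+1) m ^ n * Real.GammaSeq ((1-a)+1) m ^ n *
      Real.GammaSeq ((n:ℝ)/2+1) (n*(m+1)-1) ^ 2 ≤
    Real.GammaSeq ((1:ℝ)/2+1) m ^ (2*n) * Real.GammaSeq ((n:ℝ)*a+1) (n*(m+1)-1) *
      Real.GammaSeq ((n:ℝ)*(1-a)+1) (n*(m+1)-1) := by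
  have h1a : 0 < 1 - a := by linarith
  have hn' : (0:ℝ) < n := by exact_mod_cast hn
  have h2 : 2 ≤ n*(m+1) := by
    have := Nat.mul_le_mul hn (show 2 ≤ m+1 by omega)
    omega
  have hpos : 0 < n*(m+1) := by omega
  have hNM : n*(m+1)-1+1 = n*(m+1) := Nat.succ_pred_eq_of_pos hpos
  have hx : (0:ℝ) < (m:ℝ) := by exact_mod_cast hm
  have hy' : (0:ℝ) < ((n*(m+1)-1 : ℕ):ℝ) := by
    have : 1 ≤ n*(m+1)-1 := by omega
    exact_mod_cast this
  have hPa : 0 < ∏ j ∈ range (m+1), (a + 1 + (j:ℝ)) :=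
    Finset.prod_pos fun j _ => by have := Nat.cast_nonneg (α := ℝ) j; linarith
  have hPb : 0 < ∏ j ∈ range (m+1), ((1-a) + 1 + (j:ℝ)) :=
    Finset.prod_pos fun j _ => by have := Nat.cast_nonneg (α := ℝ) j; linarith
  have hPh : 0 < ∏ j ∈ range (m+1), ((1:ℝ)/2 + 1 + (j:ℝ)) :=
    Finset.prod_pos fun j _ => by positivity
  have hQa : 0 < ∏ j ∈ range (n*(m+1)), ((n:ℝ) * a + 1 + (j:ℝ)) :=
    Finset.prod_pos fun j _ => by
      have := Nat.cast_nonneg (α := ℝ) j; nlinarith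
  have hQb : 0 < ∏ j ∈ range (n*(m+1)), ((n:ℝ) * (1-a) + 1 + (j:ℝ)) :=
    Finset.prod_pos fun j _ => by
      have := Nat.cast_nonneg (α := ℝ) j; nlinarith
  have hQh : 0 < ∏ j ∈ range (n*(m+1)), ((n:ℝ)/2 + 1 + (j:ℝ)) :=
    Finset.prod_pos fun j _ => by positivity
  have key := prodineq n hn a ha ha1 (m+1)
  rw [Finset.prod_mul_distrib, Finset.prod_mul_distrib, Finset.prod_pow, mul_pow] at key
  simp only [Real.GammaSeq, hNM]
  rw [div_pow, div_pow, div_pow, div_pow, div_mul_div_comm, div_mul_div_comm,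
    div_mul_div_comm, div_mul_div_comm,
    div_le_div_iff₀ (by positivity) (by positivity)]
  rw [aux_eq n a _ _ _ _ hx hy']
  rw [← mul_assoc] at key
  exact mul_le_mul_of_nonneg_left key (by positivity)


lemma gammaIneq (n : ℕ) (hn : 1 ≤ n) (a : ℝ) (ha : 0 < a) (ha1 : a < 1) :
    Real.Gamma (a+1) ^ n * Real.Gamma ((1-a)+1) ^ n * Real.Gamma ((n:ℝ)/2+1) ^ 2 ≤
    Real.Gamma ((1:ℝ)/2+1) ^ (2*n) * Real.Gamma ((n:ℝ)*a+1) * Real.Gamma ((n:ℝ)*(1-a)+1) := by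
  have hT : Tendsto (fun m : ℕ => n*(m+1)-1) atTop atTop := by
    apply tendsto_atTop_mono (f := fun m : ℕ => m) (fun m => ?_) tendsto_id
    have h := Nat.le_mul_of_pos_left (m+1) hn
    omega
  have hL : Tendsto (fun m : ℕ => Real.GammaSeq (a+1) m ^ n * Real.GammaSeq ((1-a)+1) m ^ n *
      Real.GammaSeq ((n:ℝ)/2+1) (n*(m+1)-1) ^ 2) atTop
      (nhds (Real.Gamma (a+1) ^ n * Real.Gamma ((1-a)+1) ^ n * Real.Gamma ((n:ℝ)/2+1) ^ 2)) :=
    (((Real.GammaSeq_tendsto_Gamma (a+1)).pow n).mul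
      ((Real.GammaSeq_tendsto_Gamma ((1-a)+1)).pow n)).mul
      (((Real.GammaSeq_tendsto_Gamma ((n:ℝ)/2+1)).comp hT).pow 2)
  have hR : Tendsto (fun m : ℕ => Real.GammaSeq ((1:ℝ)/2+1) m ^ (2*n) *
      Real.GammaSeq ((n:ℝ)*a+1) (n*(m+1)-1) * Real.GammaSeq ((n:ℝ)*(1-a)+1) (n*(m+1)-1)) atTop
      (nhds (Real.Gamma ((1:ℝ)/2+1) ^ (2*n) * Real.Gamma ((n:ℝ)*a+1) *
        Real.Gamma ((n:ℝ)*(1-a)+1))) :=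
    (((Real.GammaSeq_tendsto_Gamma ((1:ℝ)/2+1)).pow (2*n)).mul
      ((Real.GammaSeq_tendsto_Gamma ((n:ℝ)*a+1)).comp hT)).mul
      ((Real.GammaSeq_tendsto_Gamma ((n:ℝ)*(1-a)+1)).comp hT)
  exact le_of_tendsto_of_tendsto hL hR
    (eventually_atTop.2 ⟨1, fun m hm => gammaSeqIneq n hn a ha ha1 m hm⟩)


lemma volEq (n : ℕ) (hn : 1 ≤ n) (r : ℝ) (hr : 1 ≤ r) :
    volume {x : EuclideanSpace ℝ (Fin n) | ∑ i, |x i| ^ r ≤ 1} =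
      ENNReal.ofReal ((2 * Gamma (1/r + 1)) ^ n / Gamma (n/r + 1)) := by
  have hr0 : 0 < r := by linarith
  have hset : {x : Fin n → ℝ | ∑ i, |x i| ^ r ≤ 1} =
      {x : Fin n → ℝ | (∑ i, |x i| ^ r) ^ (1/r) ≤ (1:ℝ)} := by
    ext x
    have hs : 0 ≤ ∑ i, |x i| ^ r := Finset.sum_nonneg fun i _ => rpow_nonneg (abs_nonneg _) _
    simp only [Set.mem_setOf_eq]
    constructor
    · intro h
      calc (∑ i, |x i| ^ r) ^ (1/r) ≤ 1 ^ (1/r) := by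
            exact rpow_le_rpow hs h (by positivity)
        _ = 1 := one_rpow _
    · intro h
      by_contra hc
      push_neg at hc
      have h2 := (one_lt_rpow_iff_of_pos (by linarith : (0:ℝ) < ∑ i, |x i| ^ r)
        (y := 1/r)).2 (Or.inl ⟨hc, by positivity⟩)
      linarith
  have hcont : Continuous fun x : Fin n → ℝ => (∑ i, |x i| ^ r) ^ (1/r) := by
    refine Continuous.rpow_const ?_ (fun x => Or.inr (by positivity))
    exact continuous_finset_sum _ fun i _ =>
      ((continuous_apply i).abs).rpow_const (fun x => Or.inr hr0.le)
  have hmeas : MeasurableSet {x : Fin n → ℝ | (∑ i, |x i| ^ r) ^ (1/r) ≤ (1:ℝ)} :=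
    (isClosed_le hcont continuous_const).measurableSet
  have : Nonempty (Fin n) := Fin.pos_iff_nonempty.1 hn
  have key := MeasureTheory.volume_sum_rpow_le (ι := Fin n) hr 1
  rw [Fintype.card_fin] at key
  calc volume {x : EuclideanSpace ℝ (Fin n) | ∑ i, |x i| ^ r ≤ 1}
      = volume ((MeasurableEquiv.toLp 2 (Fin n → ℝ)).symm ⁻¹'
          {x : Fin n → ℝ | (∑ i, |x i| ^ r) ^ (1/r) ≤ (1:ℝ)}) := by rw [← hset]; rfl
    _ = volume {x : Fin n → ℝ | (∑ i, |x i| ^ r) ^ (1/r) ≤ (1:ℝ)} :=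
        (EuclideanSpace.volume_preserving_symm_measurableEquiv_toLp (Fin n)).measure_preimage
          hmeas.nullMeasurableSet
    _ = ENNReal.ofReal ((2 * Gamma (1/r + 1)) ^ n / Gamma (n/r + 1)) := by
        rw [key, ENNReal.ofReal_one, one_pow, one_mul]


/-- Blaschke–Santaló for `p`-balls: `vol(B_pⁿ) · vol(B_qⁿ) ≤ vol(B_2ⁿ)²` for
conjugate exponents `p, q`. -/
theorem stmt9 (n : ℕ) (hn : 1 ≤ n) (p q : ℝ) (hp : 1 < p) (hpq : 1 / p + 1 / q = 1) :
    volume {x : EuclideanSpace ℝ (Fin n) | ∑ i, |x i| ^ p ≤ 1} *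
        volume {y : EuclideanSpace ℝ (Fin n) | ∑ i, |y i| ^ q ≤ 1} ≤
      (volume {x : EuclideanSpace ℝ (Fin n) | ∑ i, |x i| ^ (2 : ℝ) ≤ 1}) ^ 2 := by
  have hp0 : 0 < p := by linarith
  have ha : 0 < 1/p := by positivity
  have ha1 : 1/p < 1 := by rw [div_lt_one hp0]; exact hp
  have hb : 1/q = 1 - 1/p := by linarith
  have hbpos : 0 < 1/q := by rw [hb]; linarith
  have hq0 : 0 < q := by
    rcases lt_trichotomy q 0 with h | h | h
    · exfalso; have : 1/q < 0 := div_neg_of_pos_of_neg one_pos h; linarith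
    · exfalso; rw [h] at hbpos; simp at hbpos
    · exact h
  have hq1 : 1 ≤ q := (div_le_one hq0).1 (by linarith)
  have hn' : (1:ℝ) ≤ n := by exact_mod_cast hn
  have g1 : 0 < Real.Gamma (1/p+1) := Real.Gamma_pos_of_pos (by linarith)
  have g2 : 0 < Real.Gamma (1/q+1) := Real.Gamma_pos_of_pos (by linarith)
  have g3 : 0 < Real.Gamma (1/2+1) := Real.Gamma_pos_of_pos (by norm_num)
  have g4 : 0 < Real.Gamma ((n:ℝ)/p+1) := Real.Gamma_pos_of_pos (by positivity)
  have g5 : 0 < Real.Gamma ((n:ℝ)/q+1) := Real.Gamma_pos_of_pos (by positivity)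
  have g6 : 0 < Real.Gamma ((n:ℝ)/2+1) := Real.Gamma_pos_of_pos (by positivity)
  rw [volEq n hn p hp.le, volEq n hn q hq1, volEq n hn 2 one_le_two,
    ← ENNReal.ofReal_mul (by positivity), ← ENNReal.ofReal_pow (by positivity)]
  refine ENNReal.ofReal_le_ofReal ?_
  have G := gammaIneq n hn (1/p) ha ha1
  have e1 : (n:ℝ)/p = n * (1/p) := by ring
  have e2 : (n:ℝ)/q = n * (1 - 1/p) := by rw [show (n:ℝ)/q = n*(1/q) by ring, hb]
  rw [hb] at g2 ⊢
  rw [e1] at g4 ⊢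
  rw [e2] at g5 ⊢
  rw [div_mul_div_comm, div_pow,
    div_le_div_iff₀ (mul_pos g4 g5) (pow_pos g6 2)]
  refine le_trans (le_of_eq ?_)
    (le_trans (mul_le_mul_of_nonneg_left G (show (0:ℝ) ≤ 2^(2*n) by positivity))
      (le_of_eq ?_)) <;> ring
end

section
/- For every integer m ≥ 1, ∏_{k=1}^{∞} [(2k+1)^{2m−2}·(2k+2m)] / (2k+2)^{2m−1} = (4/π)^{m−1} / m!. -/
open Real Filter Finset Topology

/-- If `0 < f k ≤ 1` for all `k` and the partial products over `range n` tend to `L`,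
then `HasProd f L`. -/
lemma my_hasProd_of_le_one {f : ℕ → ℝ} (hpos : ∀ k, 0 < f k) (hle : ∀ k, f k ≤ 1)
    {L : ℝ} (hL : Tendsto (fun n => ∏ k ∈ Finset.range n, f k) atTop (𝓝 L)) :
    HasProd f L := by
  have hsub : ∀ s t : Finset ℕ, s ⊆ t → ∏ k ∈ t, f k ≤ ∏ k ∈ s, f k := by
    intro s t hst
    rw [← Finset.prod_sdiff hst]
    have h1 : ∏ k ∈ t \ s, f k ≤ 1 :=
      Finset.prod_le_one (fun i _ => (hpos i).le) (fun i _ => hle i)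
    have h2 : 0 ≤ ∏ k ∈ s, f k := Finset.prod_nonneg fun i _ => (hpos i).le
    nlinarith [h1, h2]
  have hanti : Antitone (fun n => ∏ k ∈ Finset.range n, f k) := by
    intro a b hab
    exact hsub _ _ (Finset.range_subset_range.2 hab)
  have hLlb : ∀ n, L ≤ ∏ k ∈ Finset.range n, f k := fun n =>
    le_of_tendsto hL (Filter.eventually_atTop.2 ⟨n, fun m hm => hanti hm⟩)
  have hlb : ∀ s : Finset ℕ, L ≤ ∏ k ∈ s, f k := by
    intro s
    obtain ⟨n, hn⟩ := s.exists_nat_subset_range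
    exact (hLlb n).trans (hsub _ _ hn)
  rw [HasProd, tendsto_order]
  constructor
  · intro a ha
    exact Filter.Eventually.of_forall fun s => lt_of_lt_of_le ha (hlb s)
  · intro b hb
    obtain ⟨n, hn⟩ := (Filter.eventually_atTop.1 (hL.eventually (eventually_lt_nhds hb))).imp
      (fun n h => h n le_rfl)
    filter_upwards [Filter.eventually_ge_atTop (Finset.range n)] with s hs
    exact lt_of_le_of_lt (hsub _ _ hs) hn

/-- Telescoping product. -/
lemma my_tele (m : ℕ) (n : ℕ) :
    ∏ k ∈ Finset.range n, ((2 * (k : ℝ) + 3) * (2 * k + 2 * m + 4)) /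
        ((2 * k + 5) * (2 * k + 2 * m + 2)) =
      3 * ((n : ℝ) + m + 1) / ((2 * n + 3) * (m + 1)) := by
  have hm0 : ((m : ℝ) + 1) ≠ 0 := by positivity
  induction n with
  | zero => simp only [Finset.prod_range_zero, Nat.cast_zero]; field_simp; ring
  | succ n ih =>
      rw [Finset.prod_range_succ, ih]
      have h1 : (2 * (n : ℝ) + 3) ≠ 0 := by positivity
      have h2 : (2 * (n : ℝ) + 5) ≠ 0 := by positivity
      have h3 : (2 * (n : ℝ) + 2 * m + 2) ≠ 0 := by positivity
      have h4 : ((m : ℝ) + 1) ≠ 0 := by positivity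
      push_cast
      field_simp
      ring

lemma my_tele_tendsto (m : ℕ) :
    Tendsto (fun n : ℕ => 3 * ((n : ℝ) + m + 1) / ((2 * n + 3) * (m + 1))) atTop
      (𝓝 (3 / (2 * ((m : ℝ) + 1)))) := by
  have h1 : Tendsto (fun n : ℕ => (3 + (3 * ((m : ℝ) + 1)) / n) / ((2 + 3 / n) * (m + 1)))
      atTop (𝓝 ((3 + 0) / ((2 + 0) * (m + 1)))) := by
    refine Tendsto.div (tendsto_const_nhds.add (tendsto_const_div_atTop_nhds_zero_nat _))
      ((tendsto_const_nhds.add (tendsto_const_div_atTop_nhds_zero_nat 3)).mul_const _) ?_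
    positivity
  have h2 : ((3 : ℝ) + 0) / ((2 + 0) * (m + 1)) = 3 / (2 * ((m : ℝ) + 1)) := by norm_num
  rw [h2] at h1
  refine h1.congr' ?_
  filter_upwards [Filter.eventually_gt_atTop 0] with n hn
  have hn' : (n : ℝ) ≠ 0 := Nat.cast_ne_zero.2 hn.ne'
  have h3 : (2 * (n : ℝ) + 3) ≠ 0 := by positivity
  have h4 : ((m : ℝ) + 1) ≠ 0 := by positivity
  field_simp
  ring

/-- Shifted reciprocal Wallis product. -/
lemma my_wallis :
    Tendsto (fun n : ℕ => ∏ k ∈ Finset.range n,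
        ((2 * (k : ℝ) + 3) * (2 * k + 5)) / ((2 * k + 4) ^ 2)) atTop (𝓝 (8 / (3 * π))) := by
  have hW := Real.tendsto_prod_pi_div_two
  have hπ : (π / 2 : ℝ) ≠ 0 := by positivity
  have hU : Tendsto (fun n : ℕ => ∏ k ∈ Finset.range n,
      ((2 * (k : ℝ) + 1) * (2 * k + 3)) / ((2 * k + 2) ^ 2)) atTop (𝓝 (2 / π)) := by
    have h := hW.inv₀ hπ
    have heq : ∀ n : ℕ, (∏ i ∈ Finset.range n,
        ((2 : ℝ) * i + 2) / (2 * i + 1) * ((2 * i + 2) / (2 * i + 3)))⁻¹ =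
        ∏ k ∈ Finset.range n, ((2 * (k : ℝ) + 1) * (2 * k + 3)) / ((2 * k + 2) ^ 2) := by
      intro n
      rw [← Finset.prod_inv_distrib]
      refine Finset.prod_congr rfl fun k _ => ?_
      have h1 : (2 * (k : ℝ) + 1) ≠ 0 := by positivity
      have h2 : (2 * (k : ℝ) + 2) ≠ 0 := by positivity
      have h3 : (2 * (k : ℝ) + 3) ≠ 0 := by positivity
      field_simp
    have h2 : (π / 2 : ℝ)⁻¹ = 2 / π := by
      rw [inv_div]
    rw [h2] at h
    exact h.congr heq
  have hU1 : Tendsto (fun n : ℕ => ∏ k ∈ Finset.range (n + 1),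
      ((2 * (k : ℝ) + 1) * (2 * k + 3)) / ((2 * k + 2) ^ 2)) atTop (𝓝 (2 / π)) :=
    hU.comp (tendsto_add_atTop_nat 1)
  have heq2 : ∀ n : ℕ, (∏ k ∈ Finset.range (n + 1),
      ((2 * (k : ℝ) + 1) * (2 * k + 3)) / ((2 * k + 2) ^ 2)) * (4 / 3) =
      ∏ k ∈ Finset.range n, ((2 * (k : ℝ) + 3) * (2 * k + 5)) / ((2 * k + 4) ^ 2) := by
    intro n
    rw [Finset.prod_range_succ']
    push_cast
    have : ∀ k ∈ Finset.range n,
        ((2 * ((k : ℝ) + 1) + 1) * (2 * ((k : ℝ) + 1) + 3)) / ((2 * ((k : ℝ) + 1) + 2) ^ 2) =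
        ((2 * (k : ℝ) + 3) * (2 * k + 5)) / ((2 * k + 4) ^ 2) := by
      intro k _
      ring_nf
    rw [Finset.prod_congr rfl this, mul_assoc]
    norm_num
  have := hU1.mul_const (4 / 3 : ℝ)
  rw [show (2 / π) * (4 / 3 : ℝ) = 8 / (3 * π) by ring] at this
  exact this.congr heq2

/-- Limit of the ratio product. -/
lemma my_g_tendsto (m : ℕ) :
    Tendsto (fun n : ℕ => ∏ k ∈ Finset.range n,
        ((2 * (k : ℝ) + 3) ^ 2 * (2 * k + 2 * m + 4)) /
          ((2 * k + 4) ^ 2 * (2 * k + 2 * m + 2))) atTop (𝓝 (4 / (π * (m + 1)))) := by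
  have heq : ∀ n : ℕ, ∏ k ∈ Finset.range n,
      ((2 * (k : ℝ) + 3) ^ 2 * (2 * k + 2 * m + 4)) /
        ((2 * k + 4) ^ 2 * (2 * k + 2 * m + 2)) =
      (∏ k ∈ Finset.range n, ((2 * (k : ℝ) + 3) * (2 * k + 5)) / ((2 * k + 4) ^ 2)) *
      ∏ k ∈ Finset.range n, ((2 * (k : ℝ) + 3) * (2 * k + 2 * m + 4)) /
        ((2 * k + 5) * (2 * k + 2 * m + 2)) := by
    intro n
    rw [← Finset.prod_mul_distrib]
    refine Finset.prod_congr rfl fun k _ => ?_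
    have h1 : (2 * (k : ℝ) + 4) ≠ 0 := by positivity
    have h2 : (2 * (k : ℝ) + 5) ≠ 0 := by positivity
    have h3 : (2 * (k : ℝ) + 2 * m + 2) ≠ 0 := by positivity
    field_simp
  have h1 : Tendsto (fun n : ℕ =>
      (∏ k ∈ Finset.range n, ((2 * (k : ℝ) + 3) * (2 * k + 5)) / ((2 * k + 4) ^ 2)) *
      ∏ k ∈ Finset.range n, ((2 * (k : ℝ) + 3) * (2 * k + 2 * m + 4)) /
        ((2 * k + 5) * (2 * k + 2 * m + 2))) atTop
      (𝓝 ((8 / (3 * π)) * (3 / (2 * ((m : ℝ) + 1))))) := by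
    refine my_wallis.mul ?_
    have := my_tele_tendsto m
    refine this.congr fun n => ?_
    exact (my_tele m n).symm
  have hπ : (π : ℝ) ≠ 0 := Real.pi_ne_zero
  have hval : (8 / (3 * π)) * (3 / (2 * ((m : ℝ) + 1))) = 4 / (π * (m + 1)) := by
    have h4 : ((m : ℝ) + 1) ≠ 0 := by positivity
    field_simp
    ring
  rw [hval] at h1
  exact h1.congr fun n => (heq n).symm

noncomputable def myF (m k : ℕ) : ℝ :=
  (2 * ((k : ℝ) + 1) + 1) ^ (2 * m - 2) * (2 * ((k : ℝ) + 1) + 2 * (m : ℝ)) /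
    (2 * ((k : ℝ) + 1) + 2) ^ (2 * m - 1)

lemma myF_pos (m k : ℕ) : 0 < myF m k := by
  unfold myF
  have h : (0:ℝ) ≤ (k:ℝ) := Nat.cast_nonneg k
  have h2 : (0:ℝ) ≤ (m:ℝ) := Nat.cast_nonneg m
  positivity

lemma myF_one (k : ℕ) : myF 1 k = 1 := by
  have h : (2 * ((k:ℝ) + 1) + 2) ≠ 0 := by positivity
  unfold myF
  norm_num [div_self h]

lemma myF_succ (e k : ℕ) : myF (e + 1 + 1) k =
    myF (e + 1) k * ((2 * (k : ℝ) + 3) ^ 2 * (2 * (k : ℝ) + 2 * ((e : ℝ) + 1) + 4) /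
      ((2 * (k : ℝ) + 4) ^ 2 * (2 * (k : ℝ) + 2 * ((e : ℝ) + 1) + 2))) := by
  unfold myF
  have h1 : 2 * (e + 1 + 1) - 2 = 2 * e + 2 := by omega
  have h2 : 2 * (e + 1 + 1) - 1 = 2 * e + 3 := by omega
  have h3 : 2 * (e + 1) - 2 = 2 * e := by omega
  have h4 : 2 * (e + 1) - 1 = 2 * e + 1 := by omega
  rw [h1, h2, h3, h4]
  have hy : (2 * ((k : ℝ) + 1) + 2) ≠ 0 := by positivity
  have ha : (2 * (k : ℝ) + 2 * ((e : ℝ) + 1) + 2) ≠ 0 := by positivity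
  have hb : (2 * (k : ℝ) + 4) ≠ 0 := by positivity
  push_cast
  field_simp
  ring

lemma myF_main (m : ℕ) (hm : 1 ≤ m) : (∀ k, myF m k ≤ 1) ∧
    Tendsto (fun n => ∏ k ∈ Finset.range n, myF m k) atTop
      (𝓝 ((4 / π) ^ (m - 1) / (m.factorial : ℝ))) := by
  induction m, hm using Nat.le_induction with
  | base =>
      constructor
      · intro k; rw [myF_one]
      · simp only [myF_one, Finset.prod_const_one]
        norm_num
  | succ m hm ih =>
      obtain ⟨e, rfl⟩ : ∃ e, m = e + 1 := ⟨m - 1, by omega⟩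
      obtain ⟨ihle, ihtend⟩ := ih
      have hgpos : ∀ k : ℕ, 0 < (2 * (k : ℝ) + 3) ^ 2 * (2 * (k : ℝ) + 2 * ((e : ℝ) + 1) + 4) /
          ((2 * (k : ℝ) + 4) ^ 2 * (2 * (k : ℝ) + 2 * ((e : ℝ) + 1) + 2)) := by
        intro k
        have h : (0:ℝ) ≤ (k:ℝ) := Nat.cast_nonneg k
        have h2 : (0:ℝ) ≤ (e:ℝ) := Nat.cast_nonneg e
        positivity
      have hgle : ∀ k : ℕ, (2 * (k : ℝ) + 3) ^ 2 * (2 * (k : ℝ) + 2 * ((e : ℝ) + 1) + 4) /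
          ((2 * (k : ℝ) + 4) ^ 2 * (2 * (k : ℝ) + 2 * ((e : ℝ) + 1) + 2)) ≤ 1 := by
        intro k
        have h : (0:ℝ) ≤ (k:ℝ) := Nat.cast_nonneg k
        have h2 : (0:ℝ) ≤ (e:ℝ) := Nat.cast_nonneg e
        rw [div_le_one (by positivity)]
        nlinarith [h, h2, sq_nonneg ((k:ℝ) + e)]
      constructor
      · intro k
        rw [myF_succ]
        exact mul_le_one₀ (ihle k) (hgpos k).le (hgle k)
      · have hg := my_g_tendsto (e + 1)
        push_cast at hg
        have htend := ihtend.mul hg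
        have heq : ∀ n : ℕ, (∏ k ∈ Finset.range n, myF (e + 1) k) *
            ∏ k ∈ Finset.range n, (2 * (k : ℝ) + 3) ^ 2 * (2 * (k : ℝ) + 2 * ((e : ℝ) + 1) + 4) /
              ((2 * (k : ℝ) + 4) ^ 2 * (2 * (k : ℝ) + 2 * ((e : ℝ) + 1) + 2)) =
            ∏ k ∈ Finset.range n, myF (e + 1 + 1) k := by
          intro n
          rw [← Finset.prod_mul_distrib]
          exact Finset.prod_congr rfl fun k _ => (myF_succ e k).symm
        have hval : (4 / π) ^ (e + 1 - 1) / ((e + 1).factorial : ℝ) *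
            (4 / (π * ((e : ℝ) + 1 + 1))) =
            (4 / π) ^ (e + 1 + 1 - 1) / (((e + 1 + 1).factorial : ℝ)) := by
          have hπ : (π : ℝ) ≠ 0 := Real.pi_ne_zero
          have hf : ((e + 1).factorial : ℝ) ≠ 0 := Nat.cast_ne_zero.2 (e + 1).factorial_ne_zero
          have h1 : e + 1 - 1 = e := by omega
          have h2 : e + 1 + 1 - 1 = e + 1 := by omega
          rw [h1, h2, Nat.factorial_succ (e + 1), pow_succ]
          push_cast
          field_simp
        rw [hval] at htend
        exact htend.congr heq

/-- Corollary III.1: for `m ≥ 1`,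
`∏_{k=1}^∞ (2k+1)^(2m-2)(2k+2m)/(2k+2)^(2m-1) = (4/π)^(m-1)/m!`. -/
theorem stmt14 (m : ℕ) (hm : 1 ≤ m) :
    ∏' k : ℕ,
        (2 * ((k : ℝ) + 1) + 1) ^ (2 * m - 2) * (2 * ((k : ℝ) + 1) + 2 * (m : ℝ)) /
          (2 * ((k : ℝ) + 1) + 2) ^ (2 * m - 1) =
      (4 / π) ^ (m - 1) / (m.factorial : ℝ) := by
  obtain ⟨hle, htend⟩ := myF_main m hm
  exact (my_hasProd_of_le_one (myF_pos m) hle htend).tprod_eq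
end

section
/- For every integer n ≥ 2, one has 1/n! < e^{−σ_n}, where σ_n = ∑_{m=2}^{n} C(n,m) · ∑_{k=1}^{∞} k^{n−m}/(k+1)^n, C(n,m) denotes the binomial coefficient, and each inner series (hence σ_n) converges. -/
open Finset Filter Topology

private lemma binom_sum (n : ℕ) (hn : 2 ≤ n) (x : ℝ) :
    ∑ m ∈ Finset.Icc 2 n, (n.choose m : ℝ) * x ^ (n - m)
      = (x + 1) ^ n - x ^ n - n * x ^ (n - 1) := by
  have h : (1 + x) ^ n = ∑ m ∈ Finset.range (n + 1), x ^ (n - m) * (n.choose m : ℝ) := by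
    rw [add_pow]; simp
  have hr : Finset.range (n + 1) = insert 0 (insert 1 (Finset.Icc 2 n)) := by
    ext m; simp [Finset.mem_Icc, Finset.mem_range]; omega
  rw [hr, Finset.sum_insert (by simp), Finset.sum_insert (by simp [Finset.mem_Icc])] at h
  have h1 : ∑ m ∈ Finset.Icc 2 n, x ^ (n - m) * (n.choose m : ℝ)
      = ∑ m ∈ Finset.Icc 2 n, (n.choose m : ℝ) * x ^ (n - m) := by
    apply Finset.sum_congr rfl; intros; ring
  rw [h1, add_comm (1:ℝ) x] at h
  simp at h
  linarith [h]

private lemma summable_a (n m : ℕ) (hm : 2 ≤ m) (hmn : m ≤ n) :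
    Summable (fun k : ℕ => ((k : ℝ) + 1) ^ (n - m) / (((k : ℝ) + 1) + 1) ^ n) := by
  have hs : Summable (fun k : ℕ => 1 / ((k : ℝ) + 1) ^ 2) := by
    have h0 : Summable (fun k : ℕ => 1 / (k : ℝ) ^ 2) :=
      Real.summable_one_div_nat_pow.mpr one_lt_two
    have := (summable_nat_add_iff 1).mpr h0
    refine this.congr fun k => ?_
    push_cast
    ring
  refine Summable.of_nonneg_of_le (fun k => by positivity) (fun k => ?_) hs
  have hk1 : (0 : ℝ) < (k : ℝ) + 1 := by positivity
  have hk2 : (0 : ℝ) < (k : ℝ) + 1 + 1 := by positivity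
  have h1 : ((k : ℝ) + 1) ^ (n - m) / (((k : ℝ) + 1) + 1) ^ n
      ≤ ((k : ℝ) + 1 + 1) ^ (n - m) / (((k : ℝ) + 1) + 1) ^ n := by
    gcongr
    linarith
  have h2 : ((k : ℝ) + 1 + 1) ^ (n - m) / (((k : ℝ) + 1) + 1) ^ n
      = 1 / ((k : ℝ) + 1 + 1) ^ m := by
    rw [div_eq_div_iff (by positivity) (by positivity), one_mul, ← pow_add,
      Nat.sub_add_cancel hmn]
  have h3 : (1 : ℝ) / ((k : ℝ) + 1 + 1) ^ m ≤ 1 / ((k : ℝ) + 1) ^ 2 := by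
    apply one_div_le_one_div_of_le (by positivity)
    calc ((k : ℝ) + 1) ^ 2 ≤ ((k : ℝ) + 1 + 1) ^ 2 := by gcongr <;> linarith
      _ ≤ ((k : ℝ) + 1 + 1) ^ m := by
          apply pow_le_pow_right₀ (by linarith) hm
  linarith

private lemma key_ineq (n : ℕ) (hn : 2 ≤ n) (x : ℝ) (hx : 1 ≤ x) :
    x ^ (n - 1) * (x + n) < (x + 1) ^ n := by
  have h := binom_sum n hn x
  have hx0 : (0 : ℝ) < x := by linarith
  have hpos : 0 < ∑ m ∈ Finset.Icc 2 n, (n.choose m : ℝ) * x ^ (n - m) := by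
    apply Finset.sum_pos
    · intro m hm
      rw [Finset.mem_Icc] at hm
      have : 0 < n.choose m := Nat.choose_pos hm.2
      positivity
    · exact ⟨2, by simp [Finset.mem_Icc, hn]⟩
  have hx2 : x ^ (n - 1) * x = x ^ n := by
    rw [← pow_succ, Nat.sub_add_cancel (by omega)]
  nlinarith [hpos, hx2, h]

private lemma log_prod_fact (n : ℕ) :
    ∑ i ∈ Finset.range n, Real.log ((i : ℝ) + 1) = Real.log (n.factorial : ℝ) := by
  induction n with
  | zero => simp
  | succ n ih =>
      rw [Finset.sum_range_succ, ih,
        show ((n + 1).factorial : ℝ) = (n.factorial : ℝ) * ((n : ℝ) + 1) by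
          rw [Nat.factorial_succ]; push_cast; ring,
        Real.log_mul (by exact_mod_cast n.factorial_pos.ne') (by positivity)]

private lemma hasSum_logf (n : ℕ) (hn : 2 ≤ n) :
    HasSum (fun k : ℕ => (n : ℝ) * (Real.log ((k : ℝ) + 2) - Real.log ((k : ℝ) + 1))
      - (Real.log ((k : ℝ) + 1 + n) - Real.log ((k : ℝ) + 1))) (Real.log (n.factorial : ℝ)) := by
  set f : ℕ → ℝ := fun k => (n : ℝ) * (Real.log ((k : ℝ) + 2) - Real.log ((k : ℝ) + 1))
      - (Real.log ((k : ℝ) + 1 + n) - Real.log ((k : ℝ) + 1)) with hf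
  have hnonneg : ∀ k, 0 ≤ f k := by
    intro k
    have hx : (1 : ℝ) ≤ (k : ℝ) + 1 := by
      have := Nat.cast_nonneg (α := ℝ) k
      linarith
    have hx0 : (0 : ℝ) < (k : ℝ) + 1 := by positivity
    have hkey := (key_ineq n hn ((k : ℝ) + 1) hx).le
    have hlog : Real.log (((k : ℝ) + 1) ^ (n - 1) * (((k : ℝ) + 1) + n))
        ≤ Real.log ((((k : ℝ) + 1) + 1) ^ n) := Real.log_le_log (by positivity) hkey
    rw [Real.log_mul (by positivity) (by positivity), Real.log_pow, Real.log_pow] at hlog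
    have hc : ((n - 1 : ℕ) : ℝ) = (n : ℝ) - 1 := by
      have : 1 ≤ n := by omega
      push_cast [this]
      ring
    rw [hc] at hlog
    simp only [hf]
    have e1 : (k : ℝ) + 1 + 1 = (k : ℝ) + 2 := by ring
    rw [e1] at hlog
    nlinarith [hlog]
  rw [hasSum_iff_tendsto_nat_of_nonneg hnonneg]
  have hpart : ∀ K : ℕ, ∑ k ∈ Finset.range K, f k = Real.log (n.factorial : ℝ)
      - ∑ i ∈ Finset.range n, (Real.log ((K : ℝ) + (i : ℝ) + 1) - Real.log ((K : ℝ) + 1)) := by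
    intro K
    have e1 : ∑ k ∈ Finset.range K, ((n : ℝ) * (Real.log ((k : ℝ) + 2) - Real.log ((k : ℝ) + 1)))
        = (n : ℝ) * (Real.log ((K : ℝ) + 1) - Real.log 1) := by
      rw [← Finset.mul_sum]
      congr 1
      have h := Finset.sum_range_sub (fun k : ℕ => Real.log ((k : ℝ) + 1)) K
      push_cast at h
      rw [Real.log_one, sub_zero]
      rw [show Real.log ((K : ℝ) + 1) = Real.log ((K : ℝ) + 1) - Real.log ((0 : ℝ) + 1) by
        norm_num, ← h]
      apply Finset.sum_congr rfl
      intro k _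
      ring_nf
    have e2 : ∑ k ∈ Finset.range K, (Real.log ((k : ℝ) + 1 + n) - Real.log ((k : ℝ) + 1))
        = ∑ i ∈ Finset.range n, (Real.log ((K : ℝ) + (i : ℝ) + 1) - Real.log ((i : ℝ) + 1)) := by
      rw [Finset.sum_sub_distrib, Finset.sum_sub_distrib]
      have t1 : ∑ k ∈ Finset.range K, Real.log ((k : ℝ) + 1 + n)
          = ∑ k ∈ Finset.range (n + K), Real.log ((k : ℝ) + 1)
            - ∑ k ∈ Finset.range n, Real.log ((k : ℝ) + 1) := by
        rw [Finset.sum_range_add (fun k : ℕ => Real.log ((k : ℝ) + 1)) n K]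
        have : ∀ k ∈ Finset.range K, Real.log (((n + k : ℕ) : ℝ) + 1)
            = Real.log ((k : ℝ) + 1 + n) := by
          intro k _
          push_cast
          ring_nf
        rw [Finset.sum_congr rfl this]
        ring
      have t2 : ∑ k ∈ Finset.range (n + K), Real.log ((k : ℝ) + 1)
          = ∑ k ∈ Finset.range K, Real.log ((k : ℝ) + 1)
            + ∑ i ∈ Finset.range n, Real.log ((K : ℝ) + (i : ℝ) + 1) := by
        rw [add_comm n K, Finset.sum_range_add (fun k : ℕ => Real.log ((k : ℝ) + 1)) K n]
        congr 1
        apply Finset.sum_congr rfl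
        intro i _
        push_cast
        ring_nf
      rw [t1, t2, log_prod_fact]
      have t3 : ∑ k ∈ Finset.range n, Real.log ((k : ℝ) + 1)
          = Real.log (n.factorial : ℝ) := log_prod_fact n
      rw [t3]
      ring
    simp only [hf]
    rw [Finset.sum_sub_distrib, e1, e2, Finset.sum_sub_distrib, Finset.sum_sub_distrib,
      log_prod_fact]
    simp [Real.log_one, Finset.mul_sum]
    ring
  simp only [hpart]
  have : Tendsto (fun K : ℕ => ∑ i ∈ Finset.range n,
      (Real.log ((K : ℝ) + (i : ℝ) + 1) - Real.log ((K : ℝ) + 1))) atTop (nhds 0) := by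
    have h0 : (0 : ℝ) = ∑ i ∈ Finset.range n, (0 : ℝ) := by simp
    rw [h0]
    apply tendsto_finset_sum
    intro i _
    have hquot : Tendsto (fun K : ℕ => ((K : ℝ) + (i : ℝ) + 1) / ((K : ℝ) + 1)) atTop (nhds 1) := by
      have : (fun K : ℕ => ((K : ℝ) + (i : ℝ) + 1) / ((K : ℝ) + 1))
          = fun K : ℕ => 1 + (i : ℝ) / ((K : ℝ) + 1) := by
        funext K
        field_simp
        ring
      rw [this]
      have h2 : Tendsto (fun K : ℕ => (i : ℝ) / ((K : ℝ) + 1)) atTop (nhds 0) := by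
        apply Tendsto.div_atTop tendsto_const_nhds
        exact tendsto_atTop_add_const_right _ _ tendsto_natCast_atTop_atTop
      simpa using (tendsto_const_nhds.add h2)
    have : ∀ K : ℕ, Real.log ((K : ℝ) + (i : ℝ) + 1) - Real.log ((K : ℝ) + 1)
        = Real.log (((K : ℝ) + (i : ℝ) + 1) / ((K : ℝ) + 1)) := by
      intro K
      rw [Real.log_div (by positivity) (by positivity)]
    simp only [this]
    have hcont := (Real.continuousAt_log (by norm_num : (1:ℝ) ≠ 0)).tendsto
    have := hcont.comp hquot
    simpa [Function.comp_def] using this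
  have h2 : Tendsto (fun _ : ℕ => Real.log (n.factorial : ℝ)) atTop
      (nhds (Real.log (n.factorial : ℝ))) := tendsto_const_nhds
  have h3 := h2.sub this
  rw [sub_zero] at h3
  exact h3

/-- Remark III.1: for `n ≥ 2`, each series `∑_{k=1}^∞ k^(n-m)/(k+1)ⁿ` (for
`2 ≤ m ≤ n`) converges, and with
`σ_n = ∑_{m=2}^n C(n,m) ∑_{k=1}^∞ k^(n-m)/(k+1)ⁿ` one has `1/n! < e^(-σ_n)`. -/
theorem stmt19 (n : ℕ) (hn : 2 ≤ n) :
    (∀ m ∈ Finset.Icc 2 n, Summable (fun k : ℕ =>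
      ((k : ℝ) + 1) ^ (n - m) / (((k : ℝ) + 1) + 1) ^ n)) ∧
    1 / (n.factorial : ℝ) <
      Real.exp (-(∑ m ∈ Finset.Icc 2 n, (n.choose m : ℝ) *
        ∑' k : ℕ, ((k : ℝ) + 1) ^ (n - m) / (((k : ℝ) + 1) + 1) ^ n)) := by
  have hsumm : ∀ m ∈ Finset.Icc 2 n, Summable (fun k : ℕ =>
      ((k : ℝ) + 1) ^ (n - m) / (((k : ℝ) + 1) + 1) ^ n) := by
    intro m hm
    rw [Finset.mem_Icc] at hm
    exact summable_a n m hm.1 hm.2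
  refine ⟨hsumm, ?_⟩
  set f : ℕ → ℝ := fun k => (n : ℝ) * (Real.log ((k : ℝ) + 2) - Real.log ((k : ℝ) + 1))
      - (Real.log ((k : ℝ) + 1 + n) - Real.log ((k : ℝ) + 1)) with hfdef
  have hF := hasSum_logf n hn
  set T : ℕ → ℝ := fun k => ∑ m ∈ Finset.Icc 2 n,
      (n.choose m : ℝ) * (((k : ℝ) + 1) ^ (n - m) / (((k : ℝ) + 1) + 1) ^ n) with hTdef
  have hTsummable : Summable T := by
    apply summable_sum
    intro m hm
    rw [Finset.mem_Icc] at hm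
    exact (summable_a n m hm.1 hm.2).mul_left _
  have hσ : (∑ m ∈ Finset.Icc 2 n, (n.choose m : ℝ) *
      ∑' k : ℕ, ((k : ℝ) + 1) ^ (n - m) / (((k : ℝ) + 1) + 1) ^ n) = ∑' k, T k := by
    have h1 : ∀ m ∈ Finset.Icc 2 n, (n.choose m : ℝ) *
        ∑' k : ℕ, ((k : ℝ) + 1) ^ (n - m) / (((k : ℝ) + 1) + 1) ^ n
        = ∑' k : ℕ, (n.choose m : ℝ) *
          (((k : ℝ) + 1) ^ (n - m) / (((k : ℝ) + 1) + 1) ^ n) := by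
      intro m _
      exact (tsum_mul_left).symm
    rw [Finset.sum_congr rfl h1]
    rw [← Summable.tsum_finsetSum (fun m hm => by
      rw [Finset.mem_Icc] at hm
      exact (summable_a n m hm.1 hm.2).mul_left _)]
  have hTnonneg : ∀ k, 0 ≤ T k := by
    intro k
    apply Finset.sum_nonneg
    intro m _
    positivity
  have hTlt : ∀ k, T k < f k := by
    intro k
    have hx1 : (1 : ℝ) ≤ (k : ℝ) + 1 := by
      have := Nat.cast_nonneg (α := ℝ) k
      linarith
    set x : ℝ := (k : ℝ) + 1 with hxdef
    have hx0 : (0 : ℝ) < x := by linarith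
    have hxp : (0 : ℝ) < (x + 1) ^ n := by positivity
    have hxn : (0 : ℝ) < x + n := by positivity
    have hpow : x ^ (n - 1) * x = x ^ n := by
      rw [← pow_succ, Nat.sub_add_cancel (by omega)]
    have hT : T k = 1 - x ^ (n - 1) * (x + n) / (x + 1) ^ n := by
      simp only [hTdef]
      have h2 : ∀ m ∈ Finset.Icc 2 n, (n.choose m : ℝ) * (x ^ (n - m) / (x + 1) ^ n)
          = ((n.choose m : ℝ) * x ^ (n - m)) / (x + 1) ^ n := fun m _ => by ring
      rw [Finset.sum_congr rfl h2, ← Finset.sum_div, binom_sum n hn x]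
      field_simp
      nlinarith [hpow]
    set t : ℝ := x ^ (n - 1) * (x + n) / (x + 1) ^ n with htdef
    have ht0 : 0 < t := by positivity
    have ht1 : t < 1 := by
      rw [htdef, div_lt_one hxp]
      exact key_ineq n hn x hx1
    have hlog : Real.log t < t - 1 := Real.log_lt_sub_one_of_pos ht0 (ne_of_lt ht1)
    have hlogt : Real.log t = ((n : ℝ) - 1) * Real.log x + Real.log (x + n)
        - (n : ℝ) * Real.log (x + 1) := by
      rw [htdef, Real.log_div (by positivity) (by positivity),
        Real.log_mul (by positivity) (by positivity), Real.log_pow, Real.log_pow]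
      have hc : ((n - 1 : ℕ) : ℝ) = (n : ℝ) - 1 := by
        have h1n : 1 ≤ n := by omega
        push_cast [h1n]
        ring
      rw [hc]
    have hfk : f k = -Real.log t := by
      simp only [hfdef, hlogt]
      have e1 : (k : ℝ) + 2 = x + 1 := by rw [hxdef]; ring
      have e2 : (k : ℝ) + 1 + (n : ℝ) = x + n := by rw [hxdef]
      rw [e1, e2, ← hxdef]
      ring
    rw [hT, hfk]
    linarith
  have hlt : ∑' k, T k < ∑' k, f k :=
    Summable.tsum_lt_tsum_of_nonneg hTnonneg (fun k => (hTlt k).le) (hTlt 0) hF.summable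
  have hfac0 : (0 : ℝ) < (n.factorial : ℝ) := by exact_mod_cast n.factorial_pos
  have hexp : (1 : ℝ) / (n.factorial : ℝ) = Real.exp (-(Real.log (n.factorial : ℝ))) := by
    rw [Real.exp_neg, Real.exp_log hfac0, one_div]
  rw [hσ, hexp, Real.exp_lt_exp, neg_lt_neg_iff]
  calc ∑' k, T k < ∑' k, f k := hlt
    _ = Real.log (n.factorial : ℝ) := hF.tsum_eq
end
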